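/- arXiv:2507.23646 — 16 statements merged into one kernel-verified Lean document; each statement's English description precedes it below -/
import Mathlib

section
/- For every fixed real number t > 0, the limit as α → -1 of (4/(1-α²))·((1-α)/2·t + (1+α)/2 - t^{(1-α)/2}) exists and equals t·log t - t + 1. (Here t^{(1-α)/2} denotes the real power rpow.) -/
open Real Filter Topology

/-- For fixed `t > 0`, the limit as `α → -1` of
`(4/(1-α²))·((1-α)/2·t + (1+α)/2 - t^{(1-α)/2})` equals `t·log t - t + 1`. -/
theorem alpha_div_generator_limit_neg_one (t : ℝ) (ht : 0 < t) :
    Tendsto (fun α : ℝ =>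
        (4 / (1 - α ^ 2)) * ((1 - α) / 2 * t + (1 + α) / 2 - t ^ ((1 - α) / 2)))
      (𝓝[≠] (-1 : ℝ)) (𝓝 (t * Real.log t - t + 1)) := by
  set F : ℝ → ℝ := fun α => (1 - α) / 2 * t + (1 + α) / 2 - t ^ ((1 - α) / 2) with hF
  have hF1 : F (-1) = 0 := by
    simp [hF]
  have hderiv : HasDerivAt F (-t / 2 + 1 / 2 + t * Real.log t / 2) (-1) := by
    have h1 : HasDerivAt (fun α : ℝ => (1 - α) / 2) (-(1 / 2)) (-1) := by
      have := ((hasDerivAt_id (-1 : ℝ)).const_sub 1).div_const 2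
      exact this.congr_deriv (by norm_num)
    have hinner : HasDerivAt (fun α : ℝ => Real.log t * ((1 - α) / 2))
        (Real.log t * (-(1 / 2))) (-1) := h1.const_mul _
    have h2 : HasDerivAt (fun α : ℝ => t ^ ((1 - α) / 2))
        (t ^ ((1 - (-1 : ℝ)) / 2) * Real.log t * (-(1 / 2))) (-1) := by
      have heq : (fun α : ℝ => t ^ ((1 - α) / 2)) =
          fun α => Real.exp (Real.log t * ((1 - α) / 2)) :=
        funext fun x => Real.rpow_def_of_pos ht _
      rw [heq]
      convert hinner.exp using 1
      rw [show Real.log t * ((1 - (-1 : ℝ)) / 2) = Real.log t by ring, Real.exp_log ht,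
        show ((1 : ℝ) - (-1)) / 2 = 1 by norm_num, Real.rpow_one]
      ring
    have h3 : HasDerivAt (fun α : ℝ => (1 - α) / 2 * t + (1 + α) / 2)
        (-(1 / 2) * t + 1 / 2) (-1) := by
      exact (h1.mul_const t).add (((hasDerivAt_id (-1 : ℝ)).const_add 1).div_const 2)
    have := h3.sub h2
    refine this.congr_deriv ?_
    have : ((1 : ℝ) - (-1)) / 2 = 1 := by norm_num
    rw [this, Real.rpow_one]
    ring
  have hslope : Tendsto (slope F (-1)) (𝓝[≠] (-1 : ℝ))
      (𝓝 (-t / 2 + 1 / 2 + t * Real.log t / 2)) :=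
    hasDerivAt_iff_tendsto_slope.mp hderiv
  have hcoef : Tendsto (fun α : ℝ => 4 / (1 - α)) (𝓝[≠] (-1 : ℝ)) (𝓝 2) := by
    have : Tendsto (fun α : ℝ => 4 / (1 - α)) (𝓝 (-1 : ℝ)) (𝓝 (4 / (1 - (-1)))) := by
      apply Tendsto.div tendsto_const_nhds (tendsto_const_nhds.sub tendsto_id)
      norm_num
    have h2 : (4 : ℝ) / (1 - (-1)) = 2 := by norm_num
    rw [h2] at this
    exact this.mono_left nhdsWithin_le_nhds
  have hmul := hcoef.mul hslope
  have heq : (2 : ℝ) * (-t / 2 + 1 / 2 + t * Real.log t / 2) = t * Real.log t - t + 1 := by ring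
  rw [heq] at hmul
  refine hmul.congr' ?_
  filter_upwards [self_mem_nhdsWithin] with α (hα : α ≠ -1)
  have hα' : α + 1 ≠ 0 := by intro h; apply hα; linarith
  rw [slope_def_field, hF1, sub_zero]
  show 4 / (1 - α) * (F α / (α - -1)) = 4 / (1 - α ^ 2) * F α
  have : (1 : ℝ) - α ^ 2 = (1 - α) * (α - -1) := by ring
  rw [this, div_mul_eq_div_div_swap]
  ring
end

section
/- For every fixed real number t > 0, the limit as α → 1 of (4/(1-α²))·((1-α)/2·t + (1+α)/2 - t^{(1-α)/2}) exists and equals -log t + t - 1. (Here t^{(1-α)/2} denotes the real power rpow.) -/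
open Real Filter Topology

/-- For fixed `t > 0`, the limit as `α → 1` of
`(4/(1-α²))·((1-α)/2·t + (1+α)/2 - t^{(1-α)/2})` equals `-log t + t - 1`. -/
theorem alpha_div_generator_limit_one (t : ℝ) (ht : 0 < t) :
    Tendsto (fun α : ℝ =>
        (4 / (1 - α ^ 2)) * ((1 - α) / 2 * t + (1 + α) / 2 - t ^ ((1 - α) / 2)))
      (𝓝[≠] (1 : ℝ)) (𝓝 (-Real.log t + t - 1)) := by
  have hmap : Tendsto (fun α : ℝ => (1 - α) / 2) (𝓝[≠] (1 : ℝ)) (𝓝[≠] (0 : ℝ)) := by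
    refine tendsto_nhdsWithin_of_tendsto_nhds_of_eventually_within _ ?_ ?_
    · have h : Tendsto (fun α : ℝ => (1 - α) / 2) (𝓝 (1 : ℝ)) (𝓝 ((1 - 1) / 2)) := by
        exact (tendsto_const_nhds.sub tendsto_id).div_const 2
      simpa using h.mono_left nhdsWithin_le_nhds
    · filter_upwards [self_mem_nhdsWithin] with α hα
      simp only [Set.mem_compl_iff, Set.mem_singleton_iff, div_eq_zero_iff]
      push_neg
      exact ⟨sub_ne_zero.mpr (Ne.symm hα), by norm_num⟩
  have hslope : Tendsto (fun s : ℝ => (t ^ s - 1) / s) (𝓝[≠] (0 : ℝ)) (𝓝 (Real.log t)) := by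
    have hd : HasDerivAt (fun s : ℝ => t ^ s) (Real.log t) 0 := by
      have h := Real.hasStrictDerivAt_const_rpow ht (0 : ℝ)
      simpa using h.hasDerivAt
    have h := hasDerivAt_iff_tendsto_slope.mp hd
    simp only [slope_fun_def, Real.rpow_zero, sub_zero] at h
    exact h.congr (fun s => by simp [smul_eq_mul, vsub_eq_sub, div_eq_inv_mul])
  have h1 : Tendsto (fun s : ℝ => 1 / (1 - s)) (𝓝[≠] (0 : ℝ)) (𝓝 1) := by
    have hc : ContinuousAt (fun s : ℝ => 1 / (1 - s)) 0 := by
      apply ContinuousAt.div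
      · fun_prop
      · fun_prop
      · norm_num
    have := hc.tendsto
    simpa using this.mono_left nhdsWithin_le_nhds
  have hg : Tendsto (fun s : ℝ => (t - 1 - (t ^ s - 1) / s) * (1 / (1 - s)))
      (𝓝[≠] (0 : ℝ)) (𝓝 (-Real.log t + t - 1)) := by
    have h := ((tendsto_const_nhds (x := t - 1)).sub hslope).mul h1
    have : (t - 1 - Real.log t) * 1 = -Real.log t + t - 1 := by ring
    simpa [this] using h
  have key := hg.comp hmap
  refine key.congr' ?_
  have hIoo : Set.Ioo (0 : ℝ) 2 ∈ 𝓝 (1 : ℝ) := isOpen_Ioo.mem_nhds (by norm_num)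
  filter_upwards [self_mem_nhdsWithin, nhdsWithin_le_nhds hIoo] with α hα hα2
  simp only [Set.mem_compl_iff, Set.mem_singleton_iff] at hα
  obtain ⟨h0, h2⟩ := hα2
  have hs : (1 - α) / 2 ≠ 0 := by
    have : (1 : ℝ) - α ≠ 0 := sub_ne_zero.mpr (Ne.symm hα)
    simpa using this
  have h1s : (1 : ℝ) - (1 - α) / 2 ≠ 0 := by
    have : (1 : ℝ) + α > 0 := by linarith
    intro h; apply ne_of_gt this; linarith [h]
  have hsq : (1 : ℝ) - α ^ 2 ≠ 0 := by
    intro h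
    have : (1 - α) * (1 + α) = 0 := by ring_nf; linarith [h]
    rcases mul_eq_zero.mp this with h' | h'
    · exact hα (by linarith)
    · linarith
  simp only [Function.comp]
  set s := (1 - α) / 2 with hsdef
  have h1a : (1 + α) / 2 = 1 - s := by rw [hsdef]; ring
  have hsq' : 1 - α ^ 2 = 4 * (s * (1 - s)) := by rw [hsdef]; ring
  rw [h1a, hsq']
  have hns : (1 : ℝ) - s ≠ 0 := by rw [hsdef]; exact h1s
  field_simp
  ring
end

section
/- Let a ∈ (0,2), β ∈ (0,1), and λ, μ > 0. Then the function x ↦ (β·e^{-λx} + (1-β)·e^{-μx} - e^{-(βλ+(1-β)μ)x})·x^{-1-a} is Lebesgue integrable on the interval (0,∞). (Although each of the three summands separately gives a divergent integral against x^{-1-a} near 0, the combination vanishes to second order at x = 0, making the product integrable.) -/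
open Real Filter Topology MeasureTheory

/-- For `a ∈ (0,2)`, `β ∈ (0,1)`, `λ, μ > 0`, the function
`x ↦ (β·e^{-λx} + (1-β)·e^{-μx} - e^{-(βλ+(1-β)μ)x})·x^{-1-a}` is Lebesgue
integrable on `(0,∞)`. -/
theorem gts_alpha_integrand_integrable (a β lam mu : ℝ)
    (ha : a ∈ Set.Ioo (0 : ℝ) 2) (hβ : β ∈ Set.Ioo (0 : ℝ) 1)
    (hlam : 0 < lam) (hmu : 0 < mu) :
    IntegrableOn
      (fun x : ℝ =>
        (β * Real.exp (-(lam * x)) + (1 - β) * Real.exp (-(mu * x))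
          - Real.exp (-((β * lam + (1 - β) * mu) * x))) * x ^ (-1 - a))
      (Set.Ioi (0 : ℝ)) := by
  obtain ⟨ha0, ha2⟩ := ha
  obtain ⟨hβ0, hβ1⟩ := hβ
  set nu : ℝ := β * lam + (1 - β) * mu with hnu
  have hnu0 : 0 < nu := add_pos (mul_pos hβ0 hlam) (mul_pos (by linarith) hmu)
  have hnule : nu ≤ lam + mu := by
    have h1 : β * lam ≤ lam := by nlinarith
    have h2 : (1 - β) * mu ≤ mu := by nlinarith
    simp only [hnu]; linarith
  set δ : ℝ := (1 + lam + mu)⁻¹ with hδ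
  have hs : (0:ℝ) < 1 + lam + mu := by linarith
  have hδ0 : 0 < δ := inv_pos.mpr hs
  have hmeas : AEStronglyMeasurable
      (fun x : ℝ =>
        (β * Real.exp (-(lam * x)) + (1 - β) * Real.exp (-(mu * x))
          - Real.exp (-(nu * x))) * x ^ (-1 - a)) (volume : Measure ℝ) := by
    apply Measurable.aestronglyMeasurable
    fun_prop
  have hunion : Set.Ioi (0:ℝ) = Set.Ioc 0 δ ∪ Set.Ioi δ := (Set.Ioc_union_Ioi_eq_Ioi hδ0.le).symm
  rw [hunion]
  apply IntegrableOn.union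
  · -- near 0
    have hdom : IntegrableOn (fun x : ℝ => (lam^2 + mu^2 + nu^2) * x ^ (1 - a)) (Set.Ioc 0 δ) := by
      apply Integrable.const_mul
      have := intervalIntegral.intervalIntegrable_rpow' (a := 0) (b := δ) (r := 1 - a)
        (by linarith)
      rwa [intervalIntegrable_iff_integrableOn_Ioc_of_le hδ0.le] at this
    refine Integrable.mono hdom (hmeas.restrict) ?_
    filter_upwards [ae_restrict_mem measurableSet_Ioc] with x hx
    obtain ⟨hx0, hxδ⟩ := hx
    have key : ∀ c : ℝ, 0 < c → c ≤ 1 + lam + mu →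
        |Real.exp (-(c * x)) - 1 + c * x| ≤ c^2 * x^2 := by
      intro c hc hcle
      have h1 : |(-(c * x))| ≤ 1 := by
        rw [abs_of_nonpos (by nlinarith)]
        have : c * x ≤ c * δ := by nlinarith
        have hcδ : c * δ ≤ 1 := by
          rw [hδ]
          rw [mul_inv_le_iff₀ hs]
          linarith
        linarith
      have := Real.abs_exp_sub_one_sub_id_le h1
      calc |Real.exp (-(c * x)) - 1 + c * x|
          = |Real.exp (-(c * x)) - 1 - (-(c * x))| := by ring_nf
        _ ≤ (-(c * x))^2 := this
        _ = c^2 * x^2 := by ring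
    have hb1 := key lam hlam (by linarith)
    have hb2 := key mu hmu (by linarith)
    have hb3 := key nu hnu0 (by linarith)
    have hg : |β * Real.exp (-(lam * x)) + (1 - β) * Real.exp (-(mu * x))
        - Real.exp (-(nu * x))| ≤ (lam^2 + mu^2 + nu^2) * x^2 := by
      have hrw : β * Real.exp (-(lam * x)) + (1 - β) * Real.exp (-(mu * x))
          - Real.exp (-(nu * x))
          = β * (Real.exp (-(lam * x)) - 1 + lam * x)
            + (1 - β) * (Real.exp (-(mu * x)) - 1 + mu * x)
            - (Real.exp (-(nu * x)) - 1 + nu * x) := by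
        simp only [hnu]; ring
      rw [hrw]
      have t1 : |β * (Real.exp (-(lam * x)) - 1 + lam * x)| ≤ lam^2 * x^2 := by
        rw [abs_mul, abs_of_nonneg hβ0.le]
        nlinarith [abs_nonneg (Real.exp (-(lam * x)) - 1 + lam * x)]
      have t2 : |(1 - β) * (Real.exp (-(mu * x)) - 1 + mu * x)| ≤ mu^2 * x^2 := by
        rw [abs_mul, abs_of_nonneg (by linarith : (0:ℝ) ≤ 1 - β)]
        nlinarith [abs_nonneg (Real.exp (-(mu * x)) - 1 + mu * x)]
      calc |β * (Real.exp (-(lam * x)) - 1 + lam * x)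
            + (1 - β) * (Real.exp (-(mu * x)) - 1 + mu * x)
            - (Real.exp (-(nu * x)) - 1 + nu * x)|
          ≤ |β * (Real.exp (-(lam * x)) - 1 + lam * x)|
            + |(1 - β) * (Real.exp (-(mu * x)) - 1 + mu * x)|
            + |Real.exp (-(nu * x)) - 1 + nu * x| := by
            exact (abs_sub _ _).trans (by gcongr; exact abs_add_le _ _)
        _ ≤ lam^2 * x^2 + mu^2 * x^2 + nu^2 * x^2 := by gcongr
        _ = (lam^2 + mu^2 + nu^2) * x^2 := by ring
    have hrpow : x ^ 2 * x ^ (-1 - a) = x ^ (1 - a) := by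
      rw [← Real.rpow_natCast x 2, ← Real.rpow_add hx0]
      congr 1
      push_cast
      ring
    rw [Real.norm_eq_abs, Real.norm_eq_abs, abs_mul,
      abs_of_nonneg (Real.rpow_nonneg hx0.le _)]
    have hC : (0:ℝ) ≤ lam^2 + mu^2 + nu^2 := by positivity
    calc |β * Real.exp (-(lam * x)) + (1 - β) * Real.exp (-(mu * x))
          - Real.exp (-(nu * x))| * x ^ (-1 - a)
        ≤ ((lam^2 + mu^2 + nu^2) * x^2) * x ^ (-1 - a) := by
          gcongr
      _ = (lam^2 + mu^2 + nu^2) * (x ^ 2 * x ^ (-1 - a)) := by ring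
      _ = (lam^2 + mu^2 + nu^2) * x ^ (1 - a) := by rw [hrpow]
      _ ≤ |(lam^2 + mu^2 + nu^2) * x ^ (1 - a)| := le_abs_self _
  · -- tail
    have hdom : IntegrableOn (fun x : ℝ => (2:ℝ) * x ^ (-1 - a)) (Set.Ioi δ) :=
      (integrableOn_Ioi_rpow_of_lt (by linarith) hδ0).const_mul 2
    refine Integrable.mono hdom (hmeas.restrict) ?_
    filter_upwards [ae_restrict_mem measurableSet_Ioi] with x hx
    have hx0 : 0 < x := hδ0.trans hx
    have e1 : Real.exp (-(lam * x)) ≤ 1 := Real.exp_le_one_iff.mpr (by nlinarith)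
    have e2 : Real.exp (-(mu * x)) ≤ 1 := Real.exp_le_one_iff.mpr (by nlinarith)
    have e3 : Real.exp (-(nu * x)) ≤ 1 := Real.exp_le_one_iff.mpr (by nlinarith)
    have p1 : 0 < Real.exp (-(lam * x)) := Real.exp_pos _
    have p2 : 0 < Real.exp (-(mu * x)) := Real.exp_pos _
    have p3 : 0 < Real.exp (-(nu * x)) := Real.exp_pos _
    have hg : |β * Real.exp (-(lam * x)) + (1 - β) * Real.exp (-(mu * x))
        - Real.exp (-(nu * x))| ≤ 2 := by
      rw [abs_le]; constructor <;> nlinarith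
    rw [Real.norm_eq_abs, Real.norm_eq_abs, abs_mul,
      abs_of_nonneg (Real.rpow_nonneg hx0.le _)]
    calc |β * Real.exp (-(lam * x)) + (1 - β) * Real.exp (-(mu * x))
          - Real.exp (-(nu * x))| * x ^ (-1 - a)
        ≤ 2 * x ^ (-1 - a) := by gcongr
      _ ≤ |2 * x ^ (-1 - a)| := le_abs_self _
end

section
/- Let a ∈ (0,2) with a ≠ 1, β ∈ (0,1), and λ, μ > 0. Then ∫_0^∞ (β·e^{-λx} + (1-β)·e^{-μx} - e^{-(βλ+(1-β)μ)x})·x^{-1-a} dx = Γ(-a)·(β·λ^a + (1-β)·μ^a - (βλ+(1-β)μ)^a), where Γ denotes the real Gamma function (which is well defined at -a since -a is not a nonpositive integer) and powers are real powers. -/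
open Real Filter Topology MeasureTheory
open Set

private lemma one_sub_exp_nonneg {u : ℝ} (hu : 0 ≤ u) : 0 ≤ 1 - Real.exp (-u) := by
  nlinarith [Real.exp_le_one_iff.mpr (neg_nonpos.mpr hu)]

private lemma one_sub_exp_le (u : ℝ) : 1 - Real.exp (-u) ≤ u := by
  nlinarith [Real.add_one_le_exp (-u)]

private lemma exp_sub_nonneg (u : ℝ) : 0 ≤ Real.exp (-u) - 1 + u := by
  nlinarith [Real.add_one_le_exp (-u)]

private lemma quad_bound {u : ℝ} (hu : 0 ≤ u) : Real.exp (-u) - 1 + u ≤ u ^ 2 / 2 := by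
  set f : ℝ → ℝ := fun v => v ^ 2 / 2 - (Real.exp (-v) - 1 + v) with hf
  have hd : ∀ v : ℝ, HasDerivAt f (v + Real.exp (-v) - 1) v := by
    intro v
    have h1 : HasDerivAt (fun v : ℝ => Real.exp (-v)) (-Real.exp (-v)) v := by
      simpa using (hasDerivAt_neg v).exp
    have h2 := ((hasDerivAt_pow 2 v).div_const 2).sub ((h1.sub_const 1).add (hasDerivAt_id v))
    convert h2 using 1
    · rfl
    · rfl
    · rfl
    simp
    ring
  have hint : IntervalIntegrable (fun v : ℝ => v + Real.exp (-v) - 1) volume 0 u :=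
    (by fun_prop : Continuous fun v : ℝ => v + Real.exp (-v) - 1).intervalIntegrable _ _
  have key := intervalIntegral.integral_eq_sub_of_hasDerivAt (fun v _ => hd v) hint
  have hnn : 0 ≤ ∫ v in (0:ℝ)..u, (v + Real.exp (-v) - 1) :=
    intervalIntegral.integral_nonneg hu fun v _ => by nlinarith [Real.add_one_le_exp (-v)]
  simp only [hf] at key
  norm_num at key
  nlinarith [key, hnn]

private lemma rpow_succ_aux {x : ℝ} (hx : 0 < x) (y z : ℝ) (h : z = y + 1) :
    x * x ^ y = x ^ z := by
  rw [h, Real.rpow_add_one hx.ne' y, mul_comm]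

private lemma contOn_rpow_aux {c : ℝ} {s : Set ℝ} (hs : s ⊆ Ioi 0) :
    ContinuousOn (fun x : ℝ => x ^ c) s := fun x hx =>
  (Real.continuousAt_rpow_const x c (Or.inl (ne_of_gt (hs hx)))).continuousWithinAt

private lemma integrable_one_sub_exp {a t : ℝ} (ha0 : 0 < a) (ha1 : a < 1) (ht : 0 < t) :
    IntegrableOn (fun x : ℝ => (1 - Real.exp (-(t * x))) * x ^ (-1 - a)) (Ioi 0) := by
  have hmeas : ∀ s : Set ℝ, MeasurableSet s → s ⊆ Ioi 0 → AEStronglyMeasurable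
      (fun x : ℝ => (1 - Real.exp (-(t * x))) * x ^ (-1 - a)) (volume.restrict s) := by
    intro s hs hsub
    refine ContinuousOn.aestronglyMeasurable ?_ hs
    exact ((by fun_prop : Continuous fun x : ℝ => 1 - Real.exp (-(t * x))).continuousOn).mul
      (contOn_rpow_aux hsub)
  rw [← Ioc_union_Ioi_eq_Ioi (zero_le_one (α := ℝ)), integrableOn_union]
  constructor
  · have hg : IntegrableOn (fun x : ℝ => t * x ^ (-a)) (Ioc 0 1) := by
      apply Integrable.const_mul
      have h := intervalIntegral.intervalIntegrable_rpow' (a := 0) (b := 1) (r := -a) (by linarith)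
      rwa [intervalIntegrable_iff_integrableOn_Ioc_of_le zero_le_one] at h
    refine Integrable.mono' hg (hmeas _ measurableSet_Ioc fun y hy => hy.1) ?_
    filter_upwards [ae_restrict_mem measurableSet_Ioc] with x hx
    have hx0 : 0 < x := hx.1
    have h1 : 0 ≤ 1 - Real.exp (-(t * x)) := one_sub_exp_nonneg (by positivity)
    have h2 : 1 - Real.exp (-(t * x)) ≤ t * x := one_sub_exp_le _
    have h3 : x * x ^ (-1 - a) = x ^ (-a) := rpow_succ_aux hx0 _ _ (by ring)
    have hp : 0 ≤ x ^ (-1 - a) := Real.rpow_nonneg hx0.le _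
    rw [norm_mul, Real.norm_eq_abs, Real.norm_eq_abs, abs_of_nonneg h1, abs_of_nonneg hp]
    calc (1 - Real.exp (-(t * x))) * x ^ (-1 - a) ≤ (t * x) * x ^ (-1 - a) :=
          mul_le_mul_of_nonneg_right h2 hp
      _ = t * x ^ (-a) := by rw [mul_assoc, h3]
  · refine Integrable.mono' (integrableOn_Ioi_rpow_of_lt (show (-1 - a) < -1 by linarith) one_pos)
      (hmeas _ measurableSet_Ioi fun y hy => show (0:ℝ) < y from lt_trans one_pos hy) ?_
    filter_upwards [ae_restrict_mem measurableSet_Ioi] with x hx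
    have hx0 : (0:ℝ) < x := lt_trans one_pos hx
    have h1 : 0 ≤ 1 - Real.exp (-(t * x)) := one_sub_exp_nonneg (by positivity)
    have h2 : 1 - Real.exp (-(t * x)) ≤ 1 := by nlinarith [Real.exp_pos (-(t * x))]
    have hp : 0 ≤ x ^ (-1 - a) := Real.rpow_nonneg hx0.le _
    rw [norm_mul, Real.norm_eq_abs, Real.norm_eq_abs, abs_of_nonneg h1, abs_of_nonneg hp]
    exact mul_le_of_le_one_left hp h2

private lemma integrable_exp_sub {a t : ℝ} (ha1 : 1 < a) (ha2 : a < 2) (ht : 0 < t) :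
    IntegrableOn (fun x : ℝ => (Real.exp (-(t * x)) - 1 + t * x) * x ^ (-1 - a)) (Ioi 0) := by
  have hmeas : ∀ s : Set ℝ, MeasurableSet s → s ⊆ Ioi 0 → AEStronglyMeasurable
      (fun x : ℝ => (Real.exp (-(t * x)) - 1 + t * x) * x ^ (-1 - a)) (volume.restrict s) := by
    intro s hs hsub
    refine ContinuousOn.aestronglyMeasurable ?_ hs
    exact ((by fun_prop : Continuous fun x : ℝ => Real.exp (-(t * x)) - 1 + t * x).continuousOn).mul
      (contOn_rpow_aux hsub)
  rw [← Ioc_union_Ioi_eq_Ioi (zero_le_one (α := ℝ)), integrableOn_union]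
  constructor
  · have hg : IntegrableOn (fun x : ℝ => t ^ 2 / 2 * x ^ (1 - a)) (Ioc 0 1) := by
      apply Integrable.const_mul
      have h := intervalIntegral.intervalIntegrable_rpow' (a := 0) (b := 1) (r := 1 - a) (by linarith)
      rwa [intervalIntegrable_iff_integrableOn_Ioc_of_le zero_le_one] at h
    refine Integrable.mono' hg (hmeas _ measurableSet_Ioc fun y hy => hy.1) ?_
    filter_upwards [ae_restrict_mem measurableSet_Ioc] with x hx
    have hx0 : 0 < x := hx.1
    have h1 : 0 ≤ Real.exp (-(t * x)) - 1 + t * x := exp_sub_nonneg _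
    have h2 : Real.exp (-(t * x)) - 1 + t * x ≤ (t * x) ^ 2 / 2 := quad_bound (by positivity)
    have e1 : x * x ^ (-1 - a) = x ^ (-a) := rpow_succ_aux hx0 _ _ (by ring)
    have e2 : x * x ^ (-a) = x ^ (1 - a) := rpow_succ_aux hx0 _ _ (by ring)
    have hp : 0 ≤ x ^ (-1 - a) := Real.rpow_nonneg hx0.le _
    rw [norm_mul, Real.norm_eq_abs, Real.norm_eq_abs, abs_of_nonneg h1, abs_of_nonneg hp]
    calc (Real.exp (-(t * x)) - 1 + t * x) * x ^ (-1 - a)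
        ≤ ((t * x) ^ 2 / 2) * x ^ (-1 - a) := mul_le_mul_of_nonneg_right h2 hp
      _ = t ^ 2 / 2 * (x * (x * x ^ (-1 - a))) := by ring
      _ = t ^ 2 / 2 * x ^ (1 - a) := by rw [e1, e2]
  · have hg : IntegrableOn (fun x : ℝ => t * x ^ (-a)) (Ioi 1) :=
      (integrableOn_Ioi_rpow_of_lt (show (-a) < -1 by linarith) one_pos).const_mul t
    refine Integrable.mono' hg (hmeas _ measurableSet_Ioi fun y hy => show (0:ℝ) < y from lt_trans one_pos hy) ?_
    filter_upwards [ae_restrict_mem measurableSet_Ioi] with x hx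
    have hx0 : (0:ℝ) < x := lt_trans one_pos hx
    have h1 : 0 ≤ Real.exp (-(t * x)) - 1 + t * x := exp_sub_nonneg _
    have h2 : Real.exp (-(t * x)) - 1 + t * x ≤ t * x := by
      have hE : Real.exp (-(t * x)) ≤ 1 := Real.exp_le_one_iff.mpr (by nlinarith)
      linarith
    have e1 : x * x ^ (-1 - a) = x ^ (-a) := rpow_succ_aux hx0 _ _ (by ring)
    have hp : 0 ≤ x ^ (-1 - a) := Real.rpow_nonneg hx0.le _
    rw [norm_mul, Real.norm_eq_abs, Real.norm_eq_abs, abs_of_nonneg h1, abs_of_nonneg hp]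
    calc (Real.exp (-(t * x)) - 1 + t * x) * x ^ (-1 - a)
        ≤ (t * x) * x ^ (-1 - a) := mul_le_mul_of_nonneg_right h2 hp
      _ = t * x ^ (-a) := by rw [mul_assoc, e1]

private lemma exp_rpow_integrable {a t : ℝ} (ha1 : a < 1) (ht : 0 < t) :
    IntegrableOn (fun x : ℝ => Real.exp (-(t * x)) * x ^ (-a)) (Ioi 0) := by
  have h := integrableOn_rpow_mul_exp_neg_mul_rpow (p := 1) (s := -a) (b := t)
    (by linarith) one_pos ht
  refine h.congr_fun (fun x hx => ?_) measurableSet_Ioi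
  beta_reduce
  rw [Real.rpow_one, neg_mul]
  ring

private lemma lemA {a t : ℝ} (ha0 : 0 < a) (ha1 : a < 1) (ht : 0 < t) :
    ∫ x in Ioi (0:ℝ), (1 - Real.exp (-(t * x))) * x ^ (-1 - a)
      = Real.Gamma (1 - a) / a * t ^ a := by
  have haz : a ≠ 0 := ha0.ne'
  set F : ℝ → ℝ := fun x => (1 - Real.exp (-(t * x))) * (x ^ (-a) / (-a)) with hFdef
  have hF0 : F 0 = 0 := by simp [hFdef]
  -- derivative
  have hderiv : ∀ x ∈ Ioi (0:ℝ), HasDerivAt F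
      (t * Real.exp (-(t * x)) * (x ^ (-a) / (-a))
        + (1 - Real.exp (-(t * x))) * x ^ (-1 - a)) x := by
    intro x hx
    have h0 : HasDerivAt (fun x : ℝ => -(t * x)) (-t) x := by
      simpa using ((hasDerivAt_id x).const_mul t).fun_neg
    have h1 : HasDerivAt (fun x : ℝ => 1 - Real.exp (-(t * x))) (t * Real.exp (-(t * x))) x := by
      have := (h0.exp).const_sub 1
      convert this using 1
      · rfl
      · rfl
      ring
    have h2 : HasDerivAt (fun x : ℝ => x ^ (-a) / (-a)) (x ^ (-1 - a)) x := by
      have h2' := (Real.hasDerivAt_rpow_const (p := -a) (x := x) (Or.inl (ne_of_gt hx))).div_const (-a)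
      have : -a * x ^ (-a - 1) / (-a) = x ^ (-1 - a) := by
        rw [show (-1 - a : ℝ) = -a - 1 by ring]
        field_simp
      rwa [this] at h2'
    exact h1.mul h2
  -- continuity at 0
  have hcont : ContinuousWithinAt F (Ici (0:ℝ)) 0 := by
    rw [ContinuousWithinAt, hF0, tendsto_zero_iff_abs_tendsto_zero]
    apply squeeze_zero' (g := fun x => t / a * x ^ (1 - a))
    · filter_upwards with x using abs_nonneg _
    · filter_upwards [self_mem_nhdsWithin] with x (hx : (0:ℝ) ≤ x)
      simp only [Function.comp_apply]
      rcases hx.eq_or_lt with h | h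
      · rw [← h]
        simp [hF0, Real.zero_rpow (show (1 - a : ℝ) ≠ 0 by intro hh; linarith)]
      · have h1 : 0 ≤ 1 - Real.exp (-(t * x)) := one_sub_exp_nonneg (by positivity)
        have h2 : 1 - Real.exp (-(t * x)) ≤ t * x := one_sub_exp_le _
        have hp : 0 ≤ x ^ (-a) := Real.rpow_nonneg h.le _
        have e2 : x * x ^ (-a) = x ^ (1 - a) := rpow_succ_aux h _ _ (by ring)
        have habs : |F x| = (1 - Real.exp (-(t * x))) * (x ^ (-a) / a) := by
          rw [hFdef]
          rw [abs_mul, abs_div, abs_of_nonneg h1, abs_of_nonneg hp, abs_neg, abs_of_pos ha0]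
        rw [habs]
        have hr : t / a * x ^ (1 - a) = (t * x) * (x ^ (-a) / a) := by
          rw [← e2]; ring
        rw [hr]
        exact mul_le_mul_of_nonneg_right h2 (by positivity)
    · have hc : ContinuousAt (fun x : ℝ => x ^ (1 - a)) 0 :=
        Real.continuousAt_rpow_const 0 _ (Or.inr (by linarith))
      have := (hc.tendsto.mono_left (nhdsWithin_le_nhds (s := Ici (0:ℝ)))).const_mul (t / a)
      simpa [Real.zero_rpow (show (1 - a : ℝ) ≠ 0 by intro hh; linarith)] using this
  -- limit at infinity
  have htop : Tendsto F atTop (𝓝 0) := by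
    have h1 : Tendsto (fun x : ℝ => Real.exp (-(t * x))) atTop (𝓝 0) := by
      have := Real.tendsto_exp_neg_atTop_nhds_zero.comp (tendsto_id.const_mul_atTop ht)
      simpa [Function.comp_def] using this
    have h2 : Tendsto (fun x : ℝ => x ^ (-a)) atTop (𝓝 0) := tendsto_rpow_neg_atTop ha0
    have h3 : Tendsto F atTop (𝓝 ((1 - 0) * (0 / (-a)))) :=
      ((tendsto_const_nhds (x := (1:ℝ))).sub h1).mul (h2.div_const (-a))
    simpa using h3
  -- integrability
  have hexp_int := exp_rpow_integrable ha1 ht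
  have h1int : IntegrableOn (fun x : ℝ => t * Real.exp (-(t * x)) * (x ^ (-a) / (-a))) (Ioi 0) := by
    refine IntegrableOn.congr_fun
      (f := fun x : ℝ => t / (-a) * (Real.exp (-(t * x)) * x ^ (-a)))
      (hexp_int.const_mul _) (fun x hx => by ring) measurableSet_Ioi
  have h2int := integrable_one_sub_exp ha0 ha1 ht
  have FTC := integral_Ioi_of_hasDerivAt_of_tendsto hcont hderiv (h1int.add h2int) htop
  rw [integral_add h1int h2int, hF0, sub_zero] at FTC
  -- value of the first integral
  have e1 : ∫ x in Ioi (0:ℝ), t * Real.exp (-(t * x)) * (x ^ (-a) / (-a))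
      = (t / (-a)) * ((1 / t) ^ (1 - a) * Real.Gamma (1 - a)) := by
    rw [show (fun x : ℝ => t * Real.exp (-(t * x)) * (x ^ (-a) / (-a)))
        = fun x : ℝ => (t / (-a)) * (x ^ ((1 - a) - 1) * Real.exp (-(t * x))) from
      funext fun x => by rw [show (1 - a) - 1 = -a by ring]; ring]
    rw [MeasureTheory.integral_const_mul, integral_rpow_mul_exp_neg_mul_Ioi (by linarith) ht]
  rw [e1] at FTC
  have hpow : (1 / t : ℝ) ^ (1 - a) = t ^ (a - 1) := by
    rw [one_div, Real.inv_rpow ht.le, ← Real.rpow_neg ht.le]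
    congr 1
    ring
  have hta : t ^ a = t ^ (a - 1) * t := by
    rw [← Real.rpow_add_one ht.ne' (a - 1)]
    congr 1
    ring
  rw [hpow] at FTC
  rw [hta]
  have : ∫ x in Ioi (0:ℝ), (1 - Real.exp (-(t * x))) * x ^ (-1 - a)
      = -(t / (-a) * (t ^ (a - 1) * Real.Gamma (1 - a))) := by linarith
  rw [this]
  field_simp

private lemma lemB {a t : ℝ} (hA1 : 1 < a) (hA2 : a < 2) (ht : 0 < t) :
    ∫ x in Ioi (0:ℝ), (Real.exp (-(t * x)) - 1 + t * x) * x ^ (-1 - a)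
      = Real.Gamma (2 - a) / (a * (a - 1)) * t ^ a := by
  have ha0 : (0:ℝ) < a := by linarith
  have haz : a ≠ 0 := ha0.ne'
  have haz1 : a - 1 ≠ 0 := by intro h; apply absurd hA1; simp [show a = 1 by linarith]
  set G : ℝ → ℝ := fun x => (Real.exp (-(t * x)) - 1 + t * x) * (x ^ (-a) / (-a)) with hGdef
  have hG0 : G 0 = 0 := by simp [hGdef]
  have hderiv : ∀ x ∈ Ioi (0:ℝ), HasDerivAt G
      ((t - t * Real.exp (-(t * x))) * (x ^ (-a) / (-a))
        + (Real.exp (-(t * x)) - 1 + t * x) * x ^ (-1 - a)) x := by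
    intro x hx
    have h0 : HasDerivAt (fun x : ℝ => -(t * x)) (-t) x := by
      simpa using ((hasDerivAt_id x).const_mul t).fun_neg
    have h1 : HasDerivAt (fun x : ℝ => Real.exp (-(t * x)) - 1 + t * x)
        (t - t * Real.exp (-(t * x))) x := by
      have := (h0.exp.sub_const 1).add ((hasDerivAt_id x).const_mul t)
      convert this using 1
      · rfl
      · rfl
      · rfl
      ring
    have h2 : HasDerivAt (fun x : ℝ => x ^ (-a) / (-a)) (x ^ (-1 - a)) x := by
      have h2' := (Real.hasDerivAt_rpow_const (p := -a) (x := x) (Or.inl (ne_of_gt hx))).div_const (-a)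
      have : -a * x ^ (-a - 1) / (-a) = x ^ (-1 - a) := by
        rw [show (-1 - a : ℝ) = -a - 1 by ring]
        field_simp
      rwa [this] at h2'
    exact h1.mul h2
  have hcont : ContinuousWithinAt G (Ici (0:ℝ)) 0 := by
    rw [ContinuousWithinAt, hG0, tendsto_zero_iff_abs_tendsto_zero]
    apply squeeze_zero' (g := fun x => t ^ 2 / (2 * a) * x ^ (2 - a))
    · filter_upwards with x using abs_nonneg _
    · filter_upwards [self_mem_nhdsWithin] with x (hx : (0:ℝ) ≤ x)
      simp only [Function.comp_apply]
      rcases hx.eq_or_lt with h | h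
      · rw [← h]
        simp [hG0, Real.zero_rpow (show (2 - a : ℝ) ≠ 0 by intro hh; linarith)]
      · have h1 : 0 ≤ Real.exp (-(t * x)) - 1 + t * x := exp_sub_nonneg _
        have h2 : Real.exp (-(t * x)) - 1 + t * x ≤ (t * x) ^ 2 / 2 := quad_bound (by positivity)
        have hp : 0 ≤ x ^ (-a) := Real.rpow_nonneg h.le _
        have e1 : x * x ^ (-a) = x ^ (1 - a) := rpow_succ_aux h _ _ (by ring)
        have e2 : x * x ^ (1 - a) = x ^ (2 - a) := rpow_succ_aux h _ _ (by ring)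
        have habs : |G x| = (Real.exp (-(t * x)) - 1 + t * x) * (x ^ (-a) / a) := by
          rw [hGdef]
          rw [abs_mul, abs_div, abs_of_nonneg h1, abs_of_nonneg hp, abs_neg, abs_of_pos ha0]
        rw [habs]
        have hr : t ^ 2 / (2 * a) * x ^ (2 - a) = ((t * x) ^ 2 / 2) * (x ^ (-a) / a) := by
          rw [← e2, ← e1]; ring
        rw [hr]
        exact mul_le_mul_of_nonneg_right h2 (by positivity)
    · have hc : ContinuousAt (fun x : ℝ => x ^ (2 - a)) 0 :=
        Real.continuousAt_rpow_const 0 _ (Or.inr (by linarith))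
      have := (hc.tendsto.mono_left (nhdsWithin_le_nhds (s := Ici (0:ℝ)))).const_mul (t ^ 2 / (2 * a))
      simpa [Real.zero_rpow (show (2 - a : ℝ) ≠ 0 by intro hh; linarith)] using this
  have htop : Tendsto G atTop (𝓝 0) := by
    have h1 : Tendsto (fun x : ℝ => Real.exp (-(t * x))) atTop (𝓝 0) := by
      have := Real.tendsto_exp_neg_atTop_nhds_zero.comp (tendsto_id.const_mul_atTop ht)
      simpa [Function.comp_def] using this
    have h2 : Tendsto (fun x : ℝ => x ^ (-a)) atTop (𝓝 0) := tendsto_rpow_neg_atTop ha0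
    have h3 : Tendsto (fun x : ℝ => x ^ (1 - a)) atTop (𝓝 0) := by
      rw [show (1 - a : ℝ) = -(a - 1) by ring]
      exact tendsto_rpow_neg_atTop (by linarith)
    have h4 : Tendsto (fun x : ℝ => ((Real.exp (-(t * x)) - 1) * x ^ (-a) + t * x ^ (1 - a)) / (-a))
        atTop (𝓝 (((0 - 1) * 0 + t * 0) / (-a))) :=
      (((h1.sub_const 1).mul h2).add (h3.const_mul t)).div_const (-a)
    have hev : ∀ᶠ x in atTop, ((Real.exp (-(t * x)) - 1) * x ^ (-a) + t * x ^ (1 - a)) / (-a) = G x := by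
      filter_upwards [eventually_gt_atTop (0:ℝ)] with x hx
      have e1 : x * x ^ (-a) = x ^ (1 - a) := rpow_succ_aux hx _ _ (by ring)
      rw [hGdef, ← e1]
      ring
    have := h4.congr' hev
    simpa using this
  -- integrability
  have hA := lemA (show (0:ℝ) < a - 1 by linarith) (show a - 1 < 1 by linarith) ht
  rw [show (-1 - (a - 1) : ℝ) = -a by ring, show (1 - (a - 1) : ℝ) = 2 - a by ring] at hA
  have hbase := integrable_one_sub_exp (show (0:ℝ) < a - 1 by linarith) (show a - 1 < 1 by linarith) ht
  rw [show (-1 - (a - 1) : ℝ) = -a by ring] at hbase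
  have h1int : IntegrableOn (fun x : ℝ => (t - t * Real.exp (-(t * x))) * (x ^ (-a) / (-a))) (Ioi 0) := by
    refine IntegrableOn.congr_fun
      (f := fun x : ℝ => t / (-a) * ((1 - Real.exp (-(t * x))) * x ^ (-a)))
      (hbase.const_mul _) (fun x hx => by ring) measurableSet_Ioi
  have h2int := integrable_exp_sub hA1 hA2 ht
  have FTC := integral_Ioi_of_hasDerivAt_of_tendsto hcont hderiv (h1int.add h2int) htop
  rw [integral_add h1int h2int, hG0, sub_zero] at FTC
  have e1 : ∫ x in Ioi (0:ℝ), (t - t * Real.exp (-(t * x))) * (x ^ (-a) / (-a))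
      = (t / (-a)) * (Real.Gamma (2 - a) / (a - 1) * t ^ (a - 1)) := by
    rw [show (fun x : ℝ => (t - t * Real.exp (-(t * x))) * (x ^ (-a) / (-a)))
        = fun x : ℝ => (t / (-a)) * ((1 - Real.exp (-(t * x))) * x ^ (-a)) from
      funext fun x => by ring]
    rw [MeasureTheory.integral_const_mul, hA]
  rw [e1] at FTC
  have hta : t ^ a = t ^ (a - 1) * t := by
    rw [← Real.rpow_add_one ht.ne' (a - 1)]
    congr 1
    ring
  rw [hta]
  have : ∫ x in Ioi (0:ℝ), (Real.exp (-(t * x)) - 1 + t * x) * x ^ (-1 - a)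
      = -(t / (-a) * (Real.Gamma (2 - a) / (a - 1) * t ^ (a - 1))) := by linarith
  rw [this]
  field_simp

/-- For `a ∈ (0,2)`, `a ≠ 1`, `β ∈ (0,1)`, `λ, μ > 0`:
`∫_0^∞ (β·e^{-λx} + (1-β)·e^{-μx} - e^{-(βλ+(1-β)μ)x})·x^{-1-a} dx
  = Γ(-a)·(β·λ^a + (1-β)·μ^a - (βλ+(1-β)μ)^a)`. -/
theorem gts_alpha_integral_eval (a β lam mu : ℝ)
    (ha : a ∈ Set.Ioo (0 : ℝ) 2) (ha1 : a ≠ 1) (hβ : β ∈ Set.Ioo (0 : ℝ) 1)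
    (hlam : 0 < lam) (hmu : 0 < mu) :
    ∫ x in Set.Ioi (0 : ℝ),
        (β * Real.exp (-(lam * x)) + (1 - β) * Real.exp (-(mu * x))
          - Real.exp (-((β * lam + (1 - β) * mu) * x))) * x ^ (-1 - a)
      = Real.Gamma (-a) *
          (β * lam ^ a + (1 - β) * mu ^ a - (β * lam + (1 - β) * mu) ^ a) := by
  have hβ0 : 0 < β := hβ.1
  have hβ1 : β < 1 := hβ.2
  have hν : 0 < β * lam + (1 - β) * mu :=
    add_pos (mul_pos hβ0 hlam) (mul_pos (by linarith) hmu)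
  have hanz : -a ≠ 0 := by
    intro h; exact absurd (show a = 0 by linarith [neg_eq_zero.mp h]) ha.1.ne'
  rcases lt_or_gt_of_ne ha1 with h | h
  · -- case a < 1
    have i1 := integrable_one_sub_exp ha.1 h hlam
    have i2 := integrable_one_sub_exp ha.1 h hmu
    have i3 := integrable_one_sub_exp ha.1 h hν
    rw [show (fun x : ℝ => (β * Real.exp (-(lam * x)) + (1 - β) * Real.exp (-(mu * x))
          - Real.exp (-((β * lam + (1 - β) * mu) * x))) * x ^ (-1 - a))
        = fun x : ℝ => (1 - Real.exp (-((β * lam + (1 - β) * mu) * x))) * x ^ (-1 - a)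
          - β * ((1 - Real.exp (-(lam * x))) * x ^ (-1 - a))
          - (1 - β) * ((1 - Real.exp (-(mu * x))) * x ^ (-1 - a)) from
      funext fun x => by ring]
    have i13 : IntegrableOn (fun x : ℝ =>
        (1 - Real.exp (-((β * lam + (1 - β) * mu) * x))) * x ^ (-1 - a)
          - β * ((1 - Real.exp (-(lam * x))) * x ^ (-1 - a))) (Ioi 0) :=
      i3.sub (i1.const_mul β)
    rw [integral_sub i13 (i2.const_mul (1 - β)),
      integral_sub i3 (i1.const_mul β), MeasureTheory.integral_const_mul,
      MeasureTheory.integral_const_mul,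
      lemA ha.1 h hlam, lemA ha.1 h hmu, lemA ha.1 h hν]
    have hΓ : Real.Gamma (1 - a) = -a * Real.Gamma (-a) := by
      rw [show (1 - a : ℝ) = -a + 1 by ring, Real.Gamma_add_one hanz]
    have haz : a ≠ 0 := ha.1.ne'
    rw [hΓ]
    field_simp
    ring
  · -- case a > 1
    have i1 := integrable_exp_sub h ha.2 hlam
    have i2 := integrable_exp_sub h ha.2 hmu
    have i3 := integrable_exp_sub h ha.2 hν
    rw [show (fun x : ℝ => (β * Real.exp (-(lam * x)) + (1 - β) * Real.exp (-(mu * x))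
          - Real.exp (-((β * lam + (1 - β) * mu) * x))) * x ^ (-1 - a))
        = fun x : ℝ => β * ((Real.exp (-(lam * x)) - 1 + lam * x) * x ^ (-1 - a))
          + (1 - β) * ((Real.exp (-(mu * x)) - 1 + mu * x) * x ^ (-1 - a))
          - (Real.exp (-((β * lam + (1 - β) * mu) * x)) - 1 + (β * lam + (1 - β) * mu) * x)
              * x ^ (-1 - a) from
      funext fun x => by ring]
    have i12 : IntegrableOn (fun x : ℝ =>
        β * ((Real.exp (-(lam * x)) - 1 + lam * x) * x ^ (-1 - a))
          + (1 - β) * ((Real.exp (-(mu * x)) - 1 + mu * x) * x ^ (-1 - a))) (Ioi 0) :=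
      (i1.const_mul β).add (i2.const_mul (1 - β))
    rw [integral_sub i12 i3,
      integral_add (i1.const_mul β) (i2.const_mul (1 - β)),
      MeasureTheory.integral_const_mul, MeasureTheory.integral_const_mul,
      lemB h ha.2 hlam, lemB h ha.2 hmu, lemB h ha.2 hν]
    have hΓ1 : Real.Gamma (1 - a) = -a * Real.Gamma (-a) := by
      rw [show (1 - a : ℝ) = -a + 1 by ring, Real.Gamma_add_one hanz]
    have hΓ2 : Real.Gamma (2 - a) = (1 - a) * Real.Gamma (1 - a) := by
      rw [show (2 - a : ℝ) = (1 - a) + 1 by ring,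
        Real.Gamma_add_one (show (1 - a : ℝ) ≠ 0 by intro hh; exact ha1 (by linarith))]
    rw [hΓ2, hΓ1]
    have haz : a ≠ 0 := ha.1.ne'
    have haz1 : a - 1 ≠ 0 := sub_ne_zero.mpr ha1
    field_simp
    ring
end

section
/- Let a ∈ (0,2) with a ≠ 1 and λ, μ > 0. Then ∫_0^∞ ((μ-λ)·x·e^{-λx} - e^{-λx} + e^{-μx})·x^{-1-a} dx = Γ(-a)·((a-1)·λ^a - a·μ·λ^{a-1} + μ^a), where Γ denotes the real Gamma function and powers are real powers. (The integrand is the Kullback–Leibler integrand (u·log u - u + 1)·e^{-μx}·x^{-1-a} with u = e^{-(λ-μ)x}; it vanishes to second order at x = 0, so the integral converges.) -/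
open Real Filter Topology MeasureTheory

section Aux
open Set

lemma expBound (t : ℝ) : |Real.exp (-t) - 1 + t| ≤ t ^ 2 * Real.exp (max (-t) 0) := by
  have h1 := Real.add_one_le_exp t
  have h1' := Real.add_one_le_exp (-t)
  have h2 : Real.exp (-t) * Real.exp t = 1 := by rw [← Real.exp_add]; simp
  have h3 := Real.exp_pos t
  have h4 := Real.exp_pos (-t)
  have hnn : 0 ≤ Real.exp (-t) - 1 + t := by linarith
  rw [abs_of_nonneg hnn]
  rcases le_or_gt 0 t with ht | ht
  · rw [max_eq_right (by linarith), Real.exp_zero, mul_one]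
    nlinarith [mul_le_mul_of_nonneg_left h1
      (show (0:ℝ) ≤ 1 - t + t^2 by nlinarith [sq_nonneg (t-1)])]
  · rw [max_eq_left (by linarith)]
    nlinarith [mul_le_mul_of_nonneg_left h1 (show (0:ℝ) ≤ 1 - t by linarith)]

lemma expDiffAux {p q : ℝ} (hp : 0 ≤ p) : Real.exp (-p) - Real.exp (-q) ≤ |p - q| := by
  rcases le_total q p with h | h
  · have : Real.exp (-p) ≤ Real.exp (-q) := Real.exp_le_exp.mpr (by linarith)
    have := abs_nonneg (p - q); linarith
  · have h2 : Real.exp (-p) * Real.exp (p - q) = Real.exp (-q) := by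
      rw [← Real.exp_add]; ring_nf
    have h1 := Real.add_one_le_exp (p - q)
    have h3 : Real.exp (-p) ≤ 1 := by
      rw [← Real.exp_zero]; exact Real.exp_le_exp.mpr (by linarith)
    have h4 := Real.exp_pos (-p)
    rw [abs_of_nonpos (by linarith)]
    nlinarith [mul_le_mul_of_nonneg_left h1 h4.le]

lemma expDiff {p q : ℝ} (hp : 0 ≤ p) (hq : 0 ≤ q) :
    |Real.exp (-p) - Real.exp (-q)| ≤ |p - q| := by
  rw [abs_sub_le_iff]
  exact ⟨expDiffAux hp, by rw [abs_sub_comm]; exact expDiffAux hq⟩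

lemma intgOn {b r : ℝ} (hb : -1 < b) (hr : 0 < r) :
    IntegrableOn (fun x : ℝ => x ^ b * Real.exp (-(r * x))) (Ioi 0) := by
  have := integrableOn_rpow_mul_exp_neg_mul_rpow hb zero_lt_one hr
  simpa [Real.rpow_one, neg_mul] using this

lemma intA {b r : ℝ} (hb : -1 < b) (hr : 0 < r) :
    ∫ x in Ioi (0:ℝ), x ^ b * Real.exp (-(r * x)) = (1 / r) ^ (b + 1) * Real.Gamma (b + 1) := by
  have := Real.integral_rpow_mul_exp_neg_mul_Ioi (show (0:ℝ) < b + 1 by linarith) hr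
  simpa [add_sub_cancel_right] using this

lemma integrableOn_of_bound {f : ℝ → ℝ} {b r C : ℝ} (hb : -1 < b) (hr : 0 < r)
    (hf : ContinuousOn f (Ioi 0))
    (hbound : ∀ x ∈ Ioi (0:ℝ), |f x| ≤ C * (x ^ b * Real.exp (-(r * x)))) :
    IntegrableOn f (Ioi 0) := by
  refine Integrable.mono' ((intgOn hb hr).const_mul C)
    (hf.aestronglyMeasurable measurableSet_Ioi) ?_
  refine (ae_restrict_iff' measurableSet_Ioi).mpr (ae_of_all _ ?_)
  intro x hx
  rw [Real.norm_eq_abs]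
  exact hbound x hx

lemma ftc_aux {f F : ℝ → ℝ} (hF0 : F 0 = 0) (hcont : ContinuousWithinAt F (Ici 0) 0)
    (hderiv : ∀ x ∈ Ioi (0:ℝ), HasDerivAt F (f x) x) (hint : IntegrableOn f (Ioi 0))
    (htop : Tendsto F atTop (𝓝 0)) : ∫ x in Ioi (0:ℝ), f x = 0 := by
  rw [integral_Ioi_of_hasDerivAt_of_tendsto hcont hderiv hint htop, hF0, sub_zero]

lemma contWithin_of_bound {F : ℝ → ℝ} {C p : ℝ} (hp : 0 < p) (hF0 : F 0 = 0)
    (hb : ∀ x ∈ Ioi (0:ℝ), |F x| ≤ C * x ^ p) : ContinuousWithinAt F (Ici 0) 0 := by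
  have hg : Tendsto (fun x : ℝ => C * x ^ p) (𝓝[Ici (0:ℝ)] 0) (𝓝 0) := by
    have h0 : ContinuousAt (fun x : ℝ => x ^ p) 0 :=
      Real.continuousAt_rpow_const 0 p (Or.inr hp.le)
    have := (h0.tendsto.const_mul C).mono_left (nhdsWithin_le_nhds (s := Ici (0:ℝ)))
    simpa [Real.zero_rpow hp.ne'] using this
  have hh : Tendsto (fun x : ℝ => -(C * x ^ p)) (𝓝[Ici (0:ℝ)] 0) (𝓝 0) := by
    simpa using hg.neg
  unfold ContinuousWithinAt
  rw [hF0]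
  refine tendsto_of_tendsto_of_tendsto_of_le_of_le' hh hg ?_ ?_
  · filter_upwards [self_mem_nhdsWithin] with x (hx : x ∈ Ici (0:ℝ))
    rcases eq_or_lt_of_le (Set.mem_Ici.mp hx) with h | h
    · simp [← h, hF0, Real.zero_rpow hp.ne']
    · have := abs_le.mp (hb x h); linarith [this.1]
  · filter_upwards [self_mem_nhdsWithin] with x (hx : x ∈ Ici (0:ℝ))
    rcases eq_or_lt_of_le (Set.mem_Ici.mp hx) with h | h
    · simp [← h, hF0, Real.zero_rpow hp.ne']
    · exact (abs_le.mp (hb x h)).2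

lemma hasDerivAt_expc (c x : ℝ) :
    HasDerivAt (fun y : ℝ => Real.exp (-(c * y))) (-(c * Real.exp (-(c * x)))) x := by
  have h : HasDerivAt (fun y : ℝ => -(c * y)) (-c) x := by
    exact ((hasDerivAt_id x).const_mul c).neg.congr_deriv (by simp)
  simpa [mul_comm, Function.comp_def] using (Real.hasDerivAt_exp (-(c * x))).comp x h

lemma ubound (lam mu : ℝ) {x : ℝ} (hx : 0 < x) :
    |(mu - lam) * x * Real.exp (-(lam * x)) - Real.exp (-(lam * x)) + Real.exp (-(mu * x))|
      ≤ (mu - lam) ^ 2 * x ^ 2 * Real.exp (-(min lam mu * x)) := by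
  have hu : (mu - lam) * x * Real.exp (-(lam * x)) - Real.exp (-(lam * x)) + Real.exp (-(mu * x))
      = Real.exp (-(lam * x)) * (Real.exp (-((mu - lam) * x)) - 1 + (mu - lam) * x) := by
    rw [show -(mu * x) = -(lam * x) + -((mu - lam) * x) by ring, Real.exp_add]; ring
  rw [hu, abs_mul, abs_of_pos (Real.exp_pos _)]
  calc Real.exp (-(lam * x)) * |Real.exp (-((mu - lam) * x)) - 1 + (mu - lam) * x|
      ≤ Real.exp (-(lam * x)) * (((mu - lam) * x) ^ 2 * Real.exp (max (-((mu - lam) * x)) 0)) :=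
        mul_le_mul_of_nonneg_left (expBound _) (Real.exp_pos _).le
    _ = (mu - lam) ^ 2 * x ^ 2 * Real.exp (-(lam * x) + max (-((mu - lam) * x)) 0) := by
        rw [Real.exp_add]; ring
    _ ≤ (mu - lam) ^ 2 * x ^ 2 * Real.exp (-(min lam mu * x)) := by
        refine mul_le_mul_of_nonneg_left (Real.exp_le_exp.mpr ?_) (by positivity)
        rcases le_total lam mu with h | h
        · rw [max_eq_right (by nlinarith), min_eq_left h]; linarith
        · rw [max_eq_left (by nlinarith), min_eq_right h]; nlinarith

lemma vbound (lam mu : ℝ) {x : ℝ} (hx : 0 < x) :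
    |Real.exp (-(lam * x)) - Real.exp (-(mu * x))|
      ≤ |lam - mu| * x * Real.exp (-(min lam mu * x)) := by
  set m := min lam mu with hm
  have hml : m ≤ lam := min_le_left _ _
  have hmm : m ≤ mu := min_le_right _ _
  have h1 : Real.exp (-(lam * x)) = Real.exp (-(m * x)) * Real.exp (-((lam - m) * x)) := by
    rw [← Real.exp_add]; ring_nf
  have h2 : Real.exp (-(mu * x)) = Real.exp (-(m * x)) * Real.exp (-((mu - m) * x)) := by
    rw [← Real.exp_add]; ring_nf
  rw [h1, h2, ← mul_sub, abs_mul, abs_of_pos (Real.exp_pos _)]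
  calc Real.exp (-(m * x)) * |Real.exp (-((lam - m) * x)) - Real.exp (-((mu - m) * x))|
      ≤ Real.exp (-(m * x)) * |(lam - m) * x - (mu - m) * x| :=
        mul_le_mul_of_nonneg_left
          (expDiff (by nlinarith) (by nlinarith)) (Real.exp_pos _).le
    _ = |lam - mu| * x * Real.exp (-(m * x)) := by
        rw [show (lam - m) * x - (mu - m) * x = (lam - mu) * x by ring, abs_mul,
          abs_of_pos hx]; ring

lemma hasDerivAt_u (lam mu x : ℝ) :
    HasDerivAt (fun y : ℝ => (mu - lam) * y * Real.exp (-(lam * y)) - Real.exp (-(lam * y))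
        + Real.exp (-(mu * y)))
      (mu * Real.exp (-(lam * x)) - lam * (mu - lam) * x * Real.exp (-(lam * x))
        - mu * Real.exp (-(mu * x))) x := by
  have h1 : HasDerivAt (fun y : ℝ => (mu - lam) * y) (mu - lam) x := by
    simpa using (hasDerivAt_id x).const_mul (mu - lam)
  have := ((h1.mul (hasDerivAt_expc lam x)).sub (hasDerivAt_expc lam x)).add
    (hasDerivAt_expc mu x)
  refine this.congr_deriv ?_; ring

lemma hasDerivAt_G (a lam mu : ℝ) (ha0 : a ≠ 0) {x : ℝ} (hx : 0 < x) :
    HasDerivAt (fun y : ℝ => (-a)⁻¹ * (((mu - lam) * y * Real.exp (-(lam * y))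
        - Real.exp (-(lam * y)) + Real.exp (-(mu * y))) * y ^ (-a)))
      (((mu - lam) * x * Real.exp (-(lam * x)) - Real.exp (-(lam * x))
          + Real.exp (-(mu * x))) * x ^ (-a - 1)
        - a⁻¹ * ((mu * Real.exp (-(lam * x)) - lam * (mu - lam) * x * Real.exp (-(lam * x))
          - mu * Real.exp (-(mu * x))) * x ^ (-a))) x := by
  have hr : HasDerivAt (fun y : ℝ => y ^ (-a)) (-a * x ^ (-a - 1)) x :=
    Real.hasDerivAt_rpow_const (Or.inl hx.ne')
  have := ((hasDerivAt_u lam mu x).mul hr).const_mul (-a)⁻¹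
  refine this.congr_deriv ?_
  apply mul_left_cancel₀ (neg_ne_zero.mpr ha0)
  field_simp
  ring

lemma hasDerivAt_v (lam mu x : ℝ) :
    HasDerivAt (fun y : ℝ => Real.exp (-(lam * y)) - Real.exp (-(mu * y)))
      (mu * Real.exp (-(mu * x)) - lam * Real.exp (-(lam * x))) x := by
  have := (hasDerivAt_expc lam x).sub (hasDerivAt_expc mu x)
  refine this.congr_deriv ?_; ring

lemma hasDerivAt_H (a lam mu : ℝ) (ha1 : (1:ℝ) - a ≠ 0) {x : ℝ} (hx : 0 < x) :
    HasDerivAt (fun y : ℝ => (1 - a)⁻¹ * ((Real.exp (-(lam * y)) - Real.exp (-(mu * y)))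
        * y ^ (1 - a)))
      ((mu * Real.exp (-(mu * x)) - lam * Real.exp (-(lam * x))) * x ^ (1 - a) * (1 - a)⁻¹
        + (Real.exp (-(lam * x)) - Real.exp (-(mu * x))) * x ^ (-a)) x := by
  have hr : HasDerivAt (fun y : ℝ => y ^ (1 - a)) ((1 - a) * x ^ (1 - a - 1)) x :=
    Real.hasDerivAt_rpow_const (Or.inl hx.ne')
  have := ((hasDerivAt_v lam mu x).mul hr).const_mul (1 - a)⁻¹
  refine this.congr_deriv ?_
  rw [show (1:ℝ) - a - 1 = -a by ring]
  apply mul_left_cancel₀ ha1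
  field_simp

lemma contOn_mul_rpow {g : ℝ → ℝ} (hg : Continuous g) (c : ℝ) :
    ContinuousOn (fun x : ℝ => g x * x ^ c) (Ioi 0) := fun x hx =>
  (hg.continuousAt.mul
    (Real.continuousAt_rpow_const x c (Or.inl (ne_of_gt hx)))).continuousWithinAt

lemma rpow_shift2 {c : ℝ} (hc : 0 < c) (y : ℝ) : c ^ y = c ^ (y - 2) * c * c := by
  have h1 : c ^ (y-2) * c ^ (1:ℝ) = c ^ (y-1) := by rw [← Real.rpow_add hc]; ring_nf
  have h2 : c ^ (y-1) * c ^ (1:ℝ) = c ^ y := by rw [← Real.rpow_add hc]; ring_nf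
  rw [Real.rpow_one] at h1 h2
  rw [← h2, ← h1]

lemma rpow_shift1 {c : ℝ} (hc : 0 < c) (y : ℝ) : c ^ (y - 1) = c ^ (y - 2) * c := by
  have h1 : c ^ (y-2) * c ^ (1:ℝ) = c ^ (y-1) := by rw [← Real.rpow_add hc]; ring_nf
  rw [Real.rpow_one] at h1
  rw [← h1]

end Aux

/-- For `a ∈ (0,2)`, `a ≠ 1`, `λ, μ > 0`:
`∫_0^∞ ((μ-λ)·x·e^{-λx} - e^{-λx} + e^{-μx})·x^{-1-a} dx
  = Γ(-a)·((a-1)·λ^a - a·μ·λ^{a-1} + μ^a)`. -/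
theorem gts_kl_integral_eval (a lam mu : ℝ)
    (ha : a ∈ Set.Ioo (0 : ℝ) 2) (ha1 : a ≠ 1) (hlam : 0 < lam) (hmu : 0 < mu) :
    ∫ x in Set.Ioi (0 : ℝ),
        ((mu - lam) * x * Real.exp (-(lam * x)) - Real.exp (-(lam * x))
          + Real.exp (-(mu * x))) * x ^ (-1 - a)
      = Real.Gamma (-a) * ((a - 1) * lam ^ a - a * mu * lam ^ (a - 1) + mu ^ a) := by
  obtain ⟨hapos, ha2⟩ := ha
  have ha0 : a ≠ 0 := ne_of_gt hapos
  have h1a : (1:ℝ) - a ≠ 0 := fun h => ha1 (by linarith)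
  set m := min lam mu with hmdef
  have hm : 0 < m := lt_min hlam hmu
  have hb1 : (-1:ℝ) < 1 - a := by linarith
  -- continuity of the basic pieces
  have hucont : Continuous (fun x : ℝ => (mu - lam) * x * Real.exp (-(lam * x))
      - Real.exp (-(lam * x)) + Real.exp (-(mu * x))) := by fun_prop
  have hvcont : Continuous (fun x : ℝ => Real.exp (-(lam * x)) - Real.exp (-(mu * x))) := by
    fun_prop
  have hu'cont : Continuous (fun x : ℝ => mu * Real.exp (-(lam * x))
      - lam * (mu - lam) * x * Real.exp (-(lam * x)) - mu * Real.exp (-(mu * x))) := by fun_prop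
  -- power identities
  have hxp1 : ∀ {x : ℝ}, 0 < x → x ^ 2 * x ^ (-a - 1) = x ^ (1 - a) := by
    intro x hx
    rw [← Real.rpow_natCast x 2, ← Real.rpow_add hx]
    congr 1 <;> push_cast <;> ring
  have hxp2 : ∀ {x : ℝ}, 0 < x → x * x ^ (-a) = x ^ (1 - a) := by
    intro x hx
    nth_rewrite 1 [← Real.rpow_one x]
    rw [← Real.rpow_add hx]
    congr 1 <;> push_cast <;> ring
  have hxp3 : ∀ {x : ℝ}, 0 < x → x ^ 2 * x ^ (-a) = x ^ (2 - a) := by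
    intro x hx
    rw [← Real.rpow_natCast x 2, ← Real.rpow_add hx]
    congr 1 <;> push_cast <;> ring
  have hxp4 : ∀ {x : ℝ}, 0 < x → x * x ^ (1 - a) = x ^ (2 - a) := by
    intro x hx
    nth_rewrite 1 [← Real.rpow_one x]
    rw [← Real.rpow_add hx]
    congr 1 <;> push_cast <;> ring
  have hexp1 : ∀ {x : ℝ}, 0 < x → Real.exp (-(m * x)) ≤ 1 := by
    intro x hx
    rw [← Real.exp_zero]
    exact Real.exp_le_exp.mpr (by nlinarith)
  -- integrability
  have hI1 : IntegrableOn (fun x : ℝ => ((mu - lam) * x * Real.exp (-(lam * x))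
      - Real.exp (-(lam * x)) + Real.exp (-(mu * x))) * x ^ (-a - 1)) (Set.Ioi 0) := by
    refine integrableOn_of_bound (C := (mu - lam) ^ 2) hb1 hm
      (contOn_mul_rpow hucont _) ?_
    intro x hx
    rw [Set.mem_Ioi] at hx
    rw [abs_mul, abs_of_pos (Real.rpow_pos_of_pos hx _)]
    calc _ ≤ ((mu - lam) ^ 2 * x ^ 2 * Real.exp (-(m * x))) * x ^ (-a - 1) :=
          mul_le_mul_of_nonneg_right (ubound lam mu hx) (Real.rpow_pos_of_pos hx _).le
      _ = (mu - lam) ^ 2 * (x ^ (1 - a) * Real.exp (-(m * x))) := by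
          rw [← hxp1 hx]; ring
  have hI2 : IntegrableOn (fun x : ℝ => (Real.exp (-(lam * x)) - Real.exp (-(mu * x)))
      * x ^ (-a)) (Set.Ioi 0) := by
    refine integrableOn_of_bound (C := |lam - mu|) hb1 hm (contOn_mul_rpow hvcont _) ?_
    intro x hx
    rw [Set.mem_Ioi] at hx
    rw [abs_mul, abs_of_pos (Real.rpow_pos_of_pos hx _)]
    calc _ ≤ (|lam - mu| * x * Real.exp (-(m * x))) * x ^ (-a) :=
          mul_le_mul_of_nonneg_right (vbound lam mu hx) (Real.rpow_pos_of_pos hx _).le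
      _ = |lam - mu| * (x ^ (1 - a) * Real.exp (-(m * x))) := by
          rw [← hxp2 hx]; ring
  have hI3l : IntegrableOn (fun x : ℝ => x ^ (1 - a) * Real.exp (-(lam * x))) (Set.Ioi 0) :=
    intgOn hb1 hlam
  have hI3m : IntegrableOn (fun x : ℝ => x ^ (1 - a) * Real.exp (-(mu * x))) (Set.Ioi 0) :=
    intgOn hb1 hmu
  have hIs : IntegrableOn (fun x : ℝ => (mu * Real.exp (-(lam * x))
      - lam * (mu - lam) * x * Real.exp (-(lam * x)) - mu * Real.exp (-(mu * x)))
      * x ^ (-a)) (Set.Ioi 0) := by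
    refine IntegrableOn.congr_fun
      ((hI2.const_mul mu).sub (hI3l.const_mul (lam * (mu - lam)))) ?_ measurableSet_Ioi
    intro x hx
    rw [Set.mem_Ioi] at hx
    simp only [Pi.sub_apply]
    rw [← hxp2 hx]
    ring
  -- value of the basic Gamma integrals
  have KL : ∫ x in Set.Ioi (0:ℝ), x ^ (1 - a) * Real.exp (-(lam * x))
      = (1 / lam) ^ (2 - a) * Real.Gamma (2 - a) := by
    have := intA hb1 hlam
    rw [show (1:ℝ) - a + 1 = 2 - a by ring] at this
    exact this
  have KM : ∫ x in Set.Ioi (0:ℝ), x ^ (1 - a) * Real.exp (-(mu * x))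
      = (1 / mu) ^ (2 - a) * Real.Gamma (2 - a) := by
    have := intA hb1 hmu
    rw [show (1:ℝ) - a + 1 = 2 - a by ring] at this
    exact this
  -- FTC for H
  have hIH1 : IntegrableOn (fun x : ℝ => (mu * Real.exp (-(mu * x))
      - lam * Real.exp (-(lam * x))) * x ^ (1 - a) * (1 - a)⁻¹) (Set.Ioi 0) := by
    refine IntegrableOn.congr_fun
      (((hI3m.const_mul (mu * (1 - a)⁻¹)).sub
        (hI3l.const_mul (lam * (1 - a)⁻¹)))) ?_ measurableSet_Ioi
    intro x hx
    simp only [Pi.sub_apply]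
    ring
  have stepH : ∫ x in Set.Ioi (0:ℝ),
      ((mu * Real.exp (-(mu * x)) - lam * Real.exp (-(lam * x))) * x ^ (1 - a) * (1 - a)⁻¹
        + (Real.exp (-(lam * x)) - Real.exp (-(mu * x))) * x ^ (-a)) = 0 := by
    refine ftc_aux ?_ ?_ (fun x hx => hasDerivAt_H a lam mu h1a hx) (hIH1.add hI2) ?_
    · simp
    · refine contWithin_of_bound (C := |(1 - a)⁻¹| * |lam - mu|) (show (0:ℝ) < 2 - a by linarith)
        (by simp) ?_
      intro x hx
      rw [Set.mem_Ioi] at hx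
      rw [abs_mul, abs_mul, abs_of_pos (Real.rpow_pos_of_pos hx _)]
      calc |(1 - a)⁻¹| * (|Real.exp (-(lam * x)) - Real.exp (-(mu * x))| * x ^ (1 - a))
          ≤ |(1 - a)⁻¹| * ((|lam - mu| * x * Real.exp (-(m * x))) * x ^ (1 - a)) := by
            refine mul_le_mul_of_nonneg_left
              (mul_le_mul_of_nonneg_right (vbound lam mu hx)
                (Real.rpow_pos_of_pos hx _).le) (abs_nonneg _)
        _ ≤ |(1 - a)⁻¹| * ((|lam - mu| * x * 1) * x ^ (1 - a)) := by
            refine mul_le_mul_of_nonneg_left (mul_le_mul_of_nonneg_right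
              (mul_le_mul_of_nonneg_left (hexp1 hx) (by positivity))
              (Real.rpow_pos_of_pos hx _).le) (abs_nonneg _)
        _ = |(1 - a)⁻¹| * |lam - mu| * x ^ (2 - a) := by
            rw [← hxp4 hx]; ring
    · have t1 : Tendsto (fun x : ℝ => x ^ (1 - a) * Real.exp (-(lam * x))) atTop (𝓝 0) := by
        simpa [neg_mul] using tendsto_rpow_mul_exp_neg_mul_atTop_nhds_zero (1 - a) lam hlam
      have t2 : Tendsto (fun x : ℝ => x ^ (1 - a) * Real.exp (-(mu * x))) atTop (𝓝 0) := by
        simpa [neg_mul] using tendsto_rpow_mul_exp_neg_mul_atTop_nhds_zero (1 - a) mu hmu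
      have T := ((t1.sub t2).const_mul (1 - a)⁻¹)
      rw [show (1 - a)⁻¹ * ((0:ℝ) - 0) = 0 by ring] at T
      exact T.congr (fun x => by ring)
  have jval : ∫ x in Set.Ioi (0:ℝ), (Real.exp (-(lam * x)) - Real.exp (-(mu * x))) * x ^ (-a)
      = (1 - a)⁻¹ * (lam * ((1 / lam) ^ (2 - a) * Real.Gamma (2 - a))
          - mu * ((1 / mu) ^ (2 - a) * Real.Gamma (2 - a))) := by
    rw [integral_add hIH1 hI2] at stepH
    have hA : ∫ x in Set.Ioi (0:ℝ), (mu * Real.exp (-(mu * x)) - lam * Real.exp (-(lam * x)))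
        * x ^ (1 - a) * (1 - a)⁻¹
        = (1 - a)⁻¹ * (mu * ((1 / mu) ^ (2 - a) * Real.Gamma (2 - a))
            - lam * ((1 / lam) ^ (2 - a) * Real.Gamma (2 - a))) := by
      rw [setIntegral_congr_fun measurableSet_Ioi
        (g := fun x : ℝ => mu * (1 - a)⁻¹ * (x ^ (1 - a) * Real.exp (-(mu * x)))
          - lam * (1 - a)⁻¹ * (x ^ (1 - a) * Real.exp (-(lam * x))))
        (fun x hx => by ring)]
      rw [integral_sub ((hI3m.const_mul _)) ((hI3l.const_mul _)),
        integral_const_mul, integral_const_mul, KL, KM]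
      ring
    rw [hA] at stepH
    linarith
  -- FTC for G
  have stepG : ∫ x in Set.Ioi (0:ℝ),
      (((mu - lam) * x * Real.exp (-(lam * x)) - Real.exp (-(lam * x))
          + Real.exp (-(mu * x))) * x ^ (-a - 1)
        - a⁻¹ * ((mu * Real.exp (-(lam * x)) - lam * (mu - lam) * x * Real.exp (-(lam * x))
          - mu * Real.exp (-(mu * x))) * x ^ (-a))) = 0 := by
    refine ftc_aux ?_ ?_ (fun x hx => hasDerivAt_G a lam mu ha0 hx)
      (hI1.sub (hIs.const_mul a⁻¹)) ?_
    · simp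
    · refine contWithin_of_bound (C := |(-a)⁻¹| * (mu - lam) ^ 2)
        (show (0:ℝ) < 2 - a by linarith) (by simp) ?_
      intro x hx
      rw [Set.mem_Ioi] at hx
      rw [abs_mul, abs_mul, abs_of_pos (Real.rpow_pos_of_pos hx _)]
      calc |(-a)⁻¹| * (|(mu - lam) * x * Real.exp (-(lam * x)) - Real.exp (-(lam * x))
            + Real.exp (-(mu * x))| * x ^ (-a))
          ≤ |(-a)⁻¹| * (((mu - lam) ^ 2 * x ^ 2 * Real.exp (-(m * x))) * x ^ (-a)) := by
            refine mul_le_mul_of_nonneg_left (mul_le_mul_of_nonneg_right (ubound lam mu hx)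
              (Real.rpow_pos_of_pos hx _).le) (abs_nonneg _)
        _ ≤ |(-a)⁻¹| * (((mu - lam) ^ 2 * x ^ 2 * 1) * x ^ (-a)) := by
            refine mul_le_mul_of_nonneg_left (mul_le_mul_of_nonneg_right
              (mul_le_mul_of_nonneg_left (hexp1 hx) (by positivity))
              (Real.rpow_pos_of_pos hx _).le) (abs_nonneg _)
        _ = |(-a)⁻¹| * (mu - lam) ^ 2 * x ^ (2 - a) := by
            rw [← hxp3 hx]; ring
    · have t1 : Tendsto (fun x : ℝ => x ^ (1 - a) * Real.exp (-(lam * x))) atTop (𝓝 0) := by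
        simpa [neg_mul] using tendsto_rpow_mul_exp_neg_mul_atTop_nhds_zero (1 - a) lam hlam
      have t2 : Tendsto (fun x : ℝ => x ^ (-a) * Real.exp (-(lam * x))) atTop (𝓝 0) := by
        simpa [neg_mul] using tendsto_rpow_mul_exp_neg_mul_atTop_nhds_zero (-a) lam hlam
      have t3 : Tendsto (fun x : ℝ => x ^ (-a) * Real.exp (-(mu * x))) atTop (𝓝 0) := by
        simpa [neg_mul] using tendsto_rpow_mul_exp_neg_mul_atTop_nhds_zero (-a) mu hmu
      have T := (((t1.const_mul (mu - lam)).sub t2).add t3).const_mul (-a)⁻¹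
      rw [show (-a)⁻¹ * ((mu - lam) * (0:ℝ) - 0 + 0) = 0 by ring] at T
      refine Tendsto.congr' ?_ T
      filter_upwards [eventually_gt_atTop (0:ℝ)] with x hx
      rw [← hxp2 hx]
      ring
  have sval : ∫ x in Set.Ioi (0:ℝ), (mu * Real.exp (-(lam * x))
      - lam * (mu - lam) * x * Real.exp (-(lam * x)) - mu * Real.exp (-(mu * x))) * x ^ (-a)
      = mu * ((1 - a)⁻¹ * (lam * ((1 / lam) ^ (2 - a) * Real.Gamma (2 - a))
          - mu * ((1 / mu) ^ (2 - a) * Real.Gamma (2 - a))))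
        - lam * (mu - lam) * ((1 / lam) ^ (2 - a) * Real.Gamma (2 - a)) := by
    rw [setIntegral_congr_fun measurableSet_Ioi
      (g := fun x : ℝ => mu * ((Real.exp (-(lam * x)) - Real.exp (-(mu * x))) * x ^ (-a))
        - lam * (mu - lam) * (x ^ (1 - a) * Real.exp (-(lam * x))))
      (fun x hx => by simp only; rw [← hxp2 hx]; ring)]
    rw [integral_sub (hI2.const_mul _) (hI3l.const_mul _),
      integral_const_mul, integral_const_mul, jval, KL]
  have Ival : ∫ x in Set.Ioi (0:ℝ), ((mu - lam) * x * Real.exp (-(lam * x))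
      - Real.exp (-(lam * x)) + Real.exp (-(mu * x))) * x ^ (-a - 1)
      = a⁻¹ * (mu * ((1 - a)⁻¹ * (lam * ((1 / lam) ^ (2 - a) * Real.Gamma (2 - a))
          - mu * ((1 / mu) ^ (2 - a) * Real.Gamma (2 - a))))
        - lam * (mu - lam) * ((1 / lam) ^ (2 - a) * Real.Gamma (2 - a))) := by
    rw [integral_sub hI1 (hIs.const_mul _), integral_const_mul, sval] at stepG
    linarith [stepG]
  -- final algebra
  rw [show (-1 : ℝ) - a = -a - 1 by ring, Ival]
  have hGamma2 : Real.Gamma (2 - a) = (1 - a) * (-a) * Real.Gamma (-a) := by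
    have g1 : Real.Gamma (-a + 1) = -a * Real.Gamma (-a) :=
      Real.Gamma_add_one (neg_ne_zero.mpr ha0)
    have g2 : Real.Gamma (-a + 1 + 1) = (-a + 1) * Real.Gamma (-a + 1) :=
      Real.Gamma_add_one (by intro h; apply ha1; linarith)
    rw [show (2:ℝ) - a = -a + 1 + 1 by ring, g2, g1]
    ring
  have hpl : (1 / lam) ^ (2 - a) = lam ^ (a - 2) := by
    rw [one_div, ← Real.rpow_neg_one lam, ← Real.rpow_mul hlam.le]
    ring_nf
  have hpm : (1 / mu) ^ (2 - a) = mu ^ (a - 2) := by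
    rw [one_div, ← Real.rpow_neg_one mu, ← Real.rpow_mul hmu.le]
    ring_nf
  rw [hGamma2, hpl, hpm, rpow_shift2 hlam a, rpow_shift1 hlam a, rpow_shift2 hmu a]
  field_simp
  ring
end

section
/- Let a₊, a₋ ∈ (0,2) with a₊ ≠ 1 and a₋ ≠ 1, let C₊, C₋ > 0, let λ₊, λ₋, λ̃₊, λ̃₋ > 0, and let α ∈ (-1,1) with β = (1-α)/2. Then ∫_0^∞ (β·e^{-λ₊x} + (1-β)·e^{-λ̃₊x} - e^{-(βλ₊+(1-β)λ̃₊)x})·C₊·x^{-1-a₊} dx + ∫_0^∞ (β·e^{-λ₋y} + (1-β)·e^{-λ̃₋y} - e^{-(βλ₋+(1-β)λ̃₋)y})·C₋·y^{-1-a₋} dy = C₊·Γ(-a₊)·(β·λ₊^{a₊} + (1-β)·λ̃₊^{a₊} - (βλ₊+(1-β)λ̃₊)^{a₊}) + C₋·Γ(-a₋)·(β·λ₋^{a₋} + (1-β)·λ̃₋^{a₋} - (βλ₋+(1-β)λ̃₋)^{a₋}), where Γ denotes the real Gamma function and powers are real powers. Consequently, the α-divergence between two generalized tempered stable processes with these parameters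 and horizon T > 0 equals (4/(1-α²))·(1 - exp(-T·[C₊Γ(-a₊)(βλ₊^{a₊}+(1-β)λ̃₊^{a₊}-(βλ₊+(1-β)λ̃₊)^{a₊}) + C₋Γ(-a₋)(βλ₋^{a₋}+(1-β)λ̃₋^{a₋}-(βλ₋+(1-β)λ̃₋)^{a₋})])). -/
open Real Filter Topology MeasureTheory

section GTSAux

open Set

/-- FTC on `(0, ∞)` with limits at both endpoints. -/
lemma ftc_Ioi_zero {G G' : ℝ → ℝ} {L : ℝ}
    (hderiv : ∀ x ∈ Set.Ioi (0:ℝ), HasDerivAt G (G' x) x)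
    (hint : IntegrableOn G' (Set.Ioi 0))
    (h0 : Tendsto G (𝓝[>] (0:ℝ)) (𝓝 L))
    (htop : Tendsto G atTop (𝓝 (0:ℝ))) :
    ∫ x in Set.Ioi (0:ℝ), G' x = -L := by
  have key : ∀ ε : ℝ, 0 < ε → ∫ x in Set.Ioi ε, G' x = 0 - G ε := by
    intro ε hε
    exact integral_Ioi_of_hasDerivAt_of_tendsto
      (hderiv ε hε).continuousAt.continuousWithinAt
      (fun x hx => hderiv x (lt_trans hε hx))
      (hint.mono_set (Set.Ioi_subset_Ioi hε.le)) htop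
  have hpos : ∀ n : ℕ, (0:ℝ) < ((n:ℝ)+1)⁻¹ := fun n => by positivity
  have hmono : Monotone (fun n : ℕ => Set.Ioi (((n:ℝ)+1)⁻¹)) := by
    intro n m hnm
    apply Set.Ioi_subset_Ioi
    apply inv_anti₀ (by positivity)
    have : (n:ℝ) ≤ m := Nat.cast_le.2 hnm
    linarith
  have hunion : (⋃ n : ℕ, Set.Ioi (((n:ℝ)+1)⁻¹)) = Set.Ioi (0:ℝ) := by
    ext x
    simp only [Set.mem_iUnion, Set.mem_Ioi]
    constructor
    · rintro ⟨n, hn⟩; exact lt_trans (hpos n) hn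
    · intro hx
      obtain ⟨n, hn⟩ := exists_nat_gt x⁻¹
      exact ⟨n, by rw [inv_lt_comm₀ (by positivity) hx]; linarith⟩
  have T1 : Tendsto (fun n : ℕ => ∫ x in Set.Ioi (((n:ℝ)+1)⁻¹), G' x) atTop
      (𝓝 (∫ x in Set.Ioi (0:ℝ), G' x)) := by
    have := tendsto_setIntegral_of_monotone (fun n : ℕ => measurableSet_Ioi) hmono
      (by rw [hunion]; exact hint)
    rwa [hunion] at this
  have Tseq : Tendsto (fun n : ℕ => ((n:ℝ)+1)⁻¹) atTop (𝓝[>] (0:ℝ)) := by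
    rw [tendsto_nhdsWithin_iff]
    constructor
    · simpa [one_div] using tendsto_one_div_add_atTop_nhds_zero_nat (𝕜 := ℝ)
    · exact Eventually.of_forall fun n => hpos n
  have T2 : Tendsto (fun n : ℕ => ∫ x in Set.Ioi (((n:ℝ)+1)⁻¹), G' x) atTop (𝓝 (0 - L)) := by
    have : Tendsto (fun n : ℕ => 0 - G (((n:ℝ)+1)⁻¹)) atTop (𝓝 (0 - L)) :=
      tendsto_const_nhds.sub (h0.comp Tseq)
    exact this.congr fun n => (key _ (hpos n)).symm
  have := tendsto_nhds_unique T1 T2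
  linarith

lemma exp_lb (t : ℝ) : 0 ≤ Real.exp (-t) - 1 + t := by
  have := Real.add_one_le_exp (-t); linarith

lemma exp_quad {t : ℝ} (ht : 0 ≤ t) : Real.exp (-t) - 1 + t ≤ t ^ 2 / 2 := by
  have H : ∀ x : ℝ, HasDerivAt (fun u : ℝ => u ^ 2 / 2 - (Real.exp (-u) - 1 + u))
      (x - (Real.exp (-x) * (-1) + 1)) x := by
    intro x
    have h1 : HasDerivAt (fun u : ℝ => u ^ 2 / 2) x x := by
      simpa using (hasDerivAt_pow 2 x).div_const 2
    have h2 : HasDerivAt (fun u : ℝ => Real.exp (-u)) (Real.exp (-x) * (-1)) x := by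
      simpa [Function.comp_def] using (Real.hasDerivAt_exp (-x)).comp x ((hasDerivAt_id x).neg)
    simpa [Pi.sub_def, Pi.add_def] using h1.sub (((h2.sub_const 1).add (hasDerivAt_id x)))
  have hmono : Monotone (fun u : ℝ => u ^ 2 / 2 - (Real.exp (-u) - 1 + u)) := by
    apply monotone_of_deriv_nonneg
    · exact fun x => (H x).differentiableAt
    · intro x
      rw [(H x).deriv]
      have := Real.add_one_le_exp (-x)
      linarith
  have := hmono ht
  simp only [ne_eq] at this
  norm_num at this
  linarith [this]

lemma integrableExpRpow {l p : ℝ} (hl : 0 < l) (hp : (-1:ℝ) < p) :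
    IntegrableOn (fun x => Real.exp (-(l*x)) * x ^ p) (Set.Ioi (0:ℝ)) := by
  have := integrableOn_rpow_mul_exp_neg_mul_rpow hp one_pos hl
  refine this.congr_fun (fun x hx => ?_) measurableSet_Ioi
  beta_reduce
  rw [Real.rpow_one, neg_mul, mul_comm]

lemma integrableA {a l : ℝ} (ha0 : 0 < a) (ha1 : a < 1) (hl : 0 < l) :
    IntegrableOn (fun x => (Real.exp (-(l*x)) - 1) * x ^ (-1-a)) (Set.Ioi (0:ℝ)) := by
  have hmeas : AEStronglyMeasurable (fun x : ℝ => (Real.exp (-(l*x)) - 1) * x ^ (-1-a)) volume := by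
    apply Measurable.aestronglyMeasurable
    have m1 : Measurable fun x : ℝ => Real.exp (-(l*x)) := by fun_prop
    have m2 : Measurable fun x : ℝ => x ^ (-1-a) := by fun_prop
    exact (m1.sub measurable_const).mul m2
  rw [← Set.Ioc_union_Ioi_eq_Ioi (zero_le_one (α := ℝ))]
  apply MeasureTheory.IntegrableOn.union
  · have hg : IntegrableOn (fun x : ℝ => l * x ^ (-a)) (Set.Ioc (0:ℝ) 1) := by
      have := (intervalIntegral.intervalIntegrable_rpow' (a := 0) (b := 1)
        (show (-1:ℝ) < -a by linarith))
      rw [intervalIntegrable_iff_integrableOn_Ioc_of_le zero_le_one] at this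
      exact this.const_mul l
    refine hg.mono' hmeas.restrict ?_
    filter_upwards [ae_restrict_mem measurableSet_Ioc] with x hx
    have hx0 : 0 < x := hx.1
    have he : Real.exp (-(l*x)) ≤ 1 := Real.exp_le_one_iff.2 (by nlinarith)
    have hlb : 1 - Real.exp (-(l*x)) ≤ l * x := by
      have := Real.add_one_le_exp (-(l*x)); linarith
    rw [norm_mul, Real.norm_eq_abs, Real.norm_eq_abs,
      abs_of_nonneg (Real.rpow_nonneg hx0.le _), abs_of_nonpos (by linarith)]
    have hxp : x * x ^ (-1-a) = x ^ (-a) := by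
      nth_rewrite 1 [← Real.rpow_one x]
      rw [← Real.rpow_add hx0, show (1 + (-1-a)) = -a from by ring]
    calc -(Real.exp (-(l*x)) - 1) * x ^ (-1-a) ≤ (l * x) * x ^ (-1-a) := by
          apply mul_le_mul_of_nonneg_right (by linarith) (Real.rpow_nonneg hx0.le _)
      _ = l * x ^ (-a) := by rw [mul_assoc, hxp]
  · have hg : IntegrableOn (fun x : ℝ => x ^ (-1-a)) (Set.Ioi (1:ℝ)) :=
      integrableOn_Ioi_rpow_of_lt (by linarith) one_pos
    refine hg.mono' hmeas.restrict ?_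
    filter_upwards [ae_restrict_mem measurableSet_Ioi] with x hx
    have hx0 : (0:ℝ) < x := lt_trans one_pos hx
    have he : Real.exp (-(l*x)) ≤ 1 := Real.exp_le_one_iff.2 (by nlinarith)
    have he0 : 0 < Real.exp (-(l*x)) := Real.exp_pos _
    rw [norm_mul, Real.norm_eq_abs, Real.norm_eq_abs,
      abs_of_nonneg (Real.rpow_nonneg hx0.le _), abs_of_nonpos (by linarith)]
    nlinarith [Real.rpow_nonneg hx0.le (-1-a)]

lemma integrableB {a l : ℝ} (ha0 : 1 < a) (ha2 : a < 2) (hl : 0 < l) :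
    IntegrableOn (fun x => (Real.exp (-(l*x)) - 1 + l*x) * x ^ (-1-a)) (Set.Ioi (0:ℝ)) := by
  have hmeas : AEStronglyMeasurable
      (fun x : ℝ => (Real.exp (-(l*x)) - 1 + l*x) * x ^ (-1-a)) volume := by
    apply Measurable.aestronglyMeasurable
    have m1 : Measurable fun x : ℝ => Real.exp (-(l*x)) := by fun_prop
    have m2 : Measurable fun x : ℝ => x ^ (-1-a) := by fun_prop
    exact ((m1.sub measurable_const).add (measurable_const.mul measurable_id)).mul m2
  rw [← Set.Ioc_union_Ioi_eq_Ioi (zero_le_one (α := ℝ))]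
  apply MeasureTheory.IntegrableOn.union
  · have hg : IntegrableOn (fun x : ℝ => l^2/2 * x ^ (1-a)) (Set.Ioc (0:ℝ) 1) := by
      have := (intervalIntegral.intervalIntegrable_rpow' (a := 0) (b := 1)
        (show (-1:ℝ) < 1-a by linarith))
      rw [intervalIntegrable_iff_integrableOn_Ioc_of_le zero_le_one] at this
      exact this.const_mul _
    refine hg.mono' hmeas.restrict ?_
    filter_upwards [ae_restrict_mem measurableSet_Ioc] with x hx
    have hx0 : 0 < x := hx.1
    have h0 : 0 ≤ Real.exp (-(l*x)) - 1 + l*x := exp_lb (l*x)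
    have h1 : Real.exp (-(l*x)) - 1 + l*x ≤ (l*x)^2/2 := exp_quad (by positivity)
    rw [norm_mul, Real.norm_eq_abs, Real.norm_eq_abs,
      abs_of_nonneg (Real.rpow_nonneg hx0.le _), abs_of_nonneg h0]
    have hxp : x^2 * x ^ (-1-a) = x ^ (1-a) := by
      rw [← Real.rpow_natCast x 2, ← Real.rpow_add hx0,
        show ((2:ℕ):ℝ) + (-1-a) = 1-a from by push_cast; ring]
    calc (Real.exp (-(l*x)) - 1 + l*x) * x ^ (-1-a) ≤ ((l*x)^2/2) * x ^ (-1-a) := by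
          apply mul_le_mul_of_nonneg_right h1 (Real.rpow_nonneg hx0.le _)
      _ = l^2/2 * x ^ (1-a) := by rw [mul_pow, ← hxp]; ring
  · have hg : IntegrableOn (fun x : ℝ => (1+l) * x ^ (-a)) (Set.Ioi (1:ℝ)) :=
      (integrableOn_Ioi_rpow_of_lt (by linarith) one_pos).const_mul _
    refine hg.mono' hmeas.restrict ?_
    filter_upwards [ae_restrict_mem measurableSet_Ioi] with x hx
    have hx1 : (1:ℝ) < x := hx
    have hx0 : (0:ℝ) < x := lt_trans one_pos hx1
    have h0 : 0 ≤ Real.exp (-(l*x)) - 1 + l*x := exp_lb (l*x)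
    have he : Real.exp (-(l*x)) ≤ 1 := Real.exp_le_one_iff.2 (by nlinarith)
    rw [norm_mul, Real.norm_eq_abs, Real.norm_eq_abs,
      abs_of_nonneg (Real.rpow_nonneg hx0.le _), abs_of_nonneg h0]
    have hxp : x * x ^ (-1-a) = x ^ (-a) := by
      nth_rewrite 1 [← Real.rpow_one x]
      rw [← Real.rpow_add hx0, show (1 + (-1-a)) = -a from by ring]
    calc (Real.exp (-(l*x)) - 1 + l*x) * x ^ (-1-a) ≤ ((1+l)*x) * x ^ (-1-a) := by
          apply mul_le_mul_of_nonneg_right (by nlinarith) (Real.rpow_nonneg hx0.le _)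
      _ = (1+l) * x ^ (-a) := by rw [mul_assoc, hxp]

lemma intA_s6 {a l : ℝ} (ha0 : 0 < a) (ha1 : a < 1) (hl : 0 < l) :
    ∫ x in Set.Ioi (0:ℝ), (Real.exp (-(l*x)) - 1) * x ^ (-1-a)
      = Real.Gamma (-a) * l ^ a := by
  have ha : a ≠ 0 := ha0.ne'
  set f : ℝ → ℝ := fun x => (Real.exp (-(l*x)) - 1) * x ^ (-1-a) with hf
  set g : ℝ → ℝ := fun x => Real.exp (-(l*x)) * x ^ (-a) with hg
  set G : ℝ → ℝ := fun x => -(1/a) * ((Real.exp (-(l*x)) - 1) * x ^ (-a)) with hG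
  have hfi : IntegrableOn f (Set.Ioi 0) := integrableA ha0 ha1 hl
  have hgi : IntegrableOn g (Set.Ioi 0) := integrableExpRpow hl (by linarith)
  have hexp : ∀ x : ℝ, HasDerivAt (fun x : ℝ => Real.exp (-(l*x)))
      (Real.exp (-(l*x)) * (-l)) x := by
    intro x
    simpa [Function.comp_def, Pi.neg_def] using (Real.hasDerivAt_exp (-(l*x))).comp x (((hasDerivAt_id x).const_mul l).neg)
  have hderiv : ∀ x ∈ Set.Ioi (0:ℝ), HasDerivAt G (f x + (l/a) * g x) x := by
    intro x hx
    have hx0 : (0:ℝ) < x := hx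
    have h2 : HasDerivAt (fun x : ℝ => x ^ (-a)) ((-a) * x ^ (-a-1)) x :=
      Real.hasDerivAt_rpow_const (Or.inl hx0.ne')
    have h3 := (((hexp x).sub_const 1).mul h2).const_mul (-(1/a))
    convert h3 using 1
    case e'_4 => rfl
    case e'_5 => rfl
    case e'_8 => rfl
    rw [show (-a-1 : ℝ) = -1-a from by ring]
    simp only [hf, hg]
    field_simp
    ring
  have hexp1 : ∀ x : ℝ, 0 ≤ x → Real.exp (-(l*x)) ≤ 1 :=
    fun x hx => Real.exp_le_one_iff.2 (by nlinarith)
  have h0 : Tendsto G (𝓝[>] (0:ℝ)) (𝓝 0) := by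
    have hb : Tendsto (fun x : ℝ => (l/a) * x ^ (1-a)) (𝓝[>] (0:ℝ)) (𝓝 0) := by
      have h := (Real.continuousAt_rpow_const 0 (1-a) (Or.inr (by linarith))).tendsto
      rw [Real.zero_rpow (by linarith : (1:ℝ)-a ≠ 0)] at h
      have h2 : Tendsto (fun x : ℝ => (l/a) * x ^ (1-a)) (𝓝[>] (0:ℝ)) (𝓝 ((l/a) * 0)) :=
        (h.const_mul (l/a)).mono_left nhdsWithin_le_nhds
      simpa using h2
    apply squeeze_zero_norm' _ hb
    filter_upwards [self_mem_nhdsWithin] with x hx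
    have hx0 : (0:ℝ) < x := hx
    have he : Real.exp (-(l*x)) ≤ 1 := hexp1 x hx0.le
    have hlb : 1 - Real.exp (-(l*x)) ≤ l * x := by
      have := Real.add_one_le_exp (-(l*x)); linarith
    have hxp : x * x ^ (-a) = x ^ (1-a) := by
      nth_rewrite 1 [← Real.rpow_one x]
      rw [← Real.rpow_add hx0, show (1 + -a : ℝ) = 1-a from by ring]
    rw [hG, norm_mul, norm_mul, Real.norm_eq_abs, Real.norm_eq_abs, Real.norm_eq_abs,
      abs_of_nonneg (Real.rpow_nonneg hx0.le _), abs_neg, abs_of_pos (by positivity),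
      abs_of_nonpos (by linarith)]
    calc 1/a * (-(Real.exp (-(l*x)) - 1) * x ^ (-a))
        ≤ 1/a * ((l*x) * x ^ (-a)) := by
          apply mul_le_mul_of_nonneg_left _ (by positivity)
          apply mul_le_mul_of_nonneg_right (by linarith) (Real.rpow_nonneg hx0.le _)
      _ = l/a * x ^ (1-a) := by rw [mul_assoc, hxp]; ring
  have htop : Tendsto G atTop (𝓝 (0:ℝ)) := by
    have hb : Tendsto (fun x : ℝ => (1/a) * x ^ (-a)) atTop (𝓝 0) := by
      simpa using (tendsto_rpow_neg_atTop ha0).const_mul (1/a)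
    apply squeeze_zero_norm' _ hb
    filter_upwards [eventually_gt_atTop 0] with x hx0
    have he : Real.exp (-(l*x)) ≤ 1 := hexp1 x hx0.le
    rw [hG, norm_mul, norm_mul, Real.norm_eq_abs, Real.norm_eq_abs, Real.norm_eq_abs,
      abs_of_nonneg (Real.rpow_nonneg hx0.le _), abs_neg, abs_of_pos (by positivity),
      abs_of_nonpos (by linarith)]
    have : -(Real.exp (-(l*x)) - 1) ≤ 1 := by
      have := (Real.exp_pos (-(l*x))).le; linarith
    have hrp := Real.rpow_nonneg hx0.le (-a)
    have h1a : (0:ℝ) < 1/a := by positivity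
    have h5 := mul_le_mul_of_nonneg_right this hrp
    rw [one_mul] at h5
    exact mul_le_mul_of_nonneg_left h5 h1a.le
  have hzero : ∫ x in Set.Ioi (0:ℝ), (f x + (l/a) * g x) = -0 :=
    ftc_Ioi_zero hderiv (hfi.add (hgi.const_mul _)) h0 htop
  rw [integral_add hfi (hgi.const_mul _), MeasureTheory.integral_const_mul, neg_zero] at hzero
  have hgval : ∫ x in Set.Ioi (0:ℝ), g x = (1/l) ^ (1-a) * Real.Gamma (1-a) := by
    rw [← integral_rpow_mul_exp_neg_mul_Ioi (by linarith : (0:ℝ) < 1-a) hl]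
    apply setIntegral_congr_fun measurableSet_Ioi
    intro x hx
    rw [hg, show (1-a-1 : ℝ) = -a from by ring]
    ring
  have e3 : (1/l : ℝ) ^ (1-a) = l ^ (a-1) := by
    rw [one_div, Real.inv_rpow hl.le, ← Real.rpow_neg hl.le,
      show -(1-a) = a-1 from by ring]
  have e4 : l ^ (a-1) * l = l ^ a := by
    nth_rewrite 2 [← Real.rpow_one l]
    rw [← Real.rpow_add hl, show (a-1+1 : ℝ) = a from by ring]
  have e5 : Real.Gamma (1-a) = -a * Real.Gamma (-a) := by
    rw [show (1-a : ℝ) = -a + 1 from by ring, Real.Gamma_add_one (by simpa using ha)]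
  rw [hgval, e3, e5] at hzero
  have : (l/a) * (l ^ (a-1) * (-a * Real.Gamma (-a))) = - (Real.Gamma (-a) * l ^ a) := by
    rw [← e4]; field_simp
  linarith [hzero, this]

lemma intB {a l : ℝ} (ha1 : 1 < a) (ha2 : a < 2) (hl : 0 < l) :
    ∫ x in Set.Ioi (0:ℝ), (Real.exp (-(l*x)) - 1 + l*x) * x ^ (-1-a)
      = Real.Gamma (-a) * l ^ a := by
  have ha0 : (0:ℝ) < a := by linarith
  have ha : a ≠ 0 := ha0.ne'
  set f : ℝ → ℝ := fun x => (Real.exp (-(l*x)) - 1 + l*x) * x ^ (-1-a) with hf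
  set g : ℝ → ℝ := fun x => (Real.exp (-(l*x)) - 1) * x ^ (-1-(a-1)) with hg
  set G : ℝ → ℝ := fun x => -(1/a) * ((Real.exp (-(l*x)) - 1 + l*x) * x ^ (-a)) with hG
  have hfi : IntegrableOn f (Set.Ioi 0) := integrableB ha1 ha2 hl
  have hgi : IntegrableOn g (Set.Ioi 0) :=
    integrableA (by linarith) (by linarith) hl
  have hexp : ∀ x : ℝ, HasDerivAt (fun x : ℝ => Real.exp (-(l*x)))
      (Real.exp (-(l*x)) * (-l)) x := by
    intro x
    simpa [Function.comp_def, Pi.neg_def] using (Real.hasDerivAt_exp (-(l*x))).comp x (((hasDerivAt_id x).const_mul l).neg)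
  have hderiv : ∀ x ∈ Set.Ioi (0:ℝ), HasDerivAt G (f x + (l/a) * g x) x := by
    intro x hx
    have hx0 : (0:ℝ) < x := hx
    have h1 : HasDerivAt (fun x : ℝ => Real.exp (-(l*x)) - 1 + l*x)
        (Real.exp (-(l*x)) * (-l) + l) x := by
      have := ((hexp x).sub_const 1).add ((hasDerivAt_id x).const_mul l)
      simpa [Pi.add_def] using this
    have h2 : HasDerivAt (fun x : ℝ => x ^ (-a)) ((-a) * x ^ (-a-1)) x :=
      Real.hasDerivAt_rpow_const (Or.inl hx0.ne')
    have h3 := ((h1.mul h2)).const_mul (-(1/a))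
    convert h3 using 1
    case e'_4 => rfl
    case e'_5 => rfl
    case e'_8 => rfl
    rw [show (-a-1 : ℝ) = -1-a from by ring]
    simp only [hf, hg]
    rw [show (-1-(a-1) : ℝ) = -a from by ring]
    field_simp
    ring
  have hexp1 : ∀ x : ℝ, 0 ≤ x → Real.exp (-(l*x)) ≤ 1 :=
    fun x hx => Real.exp_le_one_iff.2 (by nlinarith)
  have h0 : Tendsto G (𝓝[>] (0:ℝ)) (𝓝 0) := by
    have hb : Tendsto (fun x : ℝ => (l^2/(2*a)) * x ^ (2-a)) (𝓝[>] (0:ℝ)) (𝓝 0) := by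
      have h := (Real.continuousAt_rpow_const 0 (2-a) (Or.inr (by linarith))).tendsto
      rw [Real.zero_rpow (by linarith : (2:ℝ)-a ≠ 0)] at h
      have h2 : Tendsto (fun x : ℝ => (l^2/(2*a)) * x ^ (2-a)) (𝓝[>] (0:ℝ))
          (𝓝 ((l^2/(2*a)) * 0)) :=
        (h.const_mul _).mono_left nhdsWithin_le_nhds
      simpa using h2
    apply squeeze_zero_norm' _ hb
    filter_upwards [self_mem_nhdsWithin] with x hx
    have hx0 : (0:ℝ) < x := hx
    have hub : Real.exp (-(l*x)) - 1 + l*x ≤ (l*x)^2/2 := exp_quad (by positivity)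
    have hlb : 0 ≤ Real.exp (-(l*x)) - 1 + l*x := exp_lb _
    have hxp : x^2 * x ^ (-a) = x ^ (2-a) := by
      rw [← Real.rpow_natCast x 2, ← Real.rpow_add hx0,
        show ((2:ℕ):ℝ) + (-a) = 2-a from by push_cast; ring]
    rw [hG, norm_mul, norm_mul, Real.norm_eq_abs, Real.norm_eq_abs, Real.norm_eq_abs,
      abs_of_nonneg (Real.rpow_nonneg hx0.le _), abs_neg, abs_of_pos (by positivity),
      abs_of_nonneg hlb]
    calc 1/a * ((Real.exp (-(l*x)) - 1 + l*x) * x ^ (-a))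
        ≤ 1/a * (((l*x)^2/2) * x ^ (-a)) := by
          apply mul_le_mul_of_nonneg_left _ (by positivity)
          exact mul_le_mul_of_nonneg_right hub (Real.rpow_nonneg hx0.le _)
      _ = l^2/(2*a) * x ^ (2-a) := by rw [mul_pow, ← hxp]; ring
  have htop : Tendsto G atTop (𝓝 (0:ℝ)) := by
    have hb : Tendsto (fun x : ℝ => (l/a) * x ^ (1-a)) atTop (𝓝 0) := by
      have := (tendsto_rpow_neg_atTop (show (0:ℝ) < a-1 by linarith)).const_mul (l/a)
      simp only [show -(a-1) = 1-a from by ring] at this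
      simpa using this
    apply squeeze_zero_norm' _ hb
    filter_upwards [eventually_gt_atTop 0] with x hx0
    have he : Real.exp (-(l*x)) ≤ 1 := hexp1 x hx0.le
    have hlb : 0 ≤ Real.exp (-(l*x)) - 1 + l*x := exp_lb _
    have hub : Real.exp (-(l*x)) - 1 + l*x ≤ l*x := by linarith
    have hxp : x * x ^ (-a) = x ^ (1-a) := by
      nth_rewrite 1 [← Real.rpow_one x]
      rw [← Real.rpow_add hx0, show (1 + -a : ℝ) = 1-a from by ring]
    rw [hG, norm_mul, norm_mul, Real.norm_eq_abs, Real.norm_eq_abs, Real.norm_eq_abs,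
      abs_of_nonneg (Real.rpow_nonneg hx0.le _), abs_neg, abs_of_pos (by positivity),
      abs_of_nonneg hlb]
    calc 1/a * ((Real.exp (-(l*x)) - 1 + l*x) * x ^ (-a))
        ≤ 1/a * ((l*x) * x ^ (-a)) := by
          apply mul_le_mul_of_nonneg_left _ (by positivity)
          exact mul_le_mul_of_nonneg_right hub (Real.rpow_nonneg hx0.le _)
      _ = l/a * x ^ (1-a) := by rw [mul_assoc, hxp]; ring
  have hzero : ∫ x in Set.Ioi (0:ℝ), (f x + (l/a) * g x) = -0 :=
    ftc_Ioi_zero hderiv (hfi.add (hgi.const_mul _)) h0 htop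
  rw [integral_add hfi (hgi.const_mul _), MeasureTheory.integral_const_mul, neg_zero] at hzero
  have hgval : ∫ x in Set.Ioi (0:ℝ), g x = Real.Gamma (1-a) * l ^ (a-1) := by
    have := intA_s6 (show (0:ℝ) < a-1 by linarith) (show a-1 < 1 by linarith) hl
    rw [show -(a-1) = 1-a from by ring] at this
    exact this
  have e4 : l ^ (a-1) * l = l ^ a := by
    nth_rewrite 2 [← Real.rpow_one l]
    rw [← Real.rpow_add hl, show (a-1+1 : ℝ) = a from by ring]
  have e5 : Real.Gamma (1-a) = -a * Real.Gamma (-a) := by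
    rw [show (1-a : ℝ) = -a + 1 from by ring, Real.Gamma_add_one (by simpa using ha)]
  rw [hgval, e5] at hzero
  have halg : (l/a) * (-a * Real.Gamma (-a) * l ^ (a-1)) = - (Real.Gamma (-a) * l ^ a) := by
    rw [← e4]; field_simp
  linarith [hzero, halg]

lemma key_half {a l m b : ℝ} (ha : a ∈ Set.Ioo (0:ℝ) 2) (ha1 : a ≠ 1)
    (hl : 0 < l) (hm : 0 < m) (hb0 : 0 < b) (hb1 : b < 1) (C : ℝ) :
    ∫ x in Set.Ioi (0:ℝ),
        (b * Real.exp (-(l*x)) + (1-b) * Real.exp (-(m*x))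
          - Real.exp (-((b*l+(1-b)*m)*x))) * (C * x ^ (-1-a))
      = C * Real.Gamma (-a) * (b * l^a + (1-b) * m^a - (b*l+(1-b)*m)^a) := by
  have hν0 : 0 < b*l+(1-b)*m := by nlinarith
  rcases lt_or_gt_of_ne ha1 with hlt | hgt
  · have h1 := integrableA ha.1 hlt hl
    have h2 := integrableA ha.1 hlt hm
    have h3 := integrableA ha.1 hlt hν0
    have hpt : ∀ x : ℝ,
        (b * Real.exp (-(l*x)) + (1-b) * Real.exp (-(m*x))
          - Real.exp (-((b*l+(1-b)*m)*x))) * (C * x ^ (-1-a))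
        = C * ((b * ((Real.exp (-(l*x)) - 1) * x ^ (-1-a))
            + (1-b) * ((Real.exp (-(m*x)) - 1) * x ^ (-1-a)))
              - (Real.exp (-((b*l+(1-b)*m)*x)) - 1) * x ^ (-1-a)) :=
      fun x => by ring
    have hadd : Integrable
        (fun x : ℝ => b * ((Real.exp (-(l*x)) - 1) * x ^ (-1-a))
          + (1-b) * ((Real.exp (-(m*x)) - 1) * x ^ (-1-a)))
        (volume.restrict (Set.Ioi 0)) := (h1.const_mul b).add (h2.const_mul (1-b))
    simp_rw [hpt]
    rw [MeasureTheory.integral_const_mul,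
      integral_sub hadd h3,
      integral_add (h1.const_mul b) (h2.const_mul (1-b)),
      MeasureTheory.integral_const_mul, MeasureTheory.integral_const_mul,
      intA_s6 ha.1 hlt hl, intA_s6 ha.1 hlt hm, intA_s6 ha.1 hlt hν0]
    ring
  · have h1 := integrableB hgt ha.2 hl
    have h2 := integrableB hgt ha.2 hm
    have h3 := integrableB hgt ha.2 hν0
    have hpt : ∀ x : ℝ,
        (b * Real.exp (-(l*x)) + (1-b) * Real.exp (-(m*x))
          - Real.exp (-((b*l+(1-b)*m)*x))) * (C * x ^ (-1-a))
        = C * ((b * ((Real.exp (-(l*x)) - 1 + l*x) * x ^ (-1-a))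
            + (1-b) * ((Real.exp (-(m*x)) - 1 + m*x) * x ^ (-1-a)))
              - (Real.exp (-((b*l+(1-b)*m)*x)) - 1 + (b*l+(1-b)*m)*x) * x ^ (-1-a)) :=
      fun x => by ring
    have hadd : Integrable
        (fun x : ℝ => b * ((Real.exp (-(l*x)) - 1 + l*x) * x ^ (-1-a))
          + (1-b) * ((Real.exp (-(m*x)) - 1 + m*x) * x ^ (-1-a)))
        (volume.restrict (Set.Ioi 0)) := (h1.const_mul b).add (h2.const_mul (1-b))
    simp_rw [hpt]
    rw [MeasureTheory.integral_const_mul,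
      integral_sub hadd h3,
      integral_add (h1.const_mul b) (h2.const_mul (1-b)),
      MeasureTheory.integral_const_mul, MeasureTheory.integral_const_mul,
      intB hgt ha.2 hl, intB hgt ha.2 hm, intB hgt ha.2 hν0]
    ring

end GTSAux

/-- Evaluation of the α-divergence integral for two generalized tempered stable
processes, and the resulting closed form of the α-divergence
`(4/(1-α²))·(1 - exp(-T·[...]))` on horizon `T`. -/
theorem gts_alpha_divergence_eval
    (ap am Cp Cm lp lm ltp ltm T α β : ℝ)
    (hap : ap ∈ Set.Ioo (0 : ℝ) 2) (hap1 : ap ≠ 1)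
    (ham : am ∈ Set.Ioo (0 : ℝ) 2) (ham1 : am ≠ 1)
    (hCp : 0 < Cp) (hCm : 0 < Cm)
    (hlp : 0 < lp) (hlm : 0 < lm) (hltp : 0 < ltp) (hltm : 0 < ltm)
    (hα : α ∈ Set.Ioo (-1 : ℝ) 1) (hβ : β = (1 - α) / 2) (hT : 0 < T) :
    (∫ x in Set.Ioi (0 : ℝ),
        (β * Real.exp (-(lp * x)) + (1 - β) * Real.exp (-(ltp * x))
          - Real.exp (-((β * lp + (1 - β) * ltp) * x))) * (Cp * x ^ (-1 - ap)))
      + (∫ y in Set.Ioi (0 : ℝ),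
          (β * Real.exp (-(lm * y)) + (1 - β) * Real.exp (-(ltm * y))
            - Real.exp (-((β * lm + (1 - β) * ltm) * y))) * (Cm * y ^ (-1 - am)))
      = Cp * Real.Gamma (-ap) *
            (β * lp ^ ap + (1 - β) * ltp ^ ap - (β * lp + (1 - β) * ltp) ^ ap)
        + Cm * Real.Gamma (-am) *
            (β * lm ^ am + (1 - β) * ltm ^ am - (β * lm + (1 - β) * ltm) ^ am) ∧
    (4 / (1 - α ^ 2)) *
        (1 - Real.exp (-(T *
          ((∫ x in Set.Ioi (0 : ℝ),
              (β * Real.exp (-(lp * x)) + (1 - β) * Real.exp (-(ltp * x))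
                - Real.exp (-((β * lp + (1 - β) * ltp) * x))) * (Cp * x ^ (-1 - ap)))
            + (∫ y in Set.Ioi (0 : ℝ),
                (β * Real.exp (-(lm * y)) + (1 - β) * Real.exp (-(ltm * y))
                  - Real.exp (-((β * lm + (1 - β) * ltm) * y))) * (Cm * y ^ (-1 - am)))))))
      = (4 / (1 - α ^ 2)) *
          (1 - Real.exp (-(T *
            (Cp * Real.Gamma (-ap) *
                (β * lp ^ ap + (1 - β) * ltp ^ ap - (β * lp + (1 - β) * ltp) ^ ap)
              + Cm * Real.Gamma (-am) *
                  (β * lm ^ am + (1 - β) * ltm ^ am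
                    - (β * lm + (1 - β) * ltm) ^ am))))) := by
  have hb0 : 0 < β := by rw [hβ]; have := hα.2; linarith
  have hb1 : β < 1 := by rw [hβ]; have := hα.1; linarith
  have h1 := key_half hap hap1 hlp hltp hb0 hb1 Cp
  have h2 := key_half ham ham1 hlm hltm hb0 hb1 Cm
  refine ⟨by rw [h1, h2], by rw [h1, h2]⟩
end

section
/- Let a₊, a₋ ∈ (0,2) with a₊ ≠ 1 and a₋ ≠ 1, let C₊, C₋ > 0, and let λ₊, λ₋, λ̃₊, λ̃₋ > 0. Then ∫_0^∞ ((λ̃₊-λ₊)·x·e^{-λ₊x} - e^{-λ₊x} + e^{-λ̃₊x})·C₊·x^{-1-a₊} dx + ∫_0^∞ ((λ̃₋-λ₋)·y·e^{-λ₋y} - e^{-λ₋y} + e^{-λ̃₋y})·C₋·y^{-1-a₋} dy = C₊·Γ(-a₊)·((a₊-1)·λ₊^{a₊} - a₊·λ̃₊·λ₊^{a₊-1} + λ̃₊^{a₊}) + C₋·Γ(-a₋)·((a₋-1)·λ₋^{a₋} - a₋·λ̃₋·λ₋^{a₋-1} + λ̃₋^{a₋}), where Γ denotes the real Gamma function and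 powers are real powers. Consequently, the Kullback–Leibler divergence between two generalized tempered stable processes with these parameters and horizon T > 0 equals T times the right-hand side. -/
open Real Filter Topology MeasureTheory

noncomputable def Fg (l lt x : ℝ) : ℝ :=
  (lt - l) * x * Real.exp (-(l * x)) - Real.exp (-(l * x)) + Real.exp (-(lt * x))

noncomputable def Fg1 (l lt x : ℝ) : ℝ :=
  (lt - l) * Real.exp (-(l * x)) - l * (lt - l) * x * Real.exp (-(l * x))
    + l * Real.exp (-(l * x)) - lt * Real.exp (-(lt * x))

noncomputable def Fg2 (l lt x : ℝ) : ℝ :=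
  -(2 * l) * (lt - l) * Real.exp (-(l * x)) + l ^ 2 * (lt - l) * x * Real.exp (-(l * x))
    - l ^ 2 * Real.exp (-(l * x)) + lt ^ 2 * Real.exp (-(lt * x))

lemma hasDerivAt_exp_neg_mul (c x : ℝ) :
    HasDerivAt (fun x : ℝ => Real.exp (-(c * x))) (-c * Real.exp (-(c * x))) x := by
  have h : HasDerivAt (fun x : ℝ => -(c * x)) (-c) x := by
    exact (((hasDerivAt_id x).const_mul c).neg).congr_deriv (by ring)
  simpa [mul_comm] using h.exp

lemma hasDerivAt_Fg (l lt x : ℝ) : HasDerivAt (Fg l lt) (Fg1 l lt x) x := by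
  have h1 := hasDerivAt_exp_neg_mul l x
  have h2 := hasDerivAt_exp_neg_mul lt x
  have h3 : HasDerivAt (fun x : ℝ => (lt - l) * x) (lt - l) x := by
    simpa using (hasDerivAt_id x).const_mul (lt - l)
  have h := ((h3.mul h1).sub h1).add h2
  refine h.congr_deriv ?_
  unfold Fg1; ring

lemma hasDerivAt_Fg1 (l lt x : ℝ) : HasDerivAt (Fg1 l lt) (Fg2 l lt x) x := by
  have h1 := hasDerivAt_exp_neg_mul l x
  have h2 := hasDerivAt_exp_neg_mul lt x
  have h3 : HasDerivAt (fun x : ℝ => l * (lt - l) * x) (l * (lt - l)) x := by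
    simpa using (hasDerivAt_id x).const_mul (l * (lt - l))
  have h := (((h1.const_mul (lt - l)).sub (h3.mul h1)).add (h1.const_mul l)).sub
    (h2.const_mul lt)
  refine h.congr_deriv ?_
  unfold Fg2; ring

lemma Fg_zero (l lt : ℝ) : Fg l lt 0 = 0 := by simp [Fg]

lemma Fg1_zero (l lt : ℝ) : Fg1 l lt 0 = 0 := by simp [Fg1]

lemma continuous_Fg2 (l lt : ℝ) : Continuous (Fg2 l lt) := by
  unfold Fg2; fun_prop

lemma mul_exp_le_one {c x : ℝ} (hc : 0 < c) (hx : 0 ≤ x) : c * x * Real.exp (-(c * x)) ≤ 1 := by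
  have h := Real.add_one_le_exp (c * x)
  have he : 0 < Real.exp (c * x) := Real.exp_pos _
  rw [Real.exp_neg, mul_inv_le_iff₀ he, one_mul]
  linarith


noncomputable def Mb (l lt : ℝ) : ℝ := 3 * l * |lt - l| + l ^ 2 + lt ^ 2

lemma Mb_nonneg {l lt : ℝ} (hl : 0 < l) (hlt : 0 < lt) : 0 ≤ Mb l lt := by
  unfold Mb; positivity

lemma bound_Fg2 (l lt : ℝ) (hl : 0 < l) (hlt : 0 < lt) {x : ℝ} (hx : 0 ≤ x) :
    |Fg2 l lt x| ≤ Mb l lt := by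
  have hE1 : Real.exp (-(l * x)) ≤ 1 := Real.exp_le_one_iff.mpr (by nlinarith)
  have hE2 : Real.exp (-(lt * x)) ≤ 1 := Real.exp_le_one_iff.mpr (by nlinarith)
  have hxe : l * x * Real.exp (-(l * x)) ≤ 1 := mul_exp_le_one hl hx
  have hxe0 : 0 ≤ l * x * Real.exp (-(l * x)) := by positivity
  have h1 : |(-(2 * l) * (lt - l) * Real.exp (-(l * x)))| ≤ 2 * l * |lt - l| := by
    rw [abs_mul, abs_mul, abs_neg, abs_of_nonneg (by positivity : (0:ℝ) ≤ 2 * l), Real.abs_exp]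
    exact mul_le_of_le_one_right (by positivity) hE1
  have h2 : |l ^ 2 * (lt - l) * x * Real.exp (-(l * x))| ≤ l * |lt - l| := by
    rw [show l ^ 2 * (lt - l) * x * Real.exp (-(l * x))
        = (l * (lt - l)) * (l * x * Real.exp (-(l * x))) from by ring, abs_mul, abs_mul,
      abs_of_nonneg hl.le, abs_of_nonneg hxe0]
    exact mul_le_of_le_one_right (by positivity) hxe
  have h3 : |l ^ 2 * Real.exp (-(l * x))| ≤ l ^ 2 := by
    rw [abs_mul, abs_of_nonneg (by positivity : (0:ℝ) ≤ l ^ 2), Real.abs_exp]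
    exact mul_le_of_le_one_right (by positivity) hE1
  have h4 : |lt ^ 2 * Real.exp (-(lt * x))| ≤ lt ^ 2 := by
    rw [abs_mul, abs_of_nonneg (by positivity : (0:ℝ) ≤ lt ^ 2), Real.abs_exp]
    exact mul_le_of_le_one_right (by positivity) hE2
  have tri : |Fg2 l lt x| ≤ |(-(2 * l) * (lt - l) * Real.exp (-(l * x)))|
      + |l ^ 2 * (lt - l) * x * Real.exp (-(l * x))| + |l ^ 2 * Real.exp (-(l * x))|
      + |lt ^ 2 * Real.exp (-(lt * x))| := by
    unfold Fg2
    exact (abs_add_le _ _).trans (by gcongr; exact (abs_sub _ _).trans (by gcongr; exact abs_add_le _ _))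
  unfold Mb
  linarith

lemma bound_Fg1 (l lt : ℝ) (hl : 0 < l) (hlt : 0 < lt) {x : ℝ} (hx : 0 ≤ x) :
    |Fg1 l lt x| ≤ Mb l lt * x := by
  have hint : IntervalIntegrable (Fg2 l lt) volume 0 x := (continuous_Fg2 l lt).intervalIntegrable _ _
  have hftc : ∫ t in (0:ℝ)..x, Fg2 l lt t = Fg1 l lt x - Fg1 l lt 0 :=
    intervalIntegral.integral_eq_sub_of_hasDerivAt (fun t _ => hasDerivAt_Fg1 l lt t) hint
  rw [Fg1_zero, sub_zero] at hftc
  rw [← hftc]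
  have hb : ∀ t ∈ Set.uIoc (0:ℝ) x, ‖Fg2 l lt t‖ ≤ Mb l lt := by
    intro t ht
    rw [Set.uIoc_of_le hx] at ht
    exact bound_Fg2 l lt hl hlt ht.1.le
  have := intervalIntegral.norm_integral_le_of_norm_le_const hb
  rwa [sub_zero, abs_of_nonneg hx, Real.norm_eq_abs] at this

lemma bound_Fg (l lt : ℝ) (hl : 0 < l) (hlt : 0 < lt) {x : ℝ} (hx : 0 ≤ x) :
    |Fg l lt x| ≤ Mb l lt * x ^ 2 := by
  have hcont : Continuous (Fg1 l lt) := by unfold Fg1; fun_prop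
  have hint : IntervalIntegrable (Fg1 l lt) volume 0 x := hcont.intervalIntegrable _ _
  have hftc : ∫ t in (0:ℝ)..x, Fg1 l lt t = Fg l lt x - Fg l lt 0 :=
    intervalIntegral.integral_eq_sub_of_hasDerivAt (fun t _ => hasDerivAt_Fg l lt t) hint
  rw [Fg_zero, sub_zero] at hftc
  rw [← hftc]
  have hb : ∀ t ∈ Set.uIoc (0:ℝ) x, ‖Fg1 l lt t‖ ≤ Mb l lt * x := by
    intro t ht
    rw [Set.uIoc_of_le hx] at ht
    refine (bound_Fg1 l lt hl hlt ht.1.le).trans ?_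
    exact mul_le_mul_of_nonneg_left ht.2 (Mb_nonneg hl hlt)
  have := intervalIntegral.norm_integral_le_of_norm_le_const hb
  rw [sub_zero, abs_of_nonneg hx, Real.norm_eq_abs] at this
  calc |∫ t in (0:ℝ)..x, Fg1 l lt t| ≤ Mb l lt * x * x := this
    _ = Mb l lt * x ^ 2 := by ring

lemma intOn_rpow_exp {s b : ℝ} (hs : -1 < s) (hb : 0 < b) :
    IntegrableOn (fun x : ℝ => x ^ s * Real.exp (-(b * x))) (Set.Ioi 0) := by
  have h := integrableOn_rpow_mul_exp_neg_mul_rpow hs one_pos hb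
  refine h.congr_fun (fun x _ => ?_) measurableSet_Ioi
  beta_reduce
  rw [Real.rpow_one, neg_mul]

lemma int_rpow_exp {s b : ℝ} (hs : -1 < s) (hb : 0 < b) :
    ∫ x in Set.Ioi (0:ℝ), x ^ s * Real.exp (-(b * x))
      = (1 / b) ^ (s + 1) * Real.Gamma (s + 1) := by
  have h := Real.integral_rpow_mul_exp_neg_mul_Ioi (by linarith : (0:ℝ) < s + 1) hb
  rw [show s + 1 - 1 = s from by ring] at h
  exact h

lemma aesm_mul_rpow {f : ℝ → ℝ} (hf : Continuous f) (c : ℝ) {s : Set ℝ}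
    (hs : MeasurableSet s) (hsub : s ⊆ Set.Ioi 0) :
    AEStronglyMeasurable (fun x : ℝ => f x * x ^ c) (volume.restrict s) := by
  refine ContinuousOn.aestronglyMeasurable ?_ hs
  exact hf.continuousOn.mul
    (continuousOn_id.rpow_const (fun x hx => Or.inl (ne_of_gt (hsub hx))))

lemma continuous_Fg (l lt : ℝ) : Continuous (Fg l lt) := by unfold Fg; fun_prop

lemma abs_Fg_le (l lt : ℝ) {x : ℝ} (hx : 0 ≤ x) :
    |Fg l lt x| ≤ |lt - l| * (x * Real.exp (-(l * x))) + Real.exp (-(l * x))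
      + Real.exp (-(lt * x)) := by
  unfold Fg
  have h1 : |(lt - l) * x * Real.exp (-(l * x)) - Real.exp (-(l * x))|
      ≤ |lt - l| * (x * Real.exp (-(l * x))) + Real.exp (-(l * x)) := by
    refine (abs_sub _ _).trans ?_
    rw [abs_mul, abs_mul, Real.abs_exp, abs_of_nonneg hx, mul_assoc]
  calc |(lt - l) * x * Real.exp (-(l * x)) - Real.exp (-(l * x)) + Real.exp (-(lt * x))|
      ≤ |(lt - l) * x * Real.exp (-(l * x)) - Real.exp (-(l * x))| + |Real.exp (-(lt * x))| :=
        abs_add_le _ _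
    _ ≤ |lt - l| * (x * Real.exp (-(l * x))) + Real.exp (-(l * x)) + Real.exp (-(lt * x)) := by
        rw [Real.abs_exp]; linarith

lemma intOn_g (a l lt : ℝ) (ha0 : 0 < a) (ha2 : a < 2) (hl : 0 < l) (hlt : 0 < lt) :
    IntegrableOn (fun x : ℝ => Fg l lt x * x ^ (-1 - a)) (Set.Ioi 0) := by
  rw [← Set.Ioc_union_Ioi_eq_Ioi (zero_le_one : (0:ℝ) ≤ 1), integrableOn_union]
  constructor
  · have hdom : IntegrableOn (fun x : ℝ => Mb l lt * x ^ (1 - a)) (Set.Ioc (0:ℝ) 1) := by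
      apply Integrable.const_mul
      have h := intervalIntegral.intervalIntegrable_rpow' (show (-1:ℝ) < 1 - a by linarith)
        (a := 0) (b := 1)
      rwa [intervalIntegrable_iff_integrableOn_Ioc_of_le zero_le_one] at h
    refine hdom.mono' (aesm_mul_rpow (continuous_Fg l lt) _ measurableSet_Ioc
      (Set.Ioc_subset_Ioi_self)) ?_
    filter_upwards [ae_restrict_mem measurableSet_Ioc] with x hx
    have hx0 : 0 < x := hx.1
    rw [Real.norm_eq_abs, abs_mul, abs_of_nonneg (Real.rpow_nonneg hx0.le _)]
    calc |Fg l lt x| * x ^ (-1 - a) ≤ (Mb l lt * x ^ 2) * x ^ (-1 - a) := by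
          exact mul_le_mul_of_nonneg_right (bound_Fg l lt hl hlt hx0.le)
            (Real.rpow_nonneg hx0.le _)
      _ = Mb l lt * x ^ (1 - a) := by
          rw [mul_assoc, ← Real.rpow_natCast x 2, ← Real.rpow_add hx0,
            show ((2:ℕ):ℝ) + (-1 - a) = 1 - a from by push_cast; ring]
  · have hD : IntegrableOn (fun x : ℝ => |lt - l| * (2 / l) * Real.exp (-(l / 2) * x)
        + Real.exp (-l * x) + Real.exp (-lt * x)) (Set.Ioi 1) := by
      exact (((exp_neg_integrableOn_Ioi 1 (half_pos hl)).const_mul _).add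
        (exp_neg_integrableOn_Ioi 1 hl)).add (exp_neg_integrableOn_Ioi 1 hlt)
    refine hD.mono' (aesm_mul_rpow (continuous_Fg l lt) _ measurableSet_Ioi
      (Set.Ioi_subset_Ioi zero_le_one)) ?_
    filter_upwards [ae_restrict_mem measurableSet_Ioi] with x hx
    have hx1 : (1:ℝ) < x := hx
    have hx0 : (0:ℝ) < x := zero_lt_one.trans hx1
    rw [Real.norm_eq_abs, abs_mul, abs_of_nonneg (Real.rpow_nonneg hx0.le _)]
    have hr1 : x ^ (-1 - a) ≤ 1 :=
      Real.rpow_le_one_of_one_le_of_nonpos hx1.le (by linarith)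
    have hxE : x * Real.exp (-(l * x)) ≤ 2 / l * Real.exp (-(l / 2 * x)) := by
      have h := mul_exp_le_one (half_pos hl) hx0.le
      have hsplit : Real.exp (-(l * x)) = Real.exp (-(l / 2 * x)) * Real.exp (-(l / 2 * x)) := by
        rw [← Real.exp_add]; ring_nf
      rw [hsplit]
      have : x * (Real.exp (-(l / 2 * x)) * Real.exp (-(l / 2 * x)))
          = (2 / l) * ((l / 2 * x * Real.exp (-(l / 2 * x))) * Real.exp (-(l / 2 * x))) := by
        field_simp
      rw [this]
      have he0 : 0 < Real.exp (-(l / 2 * x)) := Real.exp_pos _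
      have : l / 2 * x * Real.exp (-(l / 2 * x)) * Real.exp (-(l / 2 * x))
          ≤ 1 * Real.exp (-(l / 2 * x)) := mul_le_mul_of_nonneg_right h he0.le
      calc 2 / l * (l / 2 * x * Real.exp (-(l / 2 * x)) * Real.exp (-(l / 2 * x)))
          ≤ 2 / l * (1 * Real.exp (-(l / 2 * x))) := by
            exact mul_le_mul_of_nonneg_left this (by positivity)
        _ = 2 / l * Real.exp (-(l / 2 * x)) := by ring
    calc |Fg l lt x| * x ^ (-1 - a) ≤ |Fg l lt x| * 1 :=
          mul_le_mul_of_nonneg_left hr1 (abs_nonneg _)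
      _ = |Fg l lt x| := mul_one _
      _ ≤ |lt - l| * (x * Real.exp (-(l * x))) + Real.exp (-(l * x)) + Real.exp (-(lt * x)) :=
          abs_Fg_le l lt hx0.le
      _ ≤ |lt - l| * (2 / l) * Real.exp (-(l / 2) * x) + Real.exp (-l * x)
            + Real.exp (-lt * x) := by
          rw [neg_mul, neg_mul, neg_mul, mul_assoc]
          exact add_le_add (add_le_add
            (mul_le_mul_of_nonneg_left hxE (abs_nonneg _)) le_rfl) le_rfl

lemma eq_Fg2 (a l lt : ℝ) : ∀ x ∈ Set.Ioi (0:ℝ),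
    Fg2 l lt x * x ^ (1 - a) =
      (-(2 * l) * (lt - l) - l ^ 2) * (x ^ (1 - a) * Real.exp (-(l * x)))
        + l ^ 2 * (lt - l) * (x ^ (2 - a) * Real.exp (-(l * x)))
        + lt ^ 2 * (x ^ (1 - a) * Real.exp (-(lt * x))) := by
  intro x hx
  have hx0 : (0:ℝ) < x := hx
  rw [show (2:ℝ) - a = 1 + (1 - a) from by ring, Real.rpow_add hx0, Real.rpow_one]
  unfold Fg2; ring

lemma intOn_h (a l lt : ℝ) (ha0 : 0 < a) (ha2 : a < 2) (hl : 0 < l) (hlt : 0 < lt) :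
    IntegrableOn (fun x : ℝ => Fg2 l lt x * x ^ (1 - a)) (Set.Ioi 0) := by
  have h1 : (-1:ℝ) < 1 - a := by linarith
  have h2 : (-1:ℝ) < 2 - a := by linarith
  refine IntegrableOn.congr_fun ?_ (fun x hx => (eq_Fg2 a l lt x hx).symm) measurableSet_Ioi
  exact (((intOn_rpow_exp h1 hl).const_mul _).add ((intOn_rpow_exp h2 hl).const_mul _)).add
    ((intOn_rpow_exp h1 hlt).const_mul _)

lemma int_Fg2 (a l lt : ℝ) (ha0 : 0 < a) (ha2 : a < 2) (hl : 0 < l) (hlt : 0 < lt) :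
    ∫ x in Set.Ioi (0:ℝ), Fg2 l lt x * x ^ (1 - a)
      = (-(2 * l) * (lt - l) - l ^ 2) * ((1 / l) ^ (2 - a) * Real.Gamma (2 - a))
        + l ^ 2 * (lt - l) * ((1 / l) ^ (3 - a) * Real.Gamma (3 - a))
        + lt ^ 2 * ((1 / lt) ^ (2 - a) * Real.Gamma (2 - a)) := by
  have h1 : (-1:ℝ) < 1 - a := by linarith
  have h2 : (-1:ℝ) < 2 - a := by linarith
  rw [setIntegral_congr_fun measurableSet_Ioi (eq_Fg2 a l lt)]
  have hA := (intOn_rpow_exp h1 hl).const_mul (-(2 * l) * (lt - l) - l ^ 2)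
  have hB := (intOn_rpow_exp h2 hl).const_mul (l ^ 2 * (lt - l))
  have hC := (intOn_rpow_exp h1 hlt).const_mul (lt ^ 2)
  have hAB : Integrable (fun x : ℝ =>
      (-(2 * l) * (lt - l) - l ^ 2) * (x ^ (1 - a) * Real.exp (-(l * x)))
        + l ^ 2 * (lt - l) * (x ^ (2 - a) * Real.exp (-(l * x))))
      (volume.restrict (Set.Ioi 0)) := hA.add hB
  rw [integral_add hAB hC, integral_add hA hB,
    integral_const_mul, integral_const_mul, integral_const_mul,
    int_rpow_exp h1 hl, int_rpow_exp h2 hl, int_rpow_exp h1 hlt,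
    show (1:ℝ) - a + 1 = 2 - a from by ring, show (2:ℝ) - a + 1 = 3 - a from by ring]

noncomputable def Wf (a l lt x : ℝ) : ℝ :=
  -(Fg l lt x) * x ^ (-a) / a + Fg1 l lt x * x ^ (1 - a) / (a * (1 - a))

lemma Wf_zero (a l lt : ℝ) : Wf a l lt 0 = 0 := by
  simp [Wf, Fg_zero, Fg1_zero]

lemma hasDerivAt_Wf (a l lt : ℝ) (ha0 : 0 < a) (ha1 : a ≠ 1) {x : ℝ} (hx : 0 < x) :
    HasDerivAt (Wf a l lt)
      (Fg l lt x * x ^ (-1 - a) + Fg2 l lt x * x ^ (1 - a) / (a * (1 - a))) x := by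
  have hr1 : HasDerivAt (fun x : ℝ => x ^ (-a)) (-a * x ^ (-a - 1)) x :=
    Real.hasDerivAt_rpow_const (Or.inl hx.ne')
  have hr2 : HasDerivAt (fun x : ℝ => x ^ (1 - a)) ((1 - a) * x ^ (1 - a - 1)) x :=
    Real.hasDerivAt_rpow_const (Or.inl hx.ne')
  have h1 := (((hasDerivAt_Fg l lt x).neg.mul hr1).div_const a).add
    (((hasDerivAt_Fg1 l lt x).mul hr2).div_const (a * (1 - a)))
  refine h1.congr_deriv ?_
  rw [show (-a - 1 : ℝ) = -1 - a from by ring, show (1 - a - 1 : ℝ) = -a from by ring]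
  have h1a : (1:ℝ) - a ≠ 0 := sub_ne_zero.mpr (Ne.symm ha1)
  field_simp
  simp only [Pi.neg_apply]
  ring

lemma tendsto_Wf_zero (a l lt : ℝ) (ha0 : 0 < a) (ha2 : a < 2) (ha1 : a ≠ 1)
    (hl : 0 < l) (hlt : 0 < lt) :
    Tendsto (Wf a l lt) (𝓝[Set.Ici 0] 0) (𝓝 0) := by
  have h2a : (0:ℝ) < 2 - a := by linarith
  set K : ℝ := Mb l lt / a + Mb l lt / (a * |1 - a|) with hK
  have hbound : ∀ x ∈ Set.Ici (0:ℝ), ‖Wf a l lt x‖ ≤ K * x ^ (2 - a) := by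
    intro x hx
    rcases eq_or_lt_of_le (Set.mem_Ici.mp hx) with h | hx0
    · rw [← h, Wf_zero, Real.zero_rpow h2a.ne']
      simp
    · have h1a : (0:ℝ) < |1 - a| := abs_pos.mpr (sub_ne_zero.mpr (Ne.symm ha1))
      have e1 : x ^ (2:ℕ) * x ^ (-a) = x ^ (2 - a) := by
        rw [← Real.rpow_natCast x 2, ← Real.rpow_add hx0]
        norm_num [sub_eq_add_neg]
      have e2 : x * x ^ (1 - a) = x ^ (2 - a) := by
        rw [show (2:ℝ) - a = 1 + (1 - a) from by ring, Real.rpow_add hx0, Real.rpow_one]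
      have hW : ‖Wf a l lt x‖ ≤ |Fg l lt x| * x ^ (-a) / a
          + |Fg1 l lt x| * x ^ (1 - a) / (a * |1 - a|) := by
        unfold Wf
        refine (norm_add_le _ _).trans ?_
        rw [Real.norm_eq_abs, Real.norm_eq_abs, abs_div, abs_div, abs_mul, abs_mul, abs_neg,
          abs_of_nonneg (Real.rpow_nonneg hx0.le (-a)),
          abs_of_nonneg (Real.rpow_nonneg hx0.le (1 - a)),
          abs_of_pos ha0, abs_mul, abs_of_pos ha0]
      refine hW.trans ?_
      calc |Fg l lt x| * x ^ (-a) / a + |Fg1 l lt x| * x ^ (1 - a) / (a * |1 - a|)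
          ≤ Mb l lt * x ^ (2:ℕ) * x ^ (-a) / a
            + Mb l lt * x * x ^ (1 - a) / (a * |1 - a|) := by
            gcongr <;> first
              | exact Real.rpow_nonneg hx0.le _
              | exact bound_Fg l lt hl hlt hx0.le
              | exact bound_Fg1 l lt hl hlt hx0.le
        _ = K * x ^ (2 - a) := by
            rw [hK, mul_assoc (Mb l lt) (x ^ (2:ℕ)), e1, mul_assoc (Mb l lt) x, e2]
            ring
  refine squeeze_zero_norm' (eventually_mem_nhdsWithin.mono fun x hx => hbound x hx) ?_
  have hc : ContinuousAt (fun x : ℝ => x ^ (2 - a)) 0 :=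
    Real.continuousAt_rpow_const 0 (2 - a) (Or.inr h2a.le)
  have ht : Tendsto (fun x : ℝ => K * x ^ (2 - a)) (𝓝 0) (𝓝 (K * (0:ℝ) ^ (2 - a))) :=
    hc.tendsto.const_mul K
  rw [Real.zero_rpow h2a.ne', mul_zero] at ht
  exact ht.mono_left nhdsWithin_le_nhds

lemma tendsto_Wf_atTop (a l lt : ℝ) (ha0 : 0 < a) (ha1 : a ≠ 1)
    (hl : 0 < l) (hlt : 0 < lt) :
    Tendsto (Wf a l lt) atTop (𝓝 0) := by
  have t1 : ∀ s b : ℝ, 0 < b →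
      Tendsto (fun x : ℝ => x ^ s * Real.exp (-(b * x))) atTop (𝓝 0) := by
    intro s b hb
    have := tendsto_rpow_mul_exp_neg_mul_atTop_nhds_zero s b hb
    refine this.congr (fun x => ?_)
    rw [neg_mul]
  have T := (((((((t1 (1 - a) l hl).const_mul (-(lt - l) / a)).add
    ((t1 (-a) l hl).const_mul (1 / a))).add
    ((t1 (-a) lt hlt).const_mul (-1 / a))).add
    ((t1 (1 - a) l hl).const_mul ((lt - l) / (a * (1 - a))))).add
    ((t1 (2 - a) l hl).const_mul (-(l * (lt - l)) / (a * (1 - a))))).add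
    ((t1 (1 - a) l hl).const_mul (l / (a * (1 - a))))).add
    ((t1 (1 - a) lt hlt).const_mul (-lt / (a * (1 - a))))
  rw [show (-(lt - l) / a) * 0 + (1 / a) * 0 + (-1 / a) * 0 + ((lt - l) / (a * (1 - a))) * 0
      + (-(l * (lt - l)) / (a * (1 - a))) * 0 + (l / (a * (1 - a))) * 0
      + (-lt / (a * (1 - a))) * 0 = 0 from by ring] at T
  refine T.congr' ?_
  filter_upwards [eventually_gt_atTop (0:ℝ)] with x hx
  have h1a : (1:ℝ) - a ≠ 0 := sub_ne_zero.mpr (Ne.symm ha1)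
  have e1 : x ^ ((1:ℝ) - a) = x * x ^ (-a) := by
    rw [show (1:ℝ) - a = 1 + (-a) from by ring, Real.rpow_add hx, Real.rpow_one]
  have e2 : x ^ ((2:ℝ) - a) = x * (x * x ^ (-a)) := by
    rw [show (2:ℝ) - a = 1 + (1 - a) from by ring, Real.rpow_add hx, Real.rpow_one, e1]
  unfold Wf Fg Fg1
  rw [e1, e2]
  field_simp
  ring

lemma key_integral (a l lt : ℝ) (ha0 : 0 < a) (ha2 : a < 2) (ha1 : a ≠ 1)
    (hl : 0 < l) (hlt : 0 < lt) :
    ∫ x in Set.Ioi (0:ℝ), Fg l lt x * x ^ (-1 - a)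
      = Real.Gamma (-a) * ((a - 1) * l ^ a - a * lt * l ^ (a - 1) + lt ^ a) := by
  have h1a : (1:ℝ) - a ≠ 0 := sub_ne_zero.mpr (Ne.symm ha1)
  have h2a : (2:ℝ) - a ≠ 0 := by intro h; linarith
  have hIg := intOn_g a l lt ha0 ha2 hl hlt
  have hIh := (intOn_h a l lt ha0 ha2 hl hlt).div_const (a * (1 - a))
  have hcont : ContinuousWithinAt (Wf a l lt) (Set.Ici 0) 0 := by
    rw [ContinuousWithinAt, Wf_zero]
    exact tendsto_Wf_zero a l lt ha0 ha2 ha1 hl hlt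
  have hFTC := integral_Ioi_of_hasDerivAt_of_tendsto hcont
    (fun x hx => hasDerivAt_Wf a l lt ha0 ha1 hx) (hIg.add hIh)
    (tendsto_Wf_atTop a l lt ha0 ha1 hl hlt)
  rw [Wf_zero, sub_zero, integral_add hIg hIh, integral_div,
    int_Fg2 a l lt ha0 ha2 hl hlt] at hFTC
  have hGa : (-a) ≠ 0 := neg_ne_zero.mpr ha0.ne'
  have hG1 : Real.Gamma (1 - a) = -a * Real.Gamma (-a) := by
    rw [show (1:ℝ) - a = -a + 1 from by ring, Real.Gamma_add_one hGa]
  have hG2 : Real.Gamma (2 - a) = (1 - a) * (-a) * Real.Gamma (-a) := by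
    rw [show (2:ℝ) - a = (1 - a) + 1 from by ring, Real.Gamma_add_one h1a, hG1]; ring
  have hG3 : Real.Gamma (3 - a) = (2 - a) * ((1 - a) * -a) * Real.Gamma (-a) := by
    rw [show (3:ℝ) - a = (2 - a) + 1 from by ring, Real.Gamma_add_one h2a, hG2]; ring
  have hr : ∀ b c : ℝ, 0 < b → (1 / b) ^ (c - a) = b ^ a / b ^ c := by
    intro b c hb
    rw [one_div, Real.inv_rpow hb.le, ← Real.rpow_neg hb.le,
      show -(c - a) = a - c from by ring, Real.rpow_sub hb]
  have hcast : ∀ b : ℝ, 0 < b → b ^ ((2:ℝ)) = b ^ (2:ℕ) ∧ b ^ ((3:ℝ)) = b ^ (3:ℕ) := by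
    intro b hb
    constructor
    · rw [show (2:ℝ) = ((2:ℕ):ℝ) from by norm_num, Real.rpow_natCast]
    · rw [show (3:ℝ) = ((3:ℕ):ℝ) from by norm_num, Real.rpow_natCast]
  rw [hr l 2 hl, hr l 3 hl, hr lt 2 hlt, (hcast l hl).1, (hcast l hl).2, (hcast lt hlt).1,
    hG2, hG3] at hFTC
  rw [show a - 1 = a - 1 from rfl, Real.rpow_sub hl a 1, Real.rpow_one]
  have hla : l ^ a ≠ 0 := (Real.rpow_pos_of_pos hl a).ne'
  have hlta : lt ^ a ≠ 0 := (Real.rpow_pos_of_pos hlt a).ne'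
  have hgoal : ∫ x in Set.Ioi (0:ℝ), Fg l lt x * x ^ (-1 - a)
      = -(((-(2 * l) * (lt - l) - l ^ 2) * (l ^ a / l ^ (2:ℕ) * ((1 - a) * -a * Real.Gamma (-a)))
        + l ^ 2 * (lt - l) * (l ^ a / l ^ (3:ℕ) * ((2 - a) * ((1 - a) * -a) * Real.Gamma (-a)))
        + lt ^ 2 * (lt ^ a / lt ^ (2:ℕ) * ((1 - a) * -a * Real.Gamma (-a)))) / (a * (1 - a))) := by
    linarith
  rw [hgoal]
  field_simp
  ring

lemma key_integral' (a l lt C : ℝ) (ha0 : 0 < a) (ha2 : a < 2) (ha1 : a ≠ 1)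
    (hl : 0 < l) (hlt : 0 < lt) :
    (∫ x in Set.Ioi (0:ℝ),
        ((lt - l) * x * Real.exp (-(l * x)) - Real.exp (-(l * x))
          + Real.exp (-(lt * x))) * (C * x ^ (-1 - a)))
      = C * Real.Gamma (-a) * ((a - 1) * l ^ a - a * lt * l ^ (a - 1) + lt ^ a) := by
  have hfun : (fun x : ℝ => ((lt - l) * x * Real.exp (-(l * x)) - Real.exp (-(l * x))
      + Real.exp (-(lt * x))) * (C * x ^ (-1 - a)))
      = fun x : ℝ => C * (Fg l lt x * x ^ (-1 - a)) := by
    funext x; unfold Fg; ring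
  rw [hfun, integral_const_mul, key_integral a l lt ha0 ha2 ha1 hl hlt, ← mul_assoc]

/-- Evaluation of the Kullback–Leibler integral for two generalized tempered
stable processes, and the resulting Kullback–Leibler divergence (`T` times the
evaluated integral) on horizon `T`. -/
theorem gts_kl_divergence_eval
    (ap am Cp Cm lp lm ltp ltm T : ℝ)
    (hap : ap ∈ Set.Ioo (0 : ℝ) 2) (hap1 : ap ≠ 1)
    (ham : am ∈ Set.Ioo (0 : ℝ) 2) (ham1 : am ≠ 1)
    (hCp : 0 < Cp) (hCm : 0 < Cm)
    (hlp : 0 < lp) (hlm : 0 < lm) (hltp : 0 < ltp) (hltm : 0 < ltm)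
    (hT : 0 < T) :
    (∫ x in Set.Ioi (0 : ℝ),
        ((ltp - lp) * x * Real.exp (-(lp * x)) - Real.exp (-(lp * x))
          + Real.exp (-(ltp * x))) * (Cp * x ^ (-1 - ap)))
      + (∫ y in Set.Ioi (0 : ℝ),
          ((ltm - lm) * y * Real.exp (-(lm * y)) - Real.exp (-(lm * y))
            + Real.exp (-(ltm * y))) * (Cm * y ^ (-1 - am)))
      = Cp * Real.Gamma (-ap) *
            ((ap - 1) * lp ^ ap - ap * ltp * lp ^ (ap - 1) + ltp ^ ap)
        + Cm * Real.Gamma (-am) *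
            ((am - 1) * lm ^ am - am * ltm * lm ^ (am - 1) + ltm ^ am) ∧
    T * ((∫ x in Set.Ioi (0 : ℝ),
          ((ltp - lp) * x * Real.exp (-(lp * x)) - Real.exp (-(lp * x))
            + Real.exp (-(ltp * x))) * (Cp * x ^ (-1 - ap)))
        + (∫ y in Set.Ioi (0 : ℝ),
            ((ltm - lm) * y * Real.exp (-(lm * y)) - Real.exp (-(lm * y))
              + Real.exp (-(ltm * y))) * (Cm * y ^ (-1 - am))))
      = T * (Cp * Real.Gamma (-ap) *
              ((ap - 1) * lp ^ ap - ap * ltp * lp ^ (ap - 1) + ltp ^ ap)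
            + Cm * Real.Gamma (-am) *
                ((am - 1) * lm ^ am - am * ltm * lm ^ (am - 1) + ltm ^ am)) := by
  have h1 := key_integral' ap lp ltp Cp hap.1 hap.2 hap1 hlp hltp
  have h2 := key_integral' am lm ltm Cm ham.1 ham.2 ham1 hlm hltm
  have h : (∫ x in Set.Ioi (0 : ℝ),
        ((ltp - lp) * x * Real.exp (-(lp * x)) - Real.exp (-(lp * x))
          + Real.exp (-(ltp * x))) * (Cp * x ^ (-1 - ap)))
      + (∫ y in Set.Ioi (0 : ℝ),
          ((ltm - lm) * y * Real.exp (-(lm * y)) - Real.exp (-(lm * y))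
            + Real.exp (-(ltm * y))) * (Cm * y ^ (-1 - am)))
      = Cp * Real.Gamma (-ap) *
            ((ap - 1) * lp ^ ap - ap * ltp * lp ^ (ap - 1) + ltp ^ ap)
        + Cm * Real.Gamma (-am) *
            ((am - 1) * lm ^ am - am * ltm * lm ^ (am - 1) + ltm ^ am) := by
    rw [h1, h2]
  exact ⟨h, by rw [h]⟩
end

section
/- Let a ∈ (0,2) with a ≠ 1, T > 0, C > 0, and α ∈ (-1,1) with β = (1-α)/2. Define D : (0,∞) × (0,∞) → ℝ by D(λ,μ) = (4/(1-α²))·(1 - exp(-T·C·Γ(-a)·(β·λ^a + (1-β)·μ^a - (βλ+(1-β)μ)^a))), where Γ is the real Gamma function and powers are real powers. Then for every λ > 0, the negative of the second mixed partial derivative -∂²D/∂λ∂μ evaluated at (λ, λ) equals T·C·Γ(2-a)·λ^{a-2}. -/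
open Real Filter Topology

private lemma gts_inner_hasDerivAt (a β K k c d x : ℝ) (hx : x ≠ 0) (hc : β * x + c ≠ 0) :
    HasDerivAt (fun l : ℝ => k * (1 - Real.exp (-(K * (β * l ^ a + d - (β * l + c) ^ a)))))
      (k * ((K * (β * (a * x ^ (a - 1)) - a * (β * x + c) ^ (a - 1) * β)) *
        Real.exp (-(K * (β * x ^ a + d - (β * x + c) ^ a))))) x := by
  have h1 : HasDerivAt (fun l : ℝ => l ^ a) (a * x ^ (a - 1)) x :=
    Real.hasDerivAt_rpow_const (Or.inl hx)
  have h2 : HasDerivAt (fun l : ℝ => β * l + c) β x := by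
    simpa using ((hasDerivAt_id x).const_mul β).add_const c
  have h3 : HasDerivAt (fun l : ℝ => (β * l + c) ^ a)
      (a * (β * x + c) ^ (a - 1) * β) x := by
    have := (Real.hasDerivAt_rpow_const (p := a) (Or.inl hc)).comp x h2
    exact this
  have h4 : HasDerivAt (fun l : ℝ => β * l ^ a + d - (β * l + c) ^ a)
      (β * (a * x ^ (a - 1)) - a * (β * x + c) ^ (a - 1) * β) x :=
    ((h1.const_mul β).add_const d).sub h3
  have h5 : HasDerivAt (fun l : ℝ => Real.exp (-(K * (β * l ^ a + d - (β * l + c) ^ a))))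
      (Real.exp (-(K * (β * x ^ a + d - (β * x + c) ^ a))) *
        (-(K * (β * (a * x ^ (a - 1)) - a * (β * x + c) ^ (a - 1) * β)))) x :=
    ((h4.const_mul K).neg).exp
  have h6 : HasDerivAt (fun l : ℝ => k * (1 - Real.exp (-(K * (β * l ^ a + d - (β * l + c) ^ a)))))
      (k * -(Real.exp (-(K * (β * x ^ a + d - (β * x + c) ^ a))) *
        (-(K * (β * (a * x ^ (a - 1)) - a * (β * x + c) ^ (a - 1) * β))))) x :=
    (h5.const_sub (1 : ℝ)).const_mul k
  convert h6 using 1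
  ring

/-- The Fisher information entry of the GTS geometry:
`-∂²D/∂λ∂μ` at `(λ,λ)` equals `T·C·Γ(2-a)·λ^{a-2}`, where
`D(λ,μ) = (4/(1-α²))·(1 - exp(-T·C·Γ(-a)·(β·λ^a+(1-β)·μ^a-(βλ+(1-β)μ)^a)))`. -/
theorem gts_fisher_metric (a T C α β : ℝ)
    (ha : a ∈ Set.Ioo (0 : ℝ) 2) (ha1 : a ≠ 1) (hT : 0 < T) (hC : 0 < C)
    (hα : α ∈ Set.Ioo (-1 : ℝ) 1) (hβ : β = (1 - α) / 2)
    (lam : ℝ) (hlam : 0 < lam) :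
    -(deriv (fun mu : ℝ =>
        deriv (fun l : ℝ =>
          (4 / (1 - α ^ 2)) *
            (1 - Real.exp (-(T * C * Real.Gamma (-a) *
              (β * l ^ a + (1 - β) * mu ^ a - (β * l + (1 - β) * mu) ^ a))))) lam) lam)
      = T * C * Real.Gamma (2 - a) * lam ^ (a - 2) := by
  obtain ⟨ha0, ha2⟩ := ha
  obtain ⟨hα1, hα2⟩ := hα
  have hβ0 : 0 < β := by rw [hβ]; linarith
  have hβ1 : β < 1 := by rw [hβ]; linarith
  set K : ℝ := T * C * Real.Gamma (-a) with hK
  set k : ℝ := 4 / (1 - α ^ 2) with hk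
  set g : ℝ → ℝ := fun mu =>
      k * ((K * (β * (a * lam ^ (a - 1)) - a * (β * lam + (1 - β) * mu) ^ (a - 1) * β)) *
        Real.exp (-(K * (β * lam ^ a + (1 - β) * mu ^ a - (β * lam + (1 - β) * mu) ^ a))))
    with hg
  -- Step 1: the inner derivative equals g on a neighbourhood of lam
  have hev : (fun mu : ℝ => deriv (fun l : ℝ =>
      k * (1 - Real.exp (-(K *
        (β * l ^ a + (1 - β) * mu ^ a - (β * l + (1 - β) * mu) ^ a))))) lam) =ᶠ[𝓝 lam] g := by
    filter_upwards [eventually_gt_nhds hlam] with mu hmu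
    have hpos : 0 < β * lam + (1 - β) * mu :=
      add_pos (mul_pos hβ0 hlam) (mul_pos (by linarith) hmu)
    exact (gts_inner_hasDerivAt a β K k ((1 - β) * mu) ((1 - β) * mu ^ a) lam
      hlam.ne' hpos.ne').deriv
  have hde : deriv (fun mu : ℝ => deriv (fun l : ℝ =>
      k * (1 - Real.exp (-(K *
        (β * l ^ a + (1 - β) * mu ^ a - (β * l + (1 - β) * mu) ^ a))))) lam) lam
      = deriv g lam := hev.deriv_eq
  -- Step 2: compute deriv g lam
  have hbase : β * lam + (1 - β) * lam = lam := by ring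
  have hlin : HasDerivAt (fun mu : ℝ => β * lam + (1 - β) * mu) (1 - β) lam := by
    simpa using ((hasDerivAt_id lam).const_mul (1 - β)).const_add (β * lam)
  have hpow : HasDerivAt (fun mu : ℝ => (β * lam + (1 - β) * mu) ^ (a - 1))
      ((a - 1) * lam ^ (a - 1 - 1) * (1 - β)) lam := by
    have := (Real.hasDerivAt_rpow_const (x := β * lam + (1 - β) * lam) (p := a - 1)
      (Or.inl (by rw [hbase]; exact hlam.ne'))).comp lam hlin
    rw [hbase] at this
    exact this
  have hP : HasDerivAt (fun mu : ℝ =>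
      β * (a * lam ^ (a - 1)) - a * (β * lam + (1 - β) * mu) ^ (a - 1) * β)
      (-(a * ((a - 1) * lam ^ (a - 1 - 1) * (1 - β)) * β)) lam := by
    simpa using (((hpow.const_mul a).mul_const β).const_sub (β * (a * lam ^ (a - 1))))
  have hpowa : HasDerivAt (fun mu : ℝ => (β * lam + (1 - β) * mu) ^ a)
      (a * lam ^ (a - 1) * (1 - β)) lam := by
    have := (Real.hasDerivAt_rpow_const (x := β * lam + (1 - β) * lam) (p := a)
      (Or.inl (by rw [hbase]; exact hlam.ne'))).comp lam hlin
    rw [hbase] at this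
    exact this
  have hmua : HasDerivAt (fun mu : ℝ => mu ^ a) (a * lam ^ (a - 1)) lam :=
    Real.hasDerivAt_rpow_const (Or.inl hlam.ne')
  have hF : HasDerivAt (fun mu : ℝ =>
      β * lam ^ a + (1 - β) * mu ^ a - (β * lam + (1 - β) * mu) ^ a)
      ((1 - β) * (a * lam ^ (a - 1)) - a * lam ^ (a - 1) * (1 - β)) lam :=
    ((hmua.const_mul (1 - β)).const_add (β * lam ^ a)).sub hpowa
  have hF' : HasDerivAt (fun mu : ℝ =>
      β * lam ^ a + (1 - β) * mu ^ a - (β * lam + (1 - β) * mu) ^ a) 0 lam := by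
    convert hF using 1; ring
  have hE : HasDerivAt (fun mu : ℝ => Real.exp (-(K *
      (β * lam ^ a + (1 - β) * mu ^ a - (β * lam + (1 - β) * mu) ^ a))))
      0 lam := by
    have := ((hF'.const_mul K).neg).exp
    simpa using this
  have hg' : HasDerivAt g
      (k * ((K * (-(a * ((a - 1) * lam ^ (a - 1 - 1) * (1 - β)) * β))) *
        Real.exp (-(K * (β * lam ^ a + (1 - β) * lam ^ a - (β * lam + (1 - β) * lam) ^ a)))
        + (K * (β * (a * lam ^ (a - 1)) - a * (β * lam + (1 - β) * lam) ^ (a - 1) * β)) * 0))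
      lam := ((hP.const_mul K).mul hE).const_mul k
  have hFval : β * lam ^ a + (1 - β) * lam ^ a - (β * lam + (1 - β) * lam) ^ a = 0 := by
    rw [hbase]; ring
  have hderivg : deriv g lam =
      -(k * K * a * (a - 1) * (1 - β) * β * lam ^ (a - 2)) := by
    rw [hg'.deriv, hFval, show a - 1 - 1 = a - 2 by ring]
    simp [Real.exp_zero]
    ring
  -- Step 3: Gamma identities and algebra
  have hGamma1 : Real.Gamma (1 - a) = -a * Real.Gamma (-a) := by
    rw [show (1 : ℝ) - a = -a + 1 by ring, Real.Gamma_add_one (by simpa using ha0.ne')]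
  have hGamma2 : Real.Gamma (2 - a) = (1 - a) * Real.Gamma (1 - a) := by
    rw [show (2 : ℝ) - a = (1 - a) + 1 by ring,
      Real.Gamma_add_one (sub_ne_zero.mpr (fun h => ha1 h.symm))]
  have hGamma : Real.Gamma (2 - a) = a * (a - 1) * Real.Gamma (-a) := by
    rw [hGamma2, hGamma1]; ring
  have hkβ : k * (β * (1 - β)) = 1 := by
    rw [hk, hβ]
    have hne : 1 - α ^ 2 ≠ 0 := by nlinarith
    field_simp
    ring
  rw [hde, hderivg, hGamma, hK]
  linear_combination (T * C * Real.Gamma (-a) * a * (a - 1) * lam ^ (a - 2)) * hkβ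
end

section
/- Let a ∈ (0,2) with a ≠ 1, T > 0, C > 0, and α ∈ (-1,1) with β = (1-α)/2. Define D : (0,∞) × (0,∞) → ℝ by D(λ,μ) = (4/(1-α²))·(1 - exp(-T·C·Γ(-a)·(β·λ^a + (1-β)·μ^a - (βλ+(1-β)μ)^a))), where Γ is the real Gamma function and powers are real powers. Then for every λ > 0, the negative of the third mixed partial derivative -∂³D/∂λ²∂μ evaluated at (λ, λ) equals -((1-α)/2)·T·C·Γ(3-a)·λ^{a-3}. -/
open Real Filter Topology

noncomputable def gtsg (a β mu l : ℝ) : ℝ :=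
  β * l ^ a + (1 - β) * mu ^ a - (β * l + (1 - β) * mu) ^ a

noncomputable def gtsg1 (a β mu l : ℝ) : ℝ :=
  a * β * l ^ (a - 1) - a * β * (β * l + (1 - β) * mu) ^ (a - 1)

noncomputable def gtsg2 (a β mu l : ℝ) : ℝ :=
  a * (a - 1) * β * l ^ (a - 2) - a * (a - 1) * β ^ 2 * (β * l + (1 - β) * mu) ^ (a - 2)

lemma gts_pos {β mu l : ℝ} (hβ0 : 0 < β) (hβ1 : β < 1) (hmu : 0 < mu) (hl : 0 < l) :
    0 < β * l + (1 - β) * mu :=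
  add_pos (mul_pos hβ0 hl) (mul_pos (by linarith) hmu)

lemma gts_hlin_l (β c l : ℝ) : HasDerivAt (fun l : ℝ => β * l + c) β l := by
  simpa using ((hasDerivAt_id l).const_mul β).add_const c

lemma gts_hlin_mu (c d mu : ℝ) : HasDerivAt (fun mu : ℝ => c + d * mu) d mu := by
  simpa using ((hasDerivAt_id mu).const_mul d).const_add c

lemma gts_rpow_comp {f : ℝ → ℝ} {f' x : ℝ} (p : ℝ) (hf : HasDerivAt f f' x) (hx : f x ≠ 0) :
    HasDerivAt (fun y => f y ^ p) (p * f x ^ (p - 1) * f') x :=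
  (Real.hasDerivAt_rpow_const (Or.inl hx)).comp x hf

lemma gts_hasDerivAt_g {a β mu : ℝ} (hβ0 : 0 < β) (hβ1 : β < 1) (hmu : 0 < mu) {l : ℝ}
    (hl : 0 < l) : HasDerivAt (fun l => gtsg a β mu l) (gtsg1 a β mu l) l := by
  have hx := gts_pos hβ0 hβ1 hmu hl
  have h1 : HasDerivAt (fun l : ℝ => l ^ a) (a * l ^ (a - 1)) l :=
    Real.hasDerivAt_rpow_const (Or.inl hl.ne')
  have h3 := gts_rpow_comp a (gts_hlin_l β ((1 - β) * mu) l) hx.ne'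
  have h := ((h1.const_mul β).add_const ((1 - β) * mu ^ a)).sub h3
  unfold gtsg gtsg1
  refine h.congr_deriv ?_
  ring

lemma gts_hasDerivAt_g1 {a β mu : ℝ} (hβ0 : 0 < β) (hβ1 : β < 1) (hmu : 0 < mu) {l : ℝ}
    (hl : 0 < l) : HasDerivAt (fun l => gtsg1 a β mu l) (gtsg2 a β mu l) l := by
  have hx := gts_pos hβ0 hβ1 hmu hl
  have h1 : HasDerivAt (fun l : ℝ => l ^ (a - 1)) ((a - 1) * l ^ (a - 1 - 1)) l :=
    Real.hasDerivAt_rpow_const (Or.inl hl.ne')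
  have h3 := (gts_rpow_comp (a - 1) (gts_hlin_l β ((1 - β) * mu) l) hx.ne').const_mul (a * β)
  have h := (h1.const_mul (a * β)).sub h3
  unfold gtsg1 gtsg2
  refine h.congr_deriv ?_
  rw [show a - 1 - 1 = a - 2 from by ring]
  ring

lemma gts_hasDerivAt_D {a β mu K M : ℝ} (hβ0 : 0 < β) (hβ1 : β < 1) (hmu : 0 < mu) {l : ℝ}
    (hl : 0 < l) :
    HasDerivAt (fun l => K * (1 - Real.exp (-(M * gtsg a β mu l))))
      (K * M * gtsg1 a β mu l * Real.exp (-(M * gtsg a β mu l))) l := by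
  have hg := gts_hasDerivAt_g (a := a) hβ0 hβ1 hmu hl
  have hE := ((hg.const_mul M).neg).exp
  have h := ((hasDerivAt_const l (1 : ℝ)).sub hE).const_mul K
  refine h.congr_deriv ?_
  simp only [Pi.neg_apply]
  ring

lemma gts_hasDerivAt_F1 {a β mu K M : ℝ} (hβ0 : 0 < β) (hβ1 : β < 1) (hmu : 0 < mu) {l : ℝ}
    (hl : 0 < l) :
    HasDerivAt (fun l => K * M * gtsg1 a β mu l * Real.exp (-(M * gtsg a β mu l)))
      (K * M * Real.exp (-(M * gtsg a β mu l)) * (gtsg2 a β mu l - M * gtsg1 a β mu l ^ 2)) l := by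
  have hg := gts_hasDerivAt_g (a := a) hβ0 hβ1 hmu hl
  have hg1 := gts_hasDerivAt_g1 (a := a) hβ0 hβ1 hmu hl
  have hE := ((hg.const_mul M).neg).exp
  have h := (hg1.const_mul (K * M)).mul hE
  refine h.congr_deriv ?_
  simp only [Pi.neg_apply]
  ring

lemma gts_deriv2 {a β mu K M : ℝ} (hβ0 : 0 < β) (hβ1 : β < 1) (hmu : 0 < mu) {l : ℝ}
    (hl : 0 < l) :
    deriv (deriv (fun l => K * (1 - Real.exp (-(M * gtsg a β mu l))))) l
      = K * M * Real.exp (-(M * gtsg a β mu l)) * (gtsg2 a β mu l - M * gtsg1 a β mu l ^ 2) := by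
  have hev : deriv (fun l => K * (1 - Real.exp (-(M * gtsg a β mu l))))
      =ᶠ[𝓝 l] fun l => K * M * gtsg1 a β mu l * Real.exp (-(M * gtsg a β mu l)) := by
    filter_upwards [Ioi_mem_nhds hl] with x hx
    exact (gts_hasDerivAt_D hβ0 hβ1 hmu hx).deriv
  rw [hev.deriv_eq]
  exact (gts_hasDerivAt_F1 hβ0 hβ1 hmu hl).deriv

lemma gts_hasDerivAt_g_mu {a β l : ℝ} (hβ0 : 0 < β) (hβ1 : β < 1) (hl : 0 < l) {mu : ℝ}
    (hmu : 0 < mu) :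
    HasDerivAt (fun mu => gtsg a β mu l)
      (a * (1 - β) * mu ^ (a - 1) - a * (1 - β) * (β * l + (1 - β) * mu) ^ (a - 1)) mu := by
  have hx := gts_pos hβ0 hβ1 hmu hl
  have h1 : HasDerivAt (fun mu : ℝ => mu ^ a) (a * mu ^ (a - 1)) mu :=
    Real.hasDerivAt_rpow_const (Or.inl hmu.ne')
  have h3 := gts_rpow_comp a (gts_hlin_mu (β * l) (1 - β) mu) hx.ne'
  have h := ((h1.const_mul (1 - β)).const_add (β * l ^ a)).sub h3
  unfold gtsg
  refine h.congr_deriv ?_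
  ring

lemma gts_hasDerivAt_g1_mu {a β l : ℝ} (hβ0 : 0 < β) (hβ1 : β < 1) (hl : 0 < l) {mu : ℝ}
    (hmu : 0 < mu) :
    HasDerivAt (fun mu => gtsg1 a β mu l)
      (-(a * (a - 1) * β * (1 - β) * (β * l + (1 - β) * mu) ^ (a - 2))) mu := by
  have hx := gts_pos hβ0 hβ1 hmu hl
  have h3 := (gts_rpow_comp (a - 1) (gts_hlin_mu (β * l) (1 - β) mu) hx.ne').const_mul (a * β)
  have h := (hasDerivAt_const mu (a * β * l ^ (a - 1))).sub h3
  unfold gtsg1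
  refine h.congr_deriv ?_
  rw [show a - 1 - 1 = a - 2 from by ring]
  ring

lemma gts_hasDerivAt_g2_mu {a β l : ℝ} (hβ0 : 0 < β) (hβ1 : β < 1) (hl : 0 < l) {mu : ℝ}
    (hmu : 0 < mu) :
    HasDerivAt (fun mu => gtsg2 a β mu l)
      (-(a * (a - 1) * (a - 2) * β ^ 2 * (1 - β) * (β * l + (1 - β) * mu) ^ (a - 3))) mu := by
  have hx := gts_pos hβ0 hβ1 hmu hl
  have h3 := (gts_rpow_comp (a - 2) (gts_hlin_mu (β * l) (1 - β) mu) hx.ne').const_mul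
    (a * (a - 1) * β ^ 2)
  have h := (hasDerivAt_const mu (a * (a - 1) * β * l ^ (a - 2))).sub h3
  unfold gtsg2
  refine h.congr_deriv ?_
  rw [show a - 2 - 1 = a - 3 from by ring]
  ring

/-- The nonvanishing α-connection component of the GTS geometry:
`-∂³D/∂λ²∂μ` at `(λ,λ)` equals `-((1-α)/2)·T·C·Γ(3-a)·λ^{a-3}`, where
`D(λ,μ) = (4/(1-α²))·(1 - exp(-T·C·Γ(-a)·(β·λ^a+(1-β)·μ^a-(βλ+(1-β)μ)^a)))`. -/
theorem gts_alpha_connection (a T C α β : ℝ)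
    (ha : a ∈ Set.Ioo (0 : ℝ) 2) (ha1 : a ≠ 1) (hT : 0 < T) (hC : 0 < C)
    (hα : α ∈ Set.Ioo (-1 : ℝ) 1) (hβ : β = (1 - α) / 2)
    (lam : ℝ) (hlam : 0 < lam) :
    -(deriv (fun mu : ℝ =>
        deriv (deriv (fun l : ℝ =>
          (4 / (1 - α ^ 2)) *
            (1 - Real.exp (-(T * C * Real.Gamma (-a) *
              (β * l ^ a + (1 - β) * mu ^ a - (β * l + (1 - β) * mu) ^ a)))))) lam) lam)
      = -((1 - α) / 2) * T * C * Real.Gamma (3 - a) * lam ^ (a - 3) := by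
  obtain ⟨ha0, ha2⟩ := ha
  obtain ⟨hα1, hα2⟩ := hα
  have hβ0 : 0 < β := by rw [hβ]; linarith
  have hβ1 : β < 1 := by rw [hβ]; linarith
  set K : ℝ := 4 / (1 - α ^ 2) with hK
  set M : ℝ := T * C * Real.Gamma (-a) with hM
  have hmain : (fun mu : ℝ =>
      deriv (deriv (fun l : ℝ =>
        K * (1 - Real.exp (-(M *
          (β * l ^ a + (1 - β) * mu ^ a - (β * l + (1 - β) * mu) ^ a)))))) lam)
      =ᶠ[𝓝 lam] fun mu =>
        K * M * Real.exp (-(M * gtsg a β mu lam)) *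
          (gtsg2 a β mu lam - M * gtsg1 a β mu lam ^ 2) := by
    filter_upwards [Ioi_mem_nhds hlam] with mu hmu
    exact gts_deriv2 hβ0 hβ1 hmu hlam
  rw [hmain.deriv_eq]
  -- derivative of the explicit second derivative in μ at the diagonal
  have hgm := gts_hasDerivAt_g_mu hβ0 hβ1 hlam hlam (a := a)
  have hg1m := gts_hasDerivAt_g1_mu hβ0 hβ1 hlam hlam (a := a)
  have hg2m := gts_hasDerivAt_g2_mu hβ0 hβ1 hlam hlam (a := a)
  have hE := ((hgm.const_mul M).neg).exp
  have hP := hg2m.sub ((hg1m.pow 2).const_mul M)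
  have hF2 := (hE.const_mul (K * M)).mul hP
  have hF2' : HasDerivAt (fun mu => K * M * Real.exp (-(M * gtsg a β mu lam)) *
      (gtsg2 a β mu lam - M * gtsg1 a β mu lam ^ 2)) _ lam := hF2
  rw [hF2'.deriv]
  simp only [Pi.neg_apply, Pi.sub_apply, Pi.pow_apply]
  have hdiag : β * lam + (1 - β) * lam = lam := by ring
  have hg0 : gtsg a β lam lam = 0 := by unfold gtsg; rw [hdiag]; ring
  have hg10 : gtsg1 a β lam lam = 0 := by unfold gtsg1; rw [hdiag]; ring
  rw [hg0, hg10, hdiag, mul_zero, neg_zero, Real.exp_zero]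
  -- Gamma identity
  have h0a : (-a : ℝ) ≠ 0 := by intro h; nlinarith
  have h1a : (1 - a : ℝ) ≠ 0 := by intro h; apply ha1; linarith
  have h2a : (2 - a : ℝ) ≠ 0 := by intro h; nlinarith
  have e1 : Real.Gamma (-a + 1) = -a * Real.Gamma (-a) := Real.Gamma_add_one h0a
  have e2 : Real.Gamma ((1 - a) + 1) = (1 - a) * Real.Gamma (1 - a) := Real.Gamma_add_one h1a
  have e3 : Real.Gamma ((2 - a) + 1) = (2 - a) * Real.Gamma (2 - a) := Real.Gamma_add_one h2a
  have hG : Real.Gamma (3 - a) = (2 - a) * ((1 - a) * (-a * Real.Gamma (-a))) := by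
    rw [show (3 : ℝ) - a = (2 - a) + 1 from by ring, e3,
      show (2 : ℝ) - a = (1 - a) + 1 from by ring, e2,
      show (1 : ℝ) - a = -a + 1 from by ring, e1]
  rw [hG, hK, hM, hβ]
  have hne : (1 : ℝ) - α ^ 2 ≠ 0 := by nlinarith
  field_simp
  ring
end

section
/- As a → 0 (along the punctured neighborhood filter of 0 in ℝ restricted to a where Γ(a) is defined), the quantity Γ(a) - 1/a converges to -γ, where Γ is the real Gamma function and γ is the Euler–Mascheroni constant. -/
open Real Filter Topology

/-- As `a → 0` (punctured), `Γ(a) - 1/a → -γ` where `γ` is the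
Euler–Mascheroni constant. -/
theorem Gamma_sub_inv_tendsto_neg_eulerMascheroni :
    Filter.Tendsto (fun a : ℝ => Real.Gamma a - 1 / a) (𝓝[≠] (0 : ℝ))
      (𝓝 (-Real.eulerMascheroniConstant)) := by
  have h := Real.hasDerivAt_Gamma_one
  rw [hasDerivAt_iff_tendsto_slope] at h
  have h2 : Tendsto (fun a : ℝ => a + 1) (𝓝[≠] (0:ℝ)) (𝓝[≠] (1:ℝ)) := by
    apply tendsto_nhdsWithin_of_tendsto_nhds_of_eventually_within
    · simpa using ((continuous_add_right (1:ℝ)).tendsto (0:ℝ)).mono_left nhdsWithin_le_nhds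
    · filter_upwards [self_mem_nhdsWithin] with a ha
      simp only [Set.mem_compl_iff, Set.mem_singleton_iff] at ha ⊢
      intro hc; exact ha (by linarith)
  refine (h.comp h2).congr' ?_
  filter_upwards [self_mem_nhdsWithin] with a ha
  simp only [Set.mem_compl_iff, Set.mem_singleton_iff] at ha
  simp only [Function.comp, slope_def_field]
  rw [Real.Gamma_add_one ha, Real.Gamma_one]
  field_simp
  linear_combination (a * Gamma a - 1) * mul_inv_cancel₀ ha
end

section
/- Let β ∈ (0,1) and λ, μ > 0. Then as a → 0 from the right, Γ(-a)·(β·λ^a + (1-β)·μ^a - (βλ+(1-β)μ)^a) converges to log(βλ+(1-β)μ) - β·log λ - (1-β)·log μ, where Γ is the real Gamma function and powers are real powers. -/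
open Real Filter Topology

/-- As `a → 0⁺`, `Γ(-a)·(β·λ^a + (1-β)·μ^a - (βλ+(1-β)μ)^a)` converges to
`log(βλ+(1-β)μ) - β·log λ - (1-β)·log μ`. -/
theorem cts_to_vg_alpha_term_limit (β lam mu : ℝ)
    (hβ : β ∈ Set.Ioo (0 : ℝ) 1) (hlam : 0 < lam) (hmu : 0 < mu) :
    Filter.Tendsto
      (fun a : ℝ => Real.Gamma (-a) *
        (β * lam ^ a + (1 - β) * mu ^ a - (β * lam + (1 - β) * mu) ^ a))
      (𝓝[Set.Ioo (0 : ℝ) 1] 0)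
      (𝓝 (Real.log (β * lam + (1 - β) * mu)
        - β * Real.log lam - (1 - β) * Real.log mu)) := by
  obtain ⟨hβ0, hβ1⟩ := hβ
  set ν := β * lam + (1 - β) * mu with hν
  have h1β : 0 < 1 - β := by linarith
  have hνpos : 0 < ν := by positivity
  set h : ℝ → ℝ := fun a => β * lam ^ a + (1 - β) * mu ^ a - ν ^ a with hh
  have hd : HasDerivAt h (β * Real.log lam + (1 - β) * Real.log mu - Real.log ν) 0 := by
    have h1 : HasDerivAt (fun a : ℝ => lam ^ a) (Real.log lam) 0 := by
      simpa using (Real.hasStrictDerivAt_const_rpow hlam 0).hasDerivAt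
    have h2 : HasDerivAt (fun a : ℝ => mu ^ a) (Real.log mu) 0 := by
      simpa using (Real.hasStrictDerivAt_const_rpow hmu 0).hasDerivAt
    have h3 : HasDerivAt (fun a : ℝ => ν ^ a) (Real.log ν) 0 := by
      simpa using (Real.hasStrictDerivAt_const_rpow hνpos 0).hasDerivAt
    exact ((h1.const_mul β).add (h2.const_mul (1 - β))).sub h3
  have h0 : h 0 = 0 := by simp [hh]
  have hsub : 𝓝[Set.Ioo (0:ℝ) 1] (0:ℝ) ≤ 𝓝[≠] 0 :=
    nhdsWithin_mono 0 (fun x hx => ne_of_gt hx.1)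
  -- slope tendsto
  have hslope : Tendsto (fun a : ℝ => h a / a) (𝓝[Set.Ioo (0:ℝ) 1] 0)
      (𝓝 (β * Real.log lam + (1 - β) * Real.log mu - Real.log ν)) := by
    have := (hasDerivAt_iff_tendsto_slope.mp hd).mono_left hsub
    refine this.congr' ?_
    filter_upwards [self_mem_nhdsWithin] with a ha
    simp [slope, h0, div_eq_inv_mul]
  -- Gamma(1-a) → 1
  have hGamma : Tendsto (fun a : ℝ => Real.Gamma (1 - a)) (𝓝[Set.Ioo (0:ℝ) 1] 0)
      (𝓝 1) := by
    have hc : ContinuousAt Real.Gamma 1 := by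
      refine (Real.differentiableAt_Gamma ?_).continuousAt
      intro m hm
      have : (0:ℝ) ≤ (m:ℝ) := m.cast_nonneg
      linarith [hm]
    have : Tendsto (fun a : ℝ => 1 - a) (𝓝[Set.Ioo (0:ℝ) 1] 0) (𝓝 1) := by
      have : Tendsto (fun a : ℝ => 1 - a) (𝓝 0) (𝓝 (1 - 0)) :=
        tendsto_const_nhds.sub tendsto_id
      simpa using this.mono_left nhdsWithin_le_nhds
    simpa [Function.comp_def] using (hc.tendsto.comp this)
  have hmain : Tendsto (fun a : ℝ => Real.Gamma (1 - a) * (-(h a / a)))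
      (𝓝[Set.Ioo (0:ℝ) 1] 0)
      (𝓝 (Real.log ν - β * Real.log lam - (1 - β) * Real.log mu)) := by
    have := hGamma.mul hslope.neg
    convert this using 2
    ring
  refine hmain.congr' ?_
  filter_upwards [self_mem_nhdsWithin] with a ha
  have ha0 : a ≠ 0 := ne_of_gt ha.1
  have : Real.Gamma (-a) = Real.Gamma (1 - a) / (-a) := by
    have := Real.Gamma_add_one (s := -a) (neg_ne_zero.mpr ha0)
    rw [show -a + 1 = 1 - a by ring] at this
    field_simp [this]
    rw [this]; ring
  rw [this]
  simp only [hh, hν]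
  ring
end

section
/- Let λ, μ > 0. Then as a → 0 from the right (with a avoiding 1), Γ(-a)·((a-1)·λ^a - a·μ·λ^{a-1} + μ^a) converges to μ/λ - 1 + log λ - log μ, where Γ is the real Gamma function and powers are real powers. -/
open Real Filter Topology

lemma aux_hasDerivAt (lam mu : ℝ) (hlam : 0 < lam) (hmu : 0 < mu) :
    HasDerivAt (fun a : ℝ => (a - 1) * lam ^ a - a * mu * lam ^ (a - 1) + mu ^ a)
      ((1 - Real.log lam) - mu / lam + Real.log mu) 0 := by
  have h1 : HasDerivAt (fun a : ℝ => lam ^ a) (lam ^ (0:ℝ) * Real.log lam) 0 :=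
    (Real.hasStrictDerivAt_const_rpow hlam 0).hasDerivAt
  have h3 : HasDerivAt (fun a : ℝ => mu ^ a) (mu ^ (0:ℝ) * Real.log mu) 0 :=
    (Real.hasStrictDerivAt_const_rpow hmu 0).hasDerivAt
  have hsub : HasDerivAt (fun a : ℝ => a - 1) 1 (0:ℝ) := (hasDerivAt_id 0).sub_const 1
  have h2 : HasDerivAt (fun a : ℝ => lam ^ (a - 1)) (lam ^ ((0:ℝ) - 1) * Real.log lam) 0 := by
    have := ((Real.hasStrictDerivAt_const_rpow hlam ((0:ℝ) - 1)).hasDerivAt.comp 0 hsub)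
    simpa [Function.comp_def] using this
  have hA : HasDerivAt (fun a : ℝ => (a - 1) * lam ^ a)
      (1 * lam ^ (0:ℝ) + ((0:ℝ) - 1) * (lam ^ (0:ℝ) * Real.log lam)) 0 := hsub.mul h1
  have hmu' : HasDerivAt (fun a : ℝ => a * mu) mu (0:ℝ) := by
    simpa using (hasDerivAt_id (0:ℝ)).mul_const mu
  have hB : HasDerivAt (fun a : ℝ => a * mu * lam ^ (a - 1))
      (mu * lam ^ ((0:ℝ) - 1) + (0 * mu) * (lam ^ ((0:ℝ) - 1) * Real.log lam)) 0 :=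
    hmu'.mul h2
  have h := (hA.sub hB).add h3
  refine h.congr_deriv ?_
  have : lam ^ ((0:ℝ) - 1) = lam⁻¹ := by
    rw [zero_sub, Real.rpow_neg_one]
  rw [Real.rpow_zero, Real.rpow_zero, this, div_eq_mul_inv]
  ring

/-- As `a → 0⁺`, `Γ(-a)·((a-1)·λ^a - a·μ·λ^{a-1} + μ^a)` converges to
`μ/λ - 1 + log λ - log μ`. -/
theorem cts_to_vg_kl_term_limit (lam mu : ℝ) (hlam : 0 < lam) (hmu : 0 < mu) :
    Filter.Tendsto
      (fun a : ℝ => Real.Gamma (-a) *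
        ((a - 1) * lam ^ a - a * mu * lam ^ (a - 1) + mu ^ a))
      (𝓝[Set.Ioo (0 : ℝ) 1] 0)
      (𝓝 (mu / lam - 1 + Real.log lam - Real.log mu)) := by
  set g : ℝ → ℝ := fun a => (a - 1) * lam ^ a - a * mu * lam ^ (a - 1) + mu ^ a with hg
  have hg0 : g 0 = 0 := by simp [hg, Real.rpow_zero]
  set L : ℝ := (1 - Real.log lam) - mu / lam + Real.log mu with hL
  have hd : HasDerivAt g L 0 := aux_hasDerivAt lam mu hlam hmu
  have hslope : Tendsto (fun a : ℝ => g a / a) (𝓝[≠] 0) (𝓝 L) := by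
    have := hasDerivAt_iff_tendsto_slope.mp hd
    refine this.congr' ?_
    filter_upwards [self_mem_nhdsWithin] with a ha
    simp [slope, hg0, div_eq_inv_mul]
  have hle : 𝓝[Set.Ioo (0:ℝ) 1] 0 ≤ 𝓝[≠] (0:ℝ) :=
    nhdsWithin_mono 0 (fun x hx => ne_of_gt hx.1)
  have hslope' : Tendsto (fun a : ℝ => -(g a / a)) (𝓝[Set.Ioo (0:ℝ) 1] 0) (𝓝 (-L)) :=
    ((hslope.mono_left hle).neg)
  have hGamma : Tendsto (fun a : ℝ => Real.Gamma (1 - a)) (𝓝[Set.Ioo (0:ℝ) 1] 0)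
      (𝓝 1) := by
    have hc : ContinuousAt Real.Gamma 1 := by
      refine (Real.differentiableAt_Gamma ?_).continuousAt
      intro m h
      have : (0:ℝ) ≤ (m:ℝ) := Nat.cast_nonneg m
      linarith
    have : Tendsto (fun a : ℝ => (1:ℝ) - a) (𝓝[Set.Ioo (0:ℝ) 1] 0) (𝓝 1) := by
      have h : Tendsto (fun a : ℝ => (1:ℝ) - a) (𝓝[Set.Ioo (0:ℝ) 1] 0) (𝓝 (1 - 0)) :=
        (((continuous_const (y := (1:ℝ))).sub continuous_id).tendsto 0).mono_left
          nhdsWithin_le_nhds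
      simpa using h
    simpa [Real.Gamma_one, Function.comp_def] using hc.tendsto.comp this
  have hmul := hGamma.mul hslope'
  have hlim : -L = mu / lam - 1 + Real.log lam - Real.log mu := by rw [hL]; ring
  rw [one_mul, hlim] at hmul
  refine hmul.congr' ?_
  filter_upwards [self_mem_nhdsWithin] with a ha
  have ha0 : -a ≠ 0 := by simpa using (ne_of_gt ha.1)
  have haa : a ≠ 0 := ne_of_gt ha.1
  have hrec : Real.Gamma (1 - a) = -a * Real.Gamma (-a) := by
    have h := Real.Gamma_add_one ha0
    rw [show (1:ℝ) - a = -a + 1 by ring, h]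
  show Real.Gamma (1 - a) * -(g a / a) = Real.Gamma (-a) * g a
  rw [hrec]
  field_simp
end

section
/- Let β ∈ (0,1) and λ, μ > 0. Then the function x ↦ (β·e^{-λx} + (1-β)·e^{-μx} - e^{-(βλ+(1-β)μ)x})/x is Lebesgue integrable on (0,∞) and ∫_0^∞ (β·e^{-λx} + (1-β)·e^{-μx} - e^{-(βλ+(1-β)μ)x})·x^{-1} dx = log(βλ+(1-β)μ) - β·log λ - (1-β)·log μ. -/
open Real Filter Topology MeasureTheory

open Set

lemma exp_inner (x : ℝ) (hx : 0 < x) (a b : ℝ) (hab : a ≤ b) :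
    ∫ t in Ioc a b, Real.exp (-(t * x)) = (Real.exp (-(a * x)) - Real.exp (-(b * x))) / x := by
  rw [← intervalIntegral.integral_of_le hab]
  have : ∀ t : ℝ, Real.exp (-(t * x)) = (fun u => Real.exp (-u)) (x * t) := by
    intro t; simp [mul_comm]
  simp_rw [this]
  rw [intervalIntegral.integral_comp_mul_left (fun u => Real.exp (-u)) hx.ne',
    intervalIntegral.integral_comp_neg (fun u => Real.exp u), integral_exp]
  field_simp
  rw [smul_eq_mul, ← mul_assoc, mul_one_div_cancel hx.ne', one_mul]

lemma exp_Ioi (t : ℝ) (ht : 0 < t) :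
    ∫ x in Ioi (0:ℝ), Real.exp (-(t * x)) = 1 / t := by
  have := integral_rpow_mul_exp_neg_mul_Ioi (a := 1) (r := t) one_pos ht
  simpa using this

lemma frullani_le {a b : ℝ} (ha : 0 < a) (hab : a ≤ b) :
    IntegrableOn (fun x => (Real.exp (-(a * x)) - Real.exp (-(b * x))) / x) (Ioi (0:ℝ)) ∧
    ∫ x in Ioi (0:ℝ), (Real.exp (-(a * x)) - Real.exp (-(b * x))) / x
      = Real.log b - Real.log a := by
  have hb : 0 < b := lt_of_lt_of_le ha hab
  set μ := volume.restrict (Ioi (0:ℝ))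
  set ν := volume.restrict (Ioc a b)
  have hmeas : AEStronglyMeasurable (fun p : ℝ × ℝ => Real.exp (-(p.2 * p.1))) (μ.prod ν) :=
    (Real.continuous_exp.comp (continuous_snd.mul continuous_fst).neg).aestronglyMeasurable
  have hbound : IntegrableOn (fun x => (b - a) * Real.exp (-(a * x))) (Ioi (0:ℝ)) := by
    have := exp_neg_integrableOn_Ioi 0 ha
    simp_rw [neg_mul] at this
    exact this.const_mul _
  have hF : Integrable (fun p : ℝ × ℝ => Real.exp (-(p.2 * p.1))) (μ.prod ν) := by
    rw [MeasureTheory.integrable_prod_iff hmeas]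
    constructor
    · filter_upwards with x
      exact (Real.continuous_exp.comp ((continuous_id.mul continuous_const).neg)).integrableOn_Ioc
    · apply MeasureTheory.Integrable.mono (g := fun x => (b - a) * Real.exp (-(a * x))) hbound
      · exact (MeasureTheory.StronglyMeasurable.integral_prod_right'
          ((Real.continuous_exp.comp
            (continuous_snd.mul continuous_fst).neg).norm.stronglyMeasurable)).aestronglyMeasurable
      · rw [MeasureTheory.ae_restrict_iff' measurableSet_Ioi]
        filter_upwards with x hx
        simp only [Real.norm_eq_abs, Real.abs_exp]
        rw [abs_of_nonneg (integral_nonneg (fun y => (Real.exp_pos _).le)),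
          abs_of_nonneg (mul_nonneg (by linarith) (Real.exp_pos _).le)]
        calc ∫ y in Ioc a b, Real.exp (-(y * x))
            ≤ ∫ _y in Ioc a b, Real.exp (-(a * x)) := by
              apply MeasureTheory.setIntegral_mono_on
              · exact (Real.continuous_exp.comp
                  ((continuous_id.mul continuous_const).neg)).integrableOn_Ioc
              · exact integrableOn_const measure_Ioc_lt_top.ne enorm_ne_top
              · exact measurableSet_Ioc
              · intro y hy
                exact Real.exp_le_exp.2 (by nlinarith [hy.1, le_of_lt (mem_Ioi.1 hx)])
          _ = (b - a) * Real.exp (-(a * x)) := by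
              rw [setIntegral_const, Real.volume_real_Ioc_of_le hab, smul_eq_mul]
  have hint : Integrable (fun x => ∫ t, Real.exp (-(t * x)) ∂ν) μ := hF.integral_prod_left
  have hcong : (fun x => ∫ t, Real.exp (-(t * x)) ∂ν)
      =ᵐ[μ] fun x => (Real.exp (-(a * x)) - Real.exp (-(b * x))) / x := by
    filter_upwards [MeasureTheory.ae_restrict_mem (μ := volume) measurableSet_Ioi] with x hx
    exact exp_inner x (mem_Ioi.1 hx) a b hab
  have hswap := MeasureTheory.integral_integral_swap (f := fun x t => Real.exp (-(t * x))) hF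
  have hval : ∫ t, (∫ x, Real.exp (-(t * x)) ∂μ) ∂ν = Real.log b - Real.log a := by
    rw [show (fun t => ∫ x, Real.exp (-(t * x)) ∂μ) = fun t => ∫ x in Ioi (0:ℝ), Real.exp (-(t * x)) from rfl]
    rw [MeasureTheory.setIntegral_congr_fun measurableSet_Ioc
      (fun t ht => exp_Ioi t (lt_of_lt_of_le ha ht.1.le))]
    rw [← intervalIntegral.integral_of_le hab, integral_one_div_of_pos ha hb,
      Real.log_div hb.ne' ha.ne']
  refine ⟨hint.congr hcong, ?_⟩
  rw [← MeasureTheory.integral_congr_ae hcong, hswap, hval]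

lemma frullani {a b : ℝ} (ha : 0 < a) (hb : 0 < b) :
    IntegrableOn (fun x => (Real.exp (-(a * x)) - Real.exp (-(b * x))) / x) (Ioi (0:ℝ)) ∧
    ∫ x in Ioi (0:ℝ), (Real.exp (-(a * x)) - Real.exp (-(b * x))) / x
      = Real.log b - Real.log a := by
  rcases le_total a b with hab | hab
  · exact frullani_le ha hab
  · obtain ⟨hi, hv⟩ := frullani_le hb hab
    have hkey : (fun x : ℝ => (Real.exp (-(a * x)) - Real.exp (-(b * x))) / x)
        = fun x => -((Real.exp (-(b * x)) - Real.exp (-(a * x))) / x) := by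
      funext x; ring
    constructor
    · rw [hkey]; exact hi.neg
    · rw [hkey, MeasureTheory.integral_neg, hv]; ring

/-- For `β ∈ (0,1)` and `λ, μ > 0`, the function
`x ↦ (β·e^{-λx} + (1-β)·e^{-μx} - e^{-(βλ+(1-β)μ)x})/x` is Lebesgue integrable
on `(0,∞)` and its integral equals `log(βλ+(1-β)μ) - β·log λ - (1-β)·log μ`. -/
theorem vg_alpha_integral_eval (β lam mu : ℝ)
    (hβ : β ∈ Set.Ioo (0 : ℝ) 1) (hlam : 0 < lam) (hmu : 0 < mu) :
    IntegrableOn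
      (fun x : ℝ =>
        (β * Real.exp (-(lam * x)) + (1 - β) * Real.exp (-(mu * x))
          - Real.exp (-((β * lam + (1 - β) * mu) * x))) / x)
      (Set.Ioi (0 : ℝ)) ∧
    ∫ x in Set.Ioi (0 : ℝ),
        (β * Real.exp (-(lam * x)) + (1 - β) * Real.exp (-(mu * x))
          - Real.exp (-((β * lam + (1 - β) * mu) * x))) * x⁻¹
      = Real.log (β * lam + (1 - β) * mu)
          - β * Real.log lam - (1 - β) * Real.log mu := by
  obtain ⟨hβ0, hβ1⟩ := hβ
  have hν : 0 < β * lam + (1 - β) * mu := by nlinarith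
  obtain ⟨h1i, h1v⟩ := frullani hlam hν
  obtain ⟨h2i, h2v⟩ := frullani hmu hν
  have key : ∀ x : ℝ,
      (β * Real.exp (-(lam * x)) + (1 - β) * Real.exp (-(mu * x))
          - Real.exp (-((β * lam + (1 - β) * mu) * x))) / x
        = β * ((Real.exp (-(lam * x)) - Real.exp (-((β * lam + (1 - β) * mu) * x))) / x)
          + (1 - β) * ((Real.exp (-(mu * x)) - Real.exp (-((β * lam + (1 - β) * mu) * x))) / x) := by
    intro x
    rw [mul_div_assoc', mul_div_assoc', ← add_div]
    congr 1
    ring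
  have H := (h1i.const_mul β).add (h2i.const_mul (1 - β))
  constructor
  · exact H.congr (Filter.Eventually.of_forall fun x => (key x).symm)
  · simp_rw [← div_eq_mul_inv]
    rw [MeasureTheory.integral_congr_ae (Filter.Eventually.of_forall key),
      MeasureTheory.integral_add (h1i.const_mul β) (h2i.const_mul (1 - β)),
      MeasureTheory.integral_const_mul, MeasureTheory.integral_const_mul, h1v, h2v]
    ring
end

section
/- Let T > 0, C > 0, and α ∈ (-1,1) with β = (1-α)/2. Define D : (0,∞) × (0,∞) → ℝ by D(λ,μ) = (4/(1-α²))·(1 - exp(-T·C·(log(βλ+(1-β)μ) - β·log λ - (1-β)·log μ))). Then for every λ > 0, the negative of the second mixed partial derivative -∂²D/∂λ∂μ evaluated at (λ, λ) equals T·C/λ². -/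
open Real Filter Topology

/-- The Fisher information entry of the variance gamma geometry:
`-∂²D/∂λ∂μ` at `(λ,λ)` equals `T·C/λ²`, where
`D(λ,μ) = (4/(1-α²))·(1 - exp(-T·C·(log(βλ+(1-β)μ) - β·log λ - (1-β)·log μ)))`. -/
theorem vg_fisher_metric (T C α β : ℝ) (hT : 0 < T) (hC : 0 < C)
    (hα : α ∈ Set.Ioo (-1 : ℝ) 1) (hβ : β = (1 - α) / 2)
    (lam : ℝ) (hlam : 0 < lam) :
    -(deriv (fun mu : ℝ =>
        deriv (fun l : ℝ =>
          (4 / (1 - α ^ 2)) *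
            (1 - Real.exp (-(T * C *
              (Real.log (β * l + (1 - β) * mu)
                - β * Real.log l - (1 - β) * Real.log mu))))) lam) lam)
      = T * C / lam ^ 2 := by
  obtain ⟨hα1, hα2⟩ := hα
  have hβpos : 0 < β := by rw [hβ]; linarith
  have hβ1 : β < 1 := by rw [hβ]; linarith
  -- closed form for the inner derivative
  set g : ℝ → ℝ := fun mu =>
    (T * C * (β * (β * lam + (1 - β) * mu)⁻¹ - β * lam⁻¹)) *
      Real.exp (-(T * C * (Real.log (β * lam + (1 - β) * mu)
        - β * Real.log lam - (1 - β) * Real.log mu))) * (4 / (1 - α ^ 2)) with hg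
  have step1 : ∀ mu : ℝ, 0 < mu →
      deriv (fun l : ℝ =>
          (4 / (1 - α ^ 2)) *
            (1 - Real.exp (-(T * C *
              (Real.log (β * l + (1 - β) * mu)
                - β * Real.log l - (1 - β) * Real.log mu))))) lam = g mu := by
    intro mu hmu
    have hs : 0 < β * lam + (1 - β) * mu := by
      have := mul_pos hβpos hlam
      have := mul_pos (by linarith : (0:ℝ) < 1 - β) hmu
      linarith
    have h1 : HasDerivAt (fun l : ℝ => β * l + (1 - β) * mu) β lam := by
      simpa using ((hasDerivAt_id lam).const_mul β).add_const ((1 - β) * mu)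
    have h2 := h1.log hs.ne'
    have h3 : HasDerivAt (fun l : ℝ => β * Real.log l) (β * lam⁻¹) lam :=
      (Real.hasDerivAt_log hlam.ne').const_mul β
    have h4 := (h2.sub h3).sub_const ((1 - β) * Real.log mu)
    have h5 := ((h4.const_mul (T * C)).neg).exp
    have h6 := (h5.const_sub 1).const_mul (4 / (1 - α ^ 2))
    simp only [Pi.sub_apply, Pi.neg_apply] at h6
    rw [h6.deriv]
    ring
  have hev : (fun mu : ℝ =>
      deriv (fun l : ℝ =>
          (4 / (1 - α ^ 2)) *
            (1 - Real.exp (-(T * C *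
              (Real.log (β * l + (1 - β) * mu)
                - β * Real.log l - (1 - β) * Real.log mu))))) lam) =ᶠ[𝓝 lam] g := by
    filter_upwards [eventually_gt_nhds hlam] with mu hmu
    exact step1 mu hmu
  rw [hev.deriv_eq]
  -- derivative of g at lam
  have hs : 0 < β * lam + (1 - β) * lam := by
    have : β * lam + (1 - β) * lam = lam := by ring
    linarith [this ▸ hlam]
  have p1 : HasDerivAt (fun mu : ℝ => β * lam + (1 - β) * mu) (1 - β) lam := by
    simpa using (((hasDerivAt_id lam).const_mul (1 - β)).const_add (β * lam))
  have pu : HasDerivAt (fun mu : ℝ => T * C * (β * (β * lam + (1 - β) * mu)⁻¹ - β * lam⁻¹))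
      (T * C * (β * (-(1 - β) / (β * lam + (1 - β) * lam) ^ 2))) lam := by
    have := (((p1.inv hs.ne').const_mul β).sub_const (β * lam⁻¹)).const_mul (T * C)
    simpa using this
  have p2 := p1.log hs.ne'
  have p3 : HasDerivAt (fun mu : ℝ => (1 - β) * Real.log mu) ((1 - β) * lam⁻¹) lam :=
    (Real.hasDerivAt_log hlam.ne').const_mul (1 - β)
  have p4 := ((p2.sub_const (β * Real.log lam)).sub p3).const_mul (T * C)
  have pE := p4.neg.exp
  have pg := ((pu.mul pE).mul_const (4 / (1 - α ^ 2)))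
  simp only [Pi.sub_apply, Pi.neg_apply, Pi.mul_apply] at pg
  rw [hg, pg.deriv]
  have hss : β * lam + (1 - β) * lam = lam := by ring
  rw [hss]
  have harg : Real.log lam - β * Real.log lam - (1 - β) * Real.log lam = 0 := by ring
  rw [harg]
  have hαsq : (0:ℝ) < 1 - α ^ 2 := by nlinarith
  have hβval : β * (1 - β) = (1 - α ^ 2) / 4 := by rw [hβ]; ring
  rw [mul_zero, neg_zero, Real.exp_zero]
  have hlam2 : lam ^ 2 ≠ 0 := pow_ne_zero 2 hlam.ne'
  subst hβ
  field_simp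
  ring
end

section
/- Let T > 0, C > 0, and α ∈ (-1,1) with β = (1-α)/2. Define D : (0,∞) × (0,∞) → ℝ by D(λ,μ) = (4/(1-α²))·(1 - exp(-T·C·(log(βλ+(1-β)μ) - β·log λ - (1-β)·log μ))). Then for every λ > 0, the negative of the third mixed partial derivative -∂³D/∂λ²∂μ evaluated at (λ, λ) equals -(1-α)·T·C/λ³. -/
open Real Filter Topology

/-- First l-derivative of D. -/
lemma vg_aux1 (K A β : ℝ) {l mu : ℝ} (hβ0 : 0 < β) (hβ1 : β < 1) (hl : 0 < l) (hmu : 0 < mu) :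
    HasDerivAt (fun x : ℝ => K * (1 - Real.exp (-(A *
        (Real.log (β * x + (1 - β) * mu) - β * Real.log x - (1 - β) * Real.log mu)))))
      (K * A * ((β / (β * l + (1 - β) * mu) - β / l) *
        Real.exp (-(A * (Real.log (β * l + (1 - β) * mu) - β * Real.log l
          - (1 - β) * Real.log mu))))) l := by
  have hs : 0 < β * l + (1 - β) * mu := by nlinarith
  have h1 : HasDerivAt (fun x : ℝ => β * x + (1 - β) * mu) β l := by
    simpa using ((hasDerivAt_id l).const_mul β).add_const ((1 - β) * mu)
  have hg : HasDerivAt (fun x : ℝ => Real.log (β * x + (1 - β) * mu) - β * Real.log x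
      - (1 - β) * Real.log mu) (β / (β * l + (1 - β) * mu) - β * l⁻¹) l := by
    have h2 := h1.log hs.ne'
    have h3 := (Real.hasDerivAt_log hl.ne').const_mul β
    simpa using (h2.sub h3).sub_const ((1 - β) * Real.log mu)
  have hE := ((hg.const_mul A).neg).exp
  have := (hE.const_sub 1).const_mul K
  refine this.congr_deriv ?_
  simp only [Pi.neg_apply]
  ring

/-- Second l-derivative of D. -/
lemma vg_aux2 (K A β : ℝ) {l mu : ℝ} (hβ0 : 0 < β) (hβ1 : β < 1) (hl : 0 < l) (hmu : 0 < mu) :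
    HasDerivAt (fun x : ℝ => K * A * ((β / (β * x + (1 - β) * mu) - β / x) *
        Real.exp (-(A * (Real.log (β * x + (1 - β) * mu) - β * Real.log x
          - (1 - β) * Real.log mu)))))
      (K * A * (Real.exp (-(A * (Real.log (β * l + (1 - β) * mu) - β * Real.log l
          - (1 - β) * Real.log mu))) *
        ((β / l ^ 2 - β ^ 2 / (β * l + (1 - β) * mu) ^ 2)
          - A * (β / (β * l + (1 - β) * mu) - β / l) ^ 2))) l := by
  have hs : 0 < β * l + (1 - β) * mu := by nlinarith
  have h1 : HasDerivAt (fun x : ℝ => β * x + (1 - β) * mu) β l := by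
    simpa using ((hasDerivAt_id l).const_mul β).add_const ((1 - β) * mu)
  have hP := ((hasDerivAt_const l β).div h1 hs.ne').sub
    ((hasDerivAt_const l β).div (hasDerivAt_id l) hl.ne')
  have hg : HasDerivAt (fun x : ℝ => Real.log (β * x + (1 - β) * mu) - β * Real.log x
      - (1 - β) * Real.log mu) (β / (β * l + (1 - β) * mu) - β * l⁻¹) l := by
    have h2 := h1.log hs.ne'
    have h3 := (Real.hasDerivAt_log hl.ne').const_mul β
    simpa using (h2.sub h3).sub_const ((1 - β) * Real.log mu)
  have hE := ((hg.const_mul A).neg).exp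
  have := (hP.mul hE).const_mul (K * A)
  refine this.congr_deriv ?_
  simp only [Pi.neg_apply, Pi.sub_apply, Pi.div_apply, id]
  field_simp
  ring

/-- The nonvanishing α-connection component of the variance gamma geometry:
`-∂³D/∂λ²∂μ` at `(λ,λ)` equals `-(1-α)·T·C/λ³`, where
`D(λ,μ) = (4/(1-α²))·(1 - exp(-T·C·(log(βλ+(1-β)μ) - β·log λ - (1-β)·log μ)))`. -/
theorem vg_alpha_connection (T C α β : ℝ) (hT : 0 < T) (hC : 0 < C)
    (hα : α ∈ Set.Ioo (-1 : ℝ) 1) (hβ : β = (1 - α) / 2)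
    (lam : ℝ) (hlam : 0 < lam) :
    -(deriv (fun mu : ℝ =>
        deriv (deriv (fun l : ℝ =>
          (4 / (1 - α ^ 2)) *
            (1 - Real.exp (-(T * C *
              (Real.log (β * l + (1 - β) * mu)
                - β * Real.log l - (1 - β) * Real.log mu)))))) lam) lam)
      = -(1 - α) * T * C / lam ^ 3 := by
  obtain ⟨hα1, hα2⟩ := hα
  have hβ0 : 0 < β := by rw [hβ]; linarith
  have hβ1 : β < 1 := by rw [hβ]; linarith
  set K : ℝ := 4 / (1 - α ^ 2) with hK
  set A : ℝ := T * C with hA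
  -- Step 2: the inner double derivative as a function of mu
  have hstep2 : ∀ mu : ℝ, 0 < mu →
      deriv (deriv (fun l : ℝ => K *
        (1 - Real.exp (-(A * (Real.log (β * l + (1 - β) * mu)
          - β * Real.log l - (1 - β) * Real.log mu)))))) lam
      = K * A * (Real.exp (-(A * (Real.log (β * lam + (1 - β) * mu) - β * Real.log lam
          - (1 - β) * Real.log mu))) *
        ((β / lam ^ 2 - β ^ 2 / (β * lam + (1 - β) * mu) ^ 2)
          - A * (β / (β * lam + (1 - β) * mu) - β / lam) ^ 2)) := by
    intro mu hmu
    have hev : deriv (fun l : ℝ => K *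
        (1 - Real.exp (-(A * (Real.log (β * l + (1 - β) * mu)
          - β * Real.log l - (1 - β) * Real.log mu)))))
        =ᶠ[𝓝 lam] (fun l : ℝ => K * A * ((β / (β * l + (1 - β) * mu) - β / l) *
          Real.exp (-(A * (Real.log (β * l + (1 - β) * mu) - β * Real.log l
            - (1 - β) * Real.log mu))))) := by
      filter_upwards [Ioi_mem_nhds hlam] with l hl
      exact (vg_aux1 K A β hβ0 hβ1 hl hmu).deriv
    rw [Filter.EventuallyEq.deriv_eq hev]
    exact (vg_aux2 K A β hβ0 hβ1 hlam hmu).deriv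
  have hev2 : (fun mu : ℝ =>
      deriv (deriv (fun l : ℝ => K *
        (1 - Real.exp (-(A * (Real.log (β * l + (1 - β) * mu)
          - β * Real.log l - (1 - β) * Real.log mu)))))) lam)
      =ᶠ[𝓝 lam] (fun mu : ℝ => K * A * (Real.exp (-(A * (Real.log (β * lam + (1 - β) * mu)
          - β * Real.log lam - (1 - β) * Real.log mu))) *
        ((β / lam ^ 2 - β ^ 2 / (β * lam + (1 - β) * mu) ^ 2)
          - A * (β / (β * lam + (1 - β) * mu) - β / lam) ^ 2))) := by
    filter_upwards [Ioi_mem_nhds hlam] with mu hmu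
    exact hstep2 mu hmu
  rw [Filter.EventuallyEq.deriv_eq hev2]
  -- Step 3: differentiate in mu at mu = lam
  have hs : 0 < β * lam + (1 - β) * lam := by nlinarith
  have h1m : HasDerivAt (fun mu : ℝ => β * lam + (1 - β) * mu) (1 - β) lam := by
    simpa using ((hasDerivAt_id lam).const_mul (1 - β)).const_add (β * lam)
  have hgm : HasDerivAt (fun mu : ℝ => Real.log (β * lam + (1 - β) * mu) - β * Real.log lam
      - (1 - β) * Real.log mu)
      ((1 - β) / (β * lam + (1 - β) * lam) - (1 - β) * lam⁻¹) lam := by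
    have h2 := h1m.log hs.ne'
    have h3 := (Real.hasDerivAt_log hlam.ne').const_mul (1 - β)
    exact (h2.sub_const (β * Real.log lam)).sub h3
  have hEm := ((hgm.const_mul A).neg).exp
  have hs2 : HasDerivAt (fun mu : ℝ => (β * lam + (1 - β) * mu) ^ 2)
      ((2 : ℕ) * (β * lam + (1 - β) * lam) ^ (2 - 1) * (1 - β)) lam := h1m.pow 2
  have hQb2 := (hasDerivAt_const lam (β ^ 2)).div hs2 (pow_ne_zero 2 hs.ne')
  have hQa := hQb2.const_sub (β / lam ^ 2)
  have hR := ((hasDerivAt_const lam β).div h1m hs.ne').sub_const (β / lam)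
  have hR2 := (hR.pow 2).const_mul A
  have hQ := hQa.sub hR2
  have hF := (hEm.mul hQ).const_mul (K * A)
  erw [hF.deriv]
  simp only [Pi.neg_apply, Pi.sub_apply, Pi.div_apply, Pi.pow_apply]
  -- now pure algebra at the diagonal
  have hslam : β * lam + (1 - β) * lam = lam := by ring
  rw [hslam]
  rw [show (-(A * (Real.log lam - β * Real.log lam - (1 - β) * Real.log lam))) = 0 by ring,
    Real.exp_zero]
  have h1a : (1 : ℝ) - α ^ 2 ≠ 0 := by nlinarith
  subst hβ
  rw [hK, hA]
  field_simp
  ring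
end

section
/- Let a ∈ (0,2) with a ≠ 1, T > 0, C > 0, and λ, μ > 0. Define Δ : (-1,1) → ℝ by Δ(α) = T·C·Γ(-a)·(((1-α)/2)·λ^a + ((1+α)/2)·μ^a - (((1-α)/2)λ + ((1+α)/2)μ)^a), where Γ is the real Gamma function and powers are real powers. Then the function α ↦ (4/(1-α²))·(1 - exp(-Δ(α))) tends to T·C·Γ(-a)·((a-1)·λ^a - a·μ·λ^{a-1} + μ^a) as α tends to -1 from the right. -/
open Real Filter Topology

/-- The `α → -1⁺` limit of the α-divergence
`(4/(1-α²))·(1 - exp(-Δ(α)))` with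
`Δ(α) = T·C·Γ(-a)·(((1-α)/2)·λ^a + ((1+α)/2)·μ^a - (((1-α)/2)λ+((1+α)/2)μ)^a)`
recovers the Kullback–Leibler divergence
`T·C·Γ(-a)·((a-1)·λ^a - a·μ·λ^{a-1} + μ^a)`. -/
theorem gts_alpha_div_tendsto_kl (a T C lam mu : ℝ)
    (ha : a ∈ Set.Ioo (0 : ℝ) 2) (ha1 : a ≠ 1) (hT : 0 < T) (hC : 0 < C)
    (hlam : 0 < lam) (hmu : 0 < mu) :
    Filter.Tendsto
      (fun α : ℝ => (4 / (1 - α ^ 2)) *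
        (1 - Real.exp (-(T * C * Real.Gamma (-a) *
          (((1 - α) / 2) * lam ^ a + ((1 + α) / 2) * mu ^ a
            - (((1 - α) / 2) * lam + ((1 + α) / 2) * mu) ^ a)))))
      (𝓝[Set.Ioo (-1 : ℝ) 1] (-1))
      (𝓝 (T * C * Real.Gamma (-a) *
        ((a - 1) * lam ^ a - a * mu * lam ^ (a - 1) + mu ^ a))) := by
  set K := T * C * Real.Gamma (-a) with hK
  set Δ : ℝ → ℝ := fun α => K *
      (((1 - α) / 2) * lam ^ a + ((1 + α) / 2) * mu ^ a
        - (((1 - α) / 2) * lam + ((1 + α) / 2) * mu) ^ a) with hΔdef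
  -- derivative of the inner affine function
  have hval : ((1 - (-1 : ℝ)) / 2) * lam + ((1 + (-1 : ℝ)) / 2) * mu = lam := by ring
  have h1 : HasDerivAt (fun α : ℝ => ((1 - α) / 2) * lam + ((1 + α) / 2) * mu)
      ((mu - lam) / 2) (-1) := by
    have : HasDerivAt (fun α : ℝ => ((1 - α) / 2) * lam + ((1 + α) / 2) * mu)
        ((-1/2) * lam + (1/2) * mu) (-1) := by
      simpa using (((hasDerivAt_id (-1 : ℝ)).const_sub 1).div_const 2).mul_const lam
        |>.fun_add ((((hasDerivAt_id (-1 : ℝ)).const_add 1).div_const 2).mul_const mu)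
    convert this using 1; ring
  have hne : (fun α : ℝ => ((1 - α) / 2) * lam + ((1 + α) / 2) * mu) (-1) ≠ 0 := by
    simp only [hval]; exact hlam.ne'
  have hpow : HasDerivAt (fun α : ℝ => (((1 - α) / 2) * lam + ((1 + α) / 2) * mu) ^ a)
      ((mu - lam) / 2 * a * lam ^ (a - 1)) (-1) := by
    have := h1.rpow_const (p := a) (Or.inl hne)
    simpa [hval] using this
  set D : ℝ := K * ((-1/2) * lam ^ a + (1/2) * mu ^ a - (mu - lam) / 2 * a * lam ^ (a - 1))
    with hD
  have hΔderiv : HasDerivAt Δ D (-1) := by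
    have hlin : HasDerivAt (fun α : ℝ => ((1 - α) / 2) * lam ^ a + ((1 + α) / 2) * mu ^ a)
        ((-1/2) * lam ^ a + (1/2) * mu ^ a) (-1) := by
      simpa using (((hasDerivAt_id (-1 : ℝ)).const_sub 1).div_const 2).mul_const (lam ^ a)
        |>.fun_add ((((hasDerivAt_id (-1 : ℝ)).const_add 1).div_const 2).mul_const (mu ^ a))
    simpa [hΔdef, hD] using ((hlin.sub hpow).const_mul K)
  have hΔ0 : Δ (-1) = 0 := by
    simp only [hΔdef, hval]
    norm_num
  -- F α = 1 - exp (-(Δ α)), F (-1) = 0, F' (-1) = D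
  set F : ℝ → ℝ := fun α => 1 - Real.exp (-(Δ α)) with hF
  have hFderiv : HasDerivAt F D (-1) := by
    have := ((hΔderiv.neg).exp).const_sub 1
    simpa [hF, hΔ0] using this
  have hF0 : F (-1) = 0 := by simp [hF, hΔ0]
  -- slope tendsto
  have hslope : Tendsto (fun α : ℝ => (α + 1)⁻¹ * (F α - F (-1))) (𝓝[≠] (-1)) (𝓝 D) := by
    have h := hasDerivAt_iff_tendsto_slope.mp hFderiv
    refine h.congr fun x => ?_
    rw [slope_def_field]
    ring
  have hmono : 𝓝[Set.Ioo (-1 : ℝ) 1] (-1) ≤ 𝓝[≠] (-1) :=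
    nhdsWithin_mono _ (fun x hx => by
      simpa [Set.mem_compl_singleton_iff] using hx.1.ne')
  have hslope' : Tendsto (fun α : ℝ => (α + 1)⁻¹ * (F α - F (-1)))
      (𝓝[Set.Ioo (-1 : ℝ) 1] (-1)) (𝓝 D) := hslope.mono_left hmono
  -- 4/(1-α) → 2
  have hg : Tendsto (fun α : ℝ => 4 / (1 - α)) (𝓝[Set.Ioo (-1 : ℝ) 1] (-1)) (𝓝 2) := by
    have : Tendsto (fun α : ℝ => 4 / (1 - α)) (𝓝 (-1)) (𝓝 (4 / (1 - (-1)))) :=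
      (tendsto_const_nhds.div (tendsto_const_nhds.sub tendsto_id) (by norm_num))
    have h2 : (4 : ℝ) / (1 - (-1)) = 2 := by norm_num
    exact h2 ▸ tendsto_nhdsWithin_of_tendsto_nhds this
  have hcomb : Tendsto (fun α : ℝ => (4 / (1 - α)) * ((α + 1)⁻¹ * (F α - F (-1))))
      (𝓝[Set.Ioo (-1 : ℝ) 1] (-1)) (𝓝 (2 * D)) := hg.mul hslope'
  -- 2 * D equals the target
  have hDval : 2 * D = K * ((a - 1) * lam ^ a - a * mu * lam ^ (a - 1) + mu ^ a) := by
    have hrw : lam ^ (a - 1) * lam = lam ^ a := by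
      rw [← Real.rpow_add_one hlam.ne' (a - 1)]
      norm_num
    rw [hD]; linear_combination (K * a) * hrw
  rw [← hDval]
  refine hcomb.congr' ?_
  filter_upwards [self_mem_nhdsWithin] with α hα
  have h1 : (1 : ℝ) - α ≠ 0 := by have := hα.2; intro h; linarith [sub_eq_zero.mp h]
  have h2 : α - (-1 : ℝ) ≠ 0 := sub_ne_zero.mpr hα.1.ne'
  have : (1 : ℝ) - α ^ 2 = (1 - α) * (α - (-1)) := by ring
  show (4 / (1 - α)) * ((α + 1)⁻¹ * (F α - F (-1))) = (4 / (1 - α ^ 2)) * F α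
  rw [hF0, this]
  field_simp
  have h3 : α + 1 ≠ 0 := (by linarith [hα.1] : (0:ℝ) < α + 1).ne'
  rw [sub_zero, show α - -1 = α + 1 by ring, mul_div_assoc, div_self h3, mul_one]
end
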